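/- arXiv:1612.06220 — 6 statements merged into one kernel-verified Lean document; each statement's English description precedes it below -/
import Mathlib

section
/- Let G be a second countable locally compact group and H a closed subgroup of finite covolume in G, with m the G-invariant Borel probability measure on G/H. Then the G-action on (G/H, m) is strongly ergodic: for every sequence (Bₙ) of measurable subsets of G/H such that m(Bₙ Δ g·Bₙ) → 0 as n→∞ for every g ∈ G, one has m(Bₙ)(1 − m(Bₙ)) → 0 as n→∞. -/
open MeasureTheory Filter Set
open scoped Pointwise symmDiff ENNReal Topology

/-- The coset space of a closed subgroup is Hausdorff. -/
private lemma quotient_t2space {G : Type*} [Group G] [TopologicalSpace G] [IsTopologicalGroup G]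
    (H : Subgroup G) (hHcl : IsClosed (H : Set G)) : T2Space (G ⧸ H) := by
  rw [t2_iff_isClosed_diagonal, ← isOpen_compl_iff]
  have hq : IsOpenMap (fun p : G × G => ((p.1 : G ⧸ H), (p.2 : G ⧸ H))) :=
    QuotientGroup.isOpenMap_coe.prodMap QuotientGroup.isOpenMap_coe
  have hR : IsOpen {p : G × G | ¬ ((p.1 : G ⧸ H) = (p.2 : G ⧸ H))} := by
    have heq : {p : G × G | ¬ ((p.1 : G ⧸ H) = (p.2 : G ⧸ H))}
        = ((fun p : G × G => p.1⁻¹ * p.2) ⁻¹' (H : Set G))ᶜ := by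
      ext p
      simp [QuotientGroup.eq]
    rw [heq, isOpen_compl_iff]
    exact hHcl.preimage (continuous_fst.inv.mul continuous_snd)
  have himg : (Set.diagonal (G ⧸ H))ᶜ
      = (fun p : G × G => ((p.1 : G ⧸ H), (p.2 : G ⧸ H))) ''
          {p : G × G | ¬ ((p.1 : G ⧸ H) = (p.2 : G ⧸ H))} := by
    ext ⟨x, y⟩
    constructor
    · intro hxy
      obtain ⟨a, rfl⟩ := QuotientGroup.mk_surjective x
      obtain ⟨b, rfl⟩ := QuotientGroup.mk_surjective y
      exact ⟨(a, b), hxy, rfl⟩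
    · rintro ⟨⟨a, b⟩, hab, heq⟩
      simp only [Prod.mk.injEq] at heq
      obtain ⟨h1, h2⟩ := heq
      subst h1; subst h2
      exact hab
  rw [himg]
  exact hq _ hR

/-- Let `G` be a second countable locally compact group, `H` a closed subgroup of finite
covolume, and `μ` the `G`-invariant Borel probability measure on `G/H`.  Then the `G`-action
on `(G/H, μ)` is strongly ergodic: any almost-invariant sequence of measurable sets `Bₙ`
(i.e. `μ (Bₙ ∆ g • Bₙ) → 0` for every `g`) satisfies `μ(Bₙ)(1 - μ(Bₙ)) → 0`. -/
theorem stronglyErgodic_of_transitive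
    {G : Type*} [Group G] [TopologicalSpace G] [IsTopologicalGroup G]
    [LocallyCompactSpace G] [T2Space G] [SecondCountableTopology G]
    (H : Subgroup G) (hHcl : IsClosed (H : Set G))
    [MeasurableSpace (G ⧸ H)] [BorelSpace (G ⧸ H)]
    (μ : Measure (G ⧸ H)) [IsProbabilityMeasure μ]
    (hinv : ∀ g : G, Measure.map (fun x : G ⧸ H => g • x) μ = μ)
    (B : ℕ → Set (G ⧸ H)) (hBmeas : ∀ n, MeasurableSet (B n))
    (hai : ∀ g : G,
      Tendsto (fun n => μ (symmDiff (B n) ((fun x : G ⧸ H => g • x) '' B n))) atTop (nhds 0)) :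
    Tendsto (fun n => (μ (B n)).toReal * (1 - (μ (B n)).toReal)) atTop (nhds 0) := by
  borelize G
  haveI : T2Space (G ⧸ H) := quotient_t2space H hHcl
  -- basic bounds on `tₙ = (μ (B n)).toReal`
  have ht0 : ∀ n, 0 ≤ (μ (B n)).toReal := fun n => ENNReal.toReal_nonneg
  have ht1 : ∀ n, (μ (B n)).toReal ≤ 1 := by
    intro n
    have := ENNReal.toReal_mono ENNReal.one_ne_top (prob_le_one (μ := μ) (s := B n))
    simpa using this
  refine tendsto_order.2 ⟨fun b hb => ?_, fun a ha => ?_⟩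
  · refine Eventually.of_forall fun n => lt_of_lt_of_le hb ?_
    have := ht0 n; have := ht1 n
    nlinarith
  -- main part: for every `a > 0`, eventually `tₙ (1 - tₙ) < a`.
  by_contra hcon
  rw [Filter.not_eventually] at hcon
  have hfreq : ∃ᶠ n in atTop, a ≤ (μ (B n)).toReal * (1 - (μ (B n)).toReal) := by
    refine hcon.mono fun n hn => ?_
    exact le_of_not_gt hn
  set e : ℝ≥0∞ := ENNReal.ofReal a with he_def
  have he0 : e ≠ 0 := by simp [he_def, ENNReal.ofReal_eq_zero, not_le, ha]
  have he_top : e ≠ ∞ := ENNReal.ofReal_ne_top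
  -- from badness of `n`, both `B n` and its complement have measure `≥ e`.
  have hBe : ∀ n, a ≤ (μ (B n)).toReal * (1 - (μ (B n)).toReal) →
      e ≤ μ (B n) ∧ e ≤ μ (B n)ᶜ := by
    intro n hn
    have h0 := ht0 n
    have h1 := ht1 n
    have hcomp : (μ (B n)ᶜ).toReal = 1 - (μ (B n)).toReal := by
      rw [measure_compl (hBmeas n) (measure_ne_top μ _), measure_univ,
        ENNReal.toReal_sub_of_le prob_le_one ENNReal.one_ne_top, ENNReal.toReal_one]
    constructor
    · refine ENNReal.ofReal_le_of_le_toReal ?_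
      nlinarith
    · refine ENNReal.ofReal_le_of_le_toReal ?_
      rw [hcomp]
      nlinarith
  -- Haar measure setup: `ν` is a right-invariant Haar measure on `G`.
  set lam : Measure G := Measure.haar with hlam_def
  set ν : Measure G := lam.inv with hν_def
  have hν_right : ∀ (h : G) (A : Set G), ν ((fun g => g * h) ⁻¹' A) = ν A := fun h A =>
    measure_preimage_mul_right ν h A
  have hν_compact_lt_top : ∀ {K : Set G}, IsCompact K → ν K < ∞ := by
    intro K hK
    rw [hν_def, Measure.inv_apply]
    exact hK.inv.measure_lt_top
  -- a compact neighborhood `K''` of `1`, of positive finite measure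
  obtain ⟨K'', hK''c, hK''n⟩ := exists_compact_mem_nhds (1 : G)
  have hK''pos : 0 < ν K'' := by
    rw [hν_def, Measure.inv_apply]
    have h1i : (1 : G) ∈ (interior K'')⁻¹ := by
      simp [mem_interior_iff_mem_nhds.2 hK''n]
    refine lt_of_lt_of_le (isOpen_interior.inv.measure_pos lam ⟨1, h1i⟩) ?_
    exact measure_mono (Set.inv_subset_inv.2 interior_subset)
  have hK''top : ν K'' ≠ ∞ := (hν_compact_lt_top hK''c).ne
  set c₃ : ℝ≥0∞ := ν K'' / 3 with hc₃_def
  have hc₃0 : c₃ ≠ 0 := by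
    simp only [hc₃_def, ne_eq, ENNReal.div_eq_zero_iff, not_or]
    exact ⟨hK''pos.ne', by norm_num⟩
  have hc₃top : c₃ ≠ ∞ := (ENNReal.div_lt_top hK''top (by norm_num)).ne
  -- choose a compact `K ⊆ G` whose image `CC` in `G ⧸ H` has `μ CCᶜ < e / 2`
  have hCtend : Tendsto (fun i => μ ((QuotientGroup.mk '' compactCovering G i : Set (G ⧸ H))ᶜ))
      atTop (𝓝 0) := by
    have hmono : Monotone fun i => (QuotientGroup.mk '' compactCovering G i : Set (G ⧸ H)) :=
      fun i j hij => Set.image_mono (compactCovering_subset G hij)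
    have huniv : (⋃ i, (QuotientGroup.mk '' compactCovering G i : Set (G ⧸ H))) = univ := by
      rw [← Set.image_iUnion, iUnion_compactCovering, Set.image_univ,
        QuotientGroup.mk_surjective.range_eq]
    have h1 : Tendsto (fun i => μ (QuotientGroup.mk '' compactCovering G i : Set (G ⧸ H)))
        atTop (𝓝 1) := by
      have := tendsto_measure_iUnion_atTop (μ := μ) hmono
      rwa [huniv, measure_univ] at this
    have heq : ∀ i, μ ((QuotientGroup.mk '' compactCovering G i : Set (G ⧸ H))ᶜ)
        = 1 - μ (QuotientGroup.mk '' compactCovering G i : Set (G ⧸ H)) := by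
      intro i
      rw [measure_compl (((isCompact_compactCovering G i).image
        QuotientGroup.continuous_mk).isClosed.measurableSet) (measure_ne_top μ _), measure_univ]
    simp only [heq]
    have := ENNReal.Tendsto.sub (tendsto_const_nhds (x := (1 : ℝ≥0∞))) h1
      (Or.inl ENNReal.one_ne_top)
    simpa using this
  have he2pos : (0 : ℝ≥0∞) < e / 2 := ENNReal.div_pos he0 (by norm_num)
  obtain ⟨i, hCi⟩ := (hCtend.eventually_lt_const he2pos).exists
  set K : Set G := compactCovering G i with hK_def
  have hKc : IsCompact K := isCompact_compactCovering G i
  set CC : Set (G ⧸ H) := QuotientGroup.mk '' K with hCC_def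
  have hCCcl : IsClosed CC := (hKc.image QuotientGroup.continuous_mk).isClosed
  -- the large compact window `K'`
  set K' : Set G := K'' ∪ K'' * K⁻¹ with hK'_def
  have hK'c : IsCompact K' := hK''c.union (hK''c.mul hKc.inv)
  have hK'meas : MeasurableSet K' := hK'c.isClosed.measurableSet
  set ν' : Measure G := ν.restrict K' with hν'_def
  haveI : IsFiniteMeasure ν' := by
    constructor
    rw [hν'_def, Measure.restrict_apply_univ]
    exact hν_compact_lt_top hK'c
  -- the "discrepancy" sets
  set S : ℕ → Set ((G ⧸ H) × G) := fun n =>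
    ((fun p : (G ⧸ H) × G => p.2 • p.1) ⁻¹' B n \ Prod.fst ⁻¹' B n)
      ∪ (Prod.fst ⁻¹' B n \ (fun p : (G ⧸ H) × G => p.2 • p.1) ⁻¹' B n) with hS_def
  have hsmul_meas : Measurable (fun p : (G ⧸ H) × G => p.2 • p.1) :=
    (continuous_snd.smul continuous_fst).measurable
  have hS_meas : ∀ n, MeasurableSet (S n) := by
    intro n
    exact ((hsmul_meas (hBmeas n)).diff (measurable_fst (hBmeas n))).union
      ((measurable_fst (hBmeas n)).diff (hsmul_meas (hBmeas n)))
  -- discrepancy function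
  set dd : ℕ → (G ⧸ H) → ℝ≥0∞ := fun n x => ν' (Prod.mk x ⁻¹' S n) with hdd_def
  have hdd_meas : ∀ n, Measurable (dd n) := fun n =>
    measurable_measure_prodMk_left (hS_meas n)
  have measurable_measure_aux : ∀ n (g : G), MeasurableSet ((fun x : G ⧸ H => (x, g)) ⁻¹' S n) :=
    fun n g => (hS_meas n).preimage (measurable_id.prodMk measurable_const)
  -- Fubini: `∫ dd n dμ = ∫ (slice measure) dν'`
  have hWswap : ∀ n, ∫⁻ x, dd n x ∂μ = ∫⁻ g, μ ((fun x => (x, g)) ⁻¹' S n) ∂ν' := by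
    intro n
    have key : ∫⁻ x, ∫⁻ g, (S n).indicator (fun _ => (1 : ℝ≥0∞)) (x, g) ∂ν' ∂μ
        = ∫⁻ g, ∫⁻ x, (S n).indicator (fun _ => (1 : ℝ≥0∞)) (x, g) ∂μ ∂ν' :=
      lintegral_lintegral_swap ((measurable_one.indicator (hS_meas n)).aemeasurable)
    have h1 : ∀ x, ∫⁻ g, (S n).indicator (fun _ => (1 : ℝ≥0∞)) (x, g) ∂ν' = dd n x := by
      intro x
      have heq : (fun g => (S n).indicator (fun _ => (1 : ℝ≥0∞)) (x, g))
          = (Prod.mk x ⁻¹' S n).indicator (fun _ => (1 : ℝ≥0∞)) := by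
        funext g
        by_cases h : (x, g) ∈ S n <;> simp [h]
      rw [heq, lintegral_indicator_const (measurable_prodMk_left (hS_meas n)) 1, one_mul]
    have h2 : ∀ g, ∫⁻ x, (S n).indicator (fun _ => (1 : ℝ≥0∞)) (x, g) ∂μ
        = μ ((fun x => (x, g)) ⁻¹' S n) := by
      intro g
      have heq : (fun x => (S n).indicator (fun _ => (1 : ℝ≥0∞)) (x, g))
          = ((fun x => (x, g)) ⁻¹' S n).indicator (fun _ => (1 : ℝ≥0∞)) := by
        funext x
        by_cases h : (x, g) ∈ S n <;> simp [h]
      rw [heq, lintegral_indicator_const (measurable_measure_aux n g) 1, one_mul]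
    calc ∫⁻ x, dd n x ∂μ
        = ∫⁻ x, ∫⁻ g, (S n).indicator (fun _ => (1 : ℝ≥0∞)) (x, g) ∂ν' ∂μ := by
          congr 1; funext x; rw [h1]
      _ = ∫⁻ g, ∫⁻ x, (S n).indicator (fun _ => (1 : ℝ≥0∞)) (x, g) ∂μ ∂ν' := key
      _ = ∫⁻ g, μ ((fun x => (x, g)) ⁻¹' S n) ∂ν' := by
          congr 1; funext g; rw [h2]
  -- each slice measure tends to `0` by almost invariance
  have hslice : ∀ g : G,
      Tendsto (fun n => μ ((fun x => (x, g)) ⁻¹' S n)) atTop (𝓝 0) := by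
    intro g
    have hset : ∀ n, (fun x : G ⧸ H => (x, g)) ⁻¹' S n
        = symmDiff (B n) ((fun x : G ⧸ H => g⁻¹ • x) '' B n) := by
      intro n
      have him : (fun x : G ⧸ H => g⁻¹ • x) '' B n = (fun x : G ⧸ H => g • x) ⁻¹' B n := by
        rw [Set.image_smul, Set.preimage_smul]
      ext x
      simp only [hS_def, Set.mem_preimage, Set.mem_union, Set.mem_diff, him, symmDiff_def,
        Set.sup_eq_union, Set.mem_union, Set.mem_diff, Set.mem_preimage]
      tauto
    simp only [hset]
    exact hai g⁻¹
  -- `W n → 0` by dominated convergence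
  have hW0 : Tendsto (fun n => ∫⁻ g, μ ((fun x => (x, g)) ⁻¹' S n) ∂ν') atTop (𝓝 0) := by
    have h0 : (0 : ℝ≥0∞) = ∫⁻ (_ : G), (0 : ℝ≥0∞) ∂ν' := by simp
    rw [h0]
    refine tendsto_lintegral_of_dominated_convergence (fun _ => (1 : ℝ≥0∞))
      (fun n => measurable_measure_prodMk_right (hS_meas n))
      (fun n => Eventually.of_forall fun g => prob_le_one)
      ?_ (Eventually.of_forall fun g => hslice g)
    rw [lintegral_one, Measure.restrict_apply_univ]
    exact (hν_compact_lt_top hK'c).ne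
  -- Markov inequality: eventually the set where `dd n ≥ c₃` has small measure
  have hmark : ∀ᶠ n in atTop, μ {x | c₃ ≤ dd n x} < e / 2 := by
    have hev : ∀ᶠ n in atTop, (∫⁻ g, μ ((fun x => (x, g)) ⁻¹' S n) ∂ν') < e / 2 * c₃ :=
      hW0.eventually_lt_const
        (ENNReal.mul_pos (ENNReal.div_pos he0 (by norm_num)).ne' hc₃0)
    refine hev.mono fun n hn => ?_
    have h1 : μ {x | c₃ ≤ dd n x} ≤ (∫⁻ x, dd n x ∂μ) / c₃ :=
      meas_ge_le_lintegral_div (hdd_meas n).aemeasurable hc₃0 hc₃top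
    rw [hWswap n] at h1
    refine lt_of_le_of_lt h1 ?_
    rw [ENNReal.div_lt_iff (Or.inl hc₃0) (Or.inl hc₃top)]
    exact hn
  -- pick a bad index `n` where everything holds
  obtain ⟨n, hbad, hsmall⟩ := (hfreq.and_eventually hmark).exists
  obtain ⟨hBn, hBnc⟩ := hBe n hbad
  set Dg : Set (G ⧸ H) := {x | c₃ ≤ dd n x} with hDg_def
  have hDg_meas : MeasurableSet Dg := measurableSet_le measurable_const (hdd_meas n)
  -- find good points `x₁ ∈ B n` and `x₂ ∉ B n`
  have hFindPoint : ∀ (E : Set (G ⧸ H)), e ≤ μ E → ∃ x ∈ E, x ∈ CC ∧ dd n x < c₃ := by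
    intro E hE
    have hcov : E ⊆ (E ∩ CC ∩ Dgᶜ) ∪ CCᶜ ∪ Dg := by
      intro x hx
      by_cases hC : x ∈ CC
      · by_cases hD : x ∈ Dg
        · exact Or.inr hD
        · exact Or.inl (Or.inl ⟨⟨hx, hC⟩, hD⟩)
      · exact Or.inl (Or.inr hC)
    have hne : μ (E ∩ CC ∩ Dgᶜ) ≠ 0 := by
      intro h0
      have h1 : μ E ≤ μ (E ∩ CC ∩ Dgᶜ) + μ CCᶜ + μ Dg := by
        refine le_trans (measure_mono hcov) ?_
        refine le_trans (measure_union_le _ _) ?_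
        exact add_le_add (measure_union_le _ _) le_rfl
      rw [h0, zero_add] at h1
      have h2 : μ CCᶜ + μ Dg < e / 2 + e / 2 := ENNReal.add_lt_add hCi hsmall
      rw [ENNReal.add_halves] at h2
      exact absurd (lt_of_le_of_lt (le_trans hE h1) h2) (lt_irrefl e)
    obtain ⟨x, hx⟩ := nonempty_of_measure_ne_zero hne
    exact ⟨x, hx.1.1, hx.1.2, lt_of_not_ge hx.2⟩
  obtain ⟨x₁, hx₁B, hx₁C, hx₁d⟩ := hFindPoint (B n) hBn
  obtain ⟨x₂, hx₂B, hx₂C, hx₂d⟩ := hFindPoint ((B n)ᶜ) hBnc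
  obtain ⟨h₁, hh₁K, rfl⟩ := hx₁C
  obtain ⟨h₂, hh₂K, rfl⟩ := hx₂C
  -- the lifted set
  set FT : Set G := QuotientGroup.mk ⁻¹' B n with hFT_def
  have hFT_meas : MeasurableSet FT := QuotientGroup.continuous_mk.measurable (hBmeas n)
  -- key estimates via right invariance
  have hsmul_mk : ∀ (g h : G), g • (QuotientGroup.mk h : G ⧸ H) = QuotientGroup.mk (g * h) :=
    fun g h => rfl
  have hwindow : ∀ (h : G), h ∈ K → ∀ u ∈ K'', u * h⁻¹ ∈ K' := by
    intro h hh u hu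
    exact Or.inr (Set.mul_mem_mul hu (Set.inv_mem_inv.2 hh))
  -- estimate 1 : `ν (K'' ∩ FTᶜ) ≤ dd n (mk h₁) < c₃`
  have hest1 : ν (K'' ∩ FTᶜ) < c₃ := by
    have hmeas : MeasurableSet (K'' ∩ FTᶜ) :=
      hK''c.isClosed.measurableSet.inter hFT_meas.compl
    have hsub : (fun g => g * h₁) ⁻¹' (K'' ∩ FTᶜ) ⊆ (Prod.mk (QuotientGroup.mk h₁ : G ⧸ H)
        ⁻¹' S n) ∩ K' := by
      intro g hg
      obtain ⟨hg1, hg2⟩ := hg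
      constructor
      · show ((QuotientGroup.mk h₁ : G ⧸ H), g) ∈ S n
        refine Or.inr ⟨hx₁B, ?_⟩
        show ¬ g • (QuotientGroup.mk h₁ : G ⧸ H) ∈ B n
        rw [hsmul_mk]
        exact hg2
      · have := hwindow h₁ hh₁K (g * h₁) hg1
        simpa [mul_assoc] using this
    calc ν (K'' ∩ FTᶜ) = ν ((fun g => g * h₁) ⁻¹' (K'' ∩ FTᶜ)) := (hν_right h₁ _).symm
      _ ≤ ν ((Prod.mk (QuotientGroup.mk h₁ : G ⧸ H) ⁻¹' S n) ∩ K') := measure_mono hsub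
      _ = dd n (QuotientGroup.mk h₁) :=
          (Measure.restrict_apply (measurable_prodMk_left (hS_meas n))).symm
      _ < c₃ := hx₁d
  -- estimate 2 : `ν (K'' ∩ FT) ≤ dd n (mk h₂) < c₃`
  have hest2 : ν (K'' ∩ FT) < c₃ := by
    have hsub : (fun g => g * h₂) ⁻¹' (K'' ∩ FT) ⊆ (Prod.mk (QuotientGroup.mk h₂ : G ⧸ H)
        ⁻¹' S n) ∩ K' := by
      intro g hg
      obtain ⟨hg1, hg2⟩ := hg
      constructor
      · show ((QuotientGroup.mk h₂ : G ⧸ H), g) ∈ S n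
        refine Or.inl ⟨?_, ?_⟩
        · show g • (QuotientGroup.mk h₂ : G ⧸ H) ∈ B n
          rw [hsmul_mk]
          exact hg2
        · exact hx₂B
      · have := hwindow h₂ hh₂K (g * h₂) hg1
        simpa [mul_assoc] using this
    calc ν (K'' ∩ FT) = ν ((fun g => g * h₂) ⁻¹' (K'' ∩ FT)) := (hν_right h₂ _).symm
      _ ≤ ν ((Prod.mk (QuotientGroup.mk h₂ : G ⧸ H) ⁻¹' S n) ∩ K') := measure_mono hsub
      _ = dd n (QuotientGroup.mk h₂) :=
          (Measure.restrict_apply (measurable_prodMk_left (hS_meas n))).symm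
      _ < c₃ := hx₂d
  -- the contradiction
  have hsplit : ν (K'' ∩ FT) + ν (K'' ∩ FTᶜ) = ν K'' := by
    have := measure_inter_add_diff (μ := ν) K'' hFT_meas
    rwa [Set.diff_eq] at this
  have hlt : ν K'' < c₃ + c₃ := by
    rw [← hsplit]
    exact ENNReal.add_lt_add hest2 hest1
  have hge : c₃ + c₃ ≤ ν K'' := by
    rw [hc₃_def, ENNReal.div_add_div_same]
    rw [ENNReal.div_le_iff (by norm_num) (by norm_num)]
    calc ν K'' + ν K'' = ν K'' * 2 := by rw [mul_two]
      _ ≤ ν K'' * 3 := by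
          exact mul_le_mul_right (by norm_num) _
  exact absurd (lt_of_lt_of_le hlt hge) (lt_irrefl _)
end

section
/- Let G be a solvable totally disconnected locally compact group. If G is Noetherian, then G admits a compact open normal subgroup. -/
open scoped Pointwise
open Topology
open scoped commutatorElement

/-- A locally compact group is Noetherian if every ascending chain of open subgroups
stabilizes. -/
def NoetherianLC (G : Type*) [Group G] [TopologicalSpace G] : Prop :=
  ∀ O : ℕ →o Subgroup G, (∀ n, IsOpen ((O n : Subgroup G) : Set G)) →
    ∃ n, ∀ m, n ≤ m → O m = O n

section Aux

variable {G : Type*} [Group G] [TopologicalSpace G] [IsTopologicalGroup G]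

/-- The conjugate subgroup `g K g⁻¹`. -/
def cjSub (g : G) (K : Subgroup G) : Subgroup G where
  carrier := (fun x => g⁻¹ * x * g) ⁻¹' (K : Set G)
  one_mem' := by
    have h : g⁻¹ * 1 * g = 1 := by group
    simp only [Set.mem_preimage, SetLike.mem_coe, h]
    exact one_mem K
  mul_mem' := by
    intro a b ha hb
    simp only [Set.mem_preimage, SetLike.mem_coe] at *
    have h : g⁻¹ * (a * b) * g = (g⁻¹ * a * g) * (g⁻¹ * b * g) := by group
    rw [h]; exact mul_mem ha hb
  inv_mem' := by
    intro a ha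
    simp only [Set.mem_preimage, SetLike.mem_coe] at *
    have h : g⁻¹ * a⁻¹ * g = (g⁻¹ * a * g)⁻¹ := by group
    rw [h]; exact inv_mem ha

lemma mem_cjSub {g x : G} {K : Subgroup G} : x ∈ cjSub g K ↔ g⁻¹ * x * g ∈ K := Iff.rfl

lemma cjSub_isOpen (g : G) {K : Subgroup G} (h : IsOpen (K : Set G)) :
    IsOpen ((cjSub g K : Subgroup G) : Set G) := by
  have : ((cjSub g K : Subgroup G) : Set G) = (fun x => g⁻¹ * x * g) ⁻¹' (K : Set G) := rfl
  rw [this]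
  exact h.preimage (by fun_prop)

lemma topClosure_mono {H K : Subgroup G} (h : H ≤ K) :
    H.topologicalClosure ≤ K.topologicalClosure :=
  Subgroup.topologicalClosure_minimal _ (h.trans K.le_topologicalClosure)
    K.isClosed_topologicalClosure

lemma coe_sup_of_conj (H K : Subgroup G) (h : ∀ x ∈ H, ∀ k ∈ K, x * k * x⁻¹ ∈ K) :
    ((H ⊔ K : Subgroup G) : Set G) = (H : Set G) * (K : Set G) := by
  have h' : ∀ x ∈ H, ∀ k ∈ K, x⁻¹ * k * x ∈ K := by
    intro x hx k hk
    have := h x⁻¹ (inv_mem hx) k hk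
    simpa using this
  let M : Subgroup G :=
    { carrier := (H : Set G) * (K : Set G)
      one_mem' := ⟨1, one_mem H, 1, one_mem K, by simp⟩
      mul_mem' := by
        rintro a b ⟨h₁, hh₁, k₁, hk₁, rfl⟩ ⟨h₂, hh₂, k₂, hk₂, rfl⟩
        refine ⟨h₁ * h₂, mul_mem hh₁ hh₂, (h₂⁻¹ * k₁ * h₂) * k₂,
          mul_mem (h' h₂ hh₂ k₁ hk₁) hk₂, by group⟩
      inv_mem' := by
        rintro a ⟨h₁, hh₁, k₁, hk₁, rfl⟩
        refine ⟨h₁⁻¹, inv_mem hh₁, h₁ * k₁⁻¹ * h₁⁻¹, h h₁ hh₁ k₁⁻¹ (inv_mem hk₁), by group⟩ }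
  apply Set.Subset.antisymm
  · have hle : H ⊔ K ≤ M := by
      rw [sup_le_iff]
      constructor
      · intro x hx; exact ⟨x, hx, 1, one_mem K, by simp⟩
      · intro x hx; exact ⟨1, one_mem H, x, hx, by simp⟩
    exact fun x hx => hle hx
  · rintro x ⟨a, ha, b, hb, rfl⟩
    exact mul_mem (Subgroup.mem_sup_left ha) (Subgroup.mem_sup_right hb)

lemma noeth_max (hnoeth : NoetherianLC G) (S : Set (Subgroup G))
    (hopen : ∀ K ∈ S, IsOpen (K : Set G)) (hne : S.Nonempty) :
    ∃ M ∈ S, ∀ K ∈ S, M ≤ K → K = M := by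
  by_contra hcon
  push_neg at hcon
  have h : ∀ M : Subgroup G, M ∈ S → ∃ K, K ∈ S ∧ M ≤ K ∧ K ≠ M := by
    intro M hM
    obtain ⟨K, hK1, hK2, hK3⟩ := hcon M hM
    exact ⟨K, hK1, hK2, hK3⟩
  choose f hf1 hf2 hf3 using h
  let seq : ℕ → {K : Subgroup G // K ∈ S} := fun n =>
    Nat.rec ⟨hne.choose, hne.choose_spec⟩ (fun _ p => ⟨f p.1 p.2, hf1 p.1 p.2⟩) n
  have hstep : ∀ n, (seq n).1 ≤ (seq (n + 1)).1 := fun n => hf2 (seq n).1 (seq n).2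
  let O : ℕ →o Subgroup G := ⟨fun n => (seq n).1, monotone_nat_of_le_succ hstep⟩
  obtain ⟨n, hn⟩ := hnoeth O (fun n => hopen _ (seq n).2)
  have hne' : (seq (n + 1)).1 ≠ (seq n).1 := hf3 (seq n).1 (seq n).2
  exact hne' (hn (n + 1) (Nat.le_succ n))

lemma comm_topClosure (H K : Subgroup G) :
    ⁅H.topologicalClosure, K.topologicalClosure⁆ ≤ ⁅H, K⁆.topologicalClosure := by
  rw [Subgroup.commutator_le]
  intro g hg h hh
  have hg' : g ∈ closure (H : Set G) := hg
  have hh' : h ∈ closure (K : Set G) := hh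
  have key : g * h * g⁻¹ * h⁻¹ ∈ closure ((⁅H, K⁆ : Subgroup G) : Set G) := by
    refine map_mem_closure₂ (f := fun a b => a * b * a⁻¹ * b⁻¹) ?_ hg' hh' ?_
    · fun_prop
    · intro a ha b hb
      have := Subgroup.commutator_mem_commutator (H₁ := H) (H₂ := K) ha hb
      rwa [commutatorElement_def] at this
  rw [commutatorElement_def]
  exact key

omit [TopologicalSpace G] [IsTopologicalGroup G] in
lemma commutator_sup_le_aux (A Y : Subgroup G) [Y.Normal] :
    ⁅A ⊔ Y, A ⊔ Y⁆ ≤ ⁅A, A⁆ ⊔ Y := by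
  set π := QuotientGroup.mk' Y with hπ
  have hker : π.ker = Y := QuotientGroup.ker_mk' Y
  have hmapY : Y.map π = ⊥ := (Subgroup.map_eq_bot_iff Y).mpr (le_of_eq hker.symm)
  have hmapsup : (A ⊔ Y).map π = A.map π := by
    rw [Subgroup.map_sup, hmapY, sup_bot_eq]
  rw [Subgroup.commutator_le]
  intro a ha b hb
  have hπa : π a ∈ A.map π := by
    rw [← hmapsup]; exact Subgroup.mem_map_of_mem π ha
  have hπb : π b ∈ A.map π := by
    rw [← hmapsup]; exact Subgroup.mem_map_of_mem π hb
  have hcomm : π ⁅a, b⁆ ∈ (⁅A, A⁆ : Subgroup G).map π := by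
    rw [Subgroup.map_commutator, map_commutatorElement]
    exact Subgroup.commutator_mem_commutator hπa hπb
  have hmem : ⁅a, b⁆ ∈ Subgroup.comap π (Subgroup.map π ⁅A, A⁆) := Subgroup.mem_comap.mpr hcomm
  rwa [Subgroup.comap_map_eq, hker] at hmem

/-- van Dantzig's theorem. -/
lemma exists_compact_open_vd [LocallyCompactSpace G] [T2Space G] [TotallyDisconnectedSpace G] :
    ∃ U : Subgroup G, IsCompact (U : Set G) ∧ IsOpen (U : Set G) := by
  obtain ⟨Kc, hKc, hKmem⟩ := exists_compact_mem_nhds (1 : G)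
  have h1int : (1 : G) ∈ interior Kc := mem_interior_iff_mem_nhds.mpr hKmem
  obtain ⟨W, hWclopen', hW1, hWK⟩ :=
    (loc_compact_Haus_tot_disc_of_zero_dim (H := G)).mem_nhds_iff.mp
      (isOpen_interior.mem_nhds h1int)
  have hWclopen : IsClopen W := hWclopen'
  have hWc : IsCompact W := hKc.of_isClosed_subset hWclopen.1 (hWK.trans interior_subset)
  have hmul : ∃ T ∈ 𝓝 (1 : G), W * T ⊆ W := by
    apply hWc.induction_on (p := fun S => ∃ T ∈ 𝓝 (1 : G), S * T ⊆ W)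
      ⟨Set.univ, Filter.univ_mem, by simp only [Set.empty_mul, Set.empty_subset]⟩
      (fun _ _ huv ⟨T, hT, mem⟩ => ⟨T, hT, (Set.mul_subset_mul_right huv).trans mem⟩)
      (fun U V ⟨T₁, hT₁, mem1⟩ ⟨T₂, hT₂, mem2⟩ => ⟨T₁ ∩ T₂, Filter.inter_mem hT₁ hT₂, by
        rw [Set.union_mul]
        exact Set.union_subset
          ((Set.mul_subset_mul_left Set.inter_subset_left).trans mem1)
          ((Set.mul_subset_mul_left Set.inter_subset_right).trans mem2)⟩)
    intro x memW
    have hx1 : (x, 1) ∈ (fun p : G × G => p.1 * p.2) ⁻¹' W := by simp [memW]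
    rcases isOpen_prod_iff.mp (continuous_mul.isOpen_preimage W hWclopen.2) x 1 hx1 with
      ⟨U, V, Uopen, Vopen, xmemU, onememV, prodsub⟩
    have h6 : U * V ⊆ W := Set.mul_subset_iff.mpr fun _ hx _ hy => prodsub (Set.mk_mem_prod hx hy)
    exact ⟨U ∩ W, ⟨U, Uopen.mem_nhds xmemU, W, fun _ a => a, rfl⟩,
      V, Vopen.mem_nhds onememV, fun _ a => h6 ((Set.mul_subset_mul_right Set.inter_subset_left) a)⟩
  obtain ⟨T, hT, hWT⟩ := hmul
  obtain ⟨U', hU'T, hU'open, hU'1⟩ := mem_nhds_iff.mp hT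
  set V := U' ∩ U'⁻¹ with hVdef
  have hVopen : IsOpen V := hU'open.inter hU'open.inv
  have hV1 : (1 : G) ∈ V := ⟨hU'1, by simpa using hU'1⟩
  have hVinv : V⁻¹ = V := by
    rw [hVdef]
    ext x
    simp only [Set.mem_inv, Set.mem_inter_iff]
    constructor
    · rintro ⟨h1, h2⟩; exact ⟨by simpa using h2, by simpa using h1⟩
    · rintro ⟨h1, h2⟩; exact ⟨by simpa using h2, by simpa using h1⟩
  have hVT : V ⊆ T := Set.inter_subset_left.trans hU'T
  have hWV : W * V ⊆ W := fun a ha => hWT (Set.mul_subset_mul_left hVT ha)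
  let S : Subgroup G :=
    { carrier := ⋃ n, V ^ (n + 1)
      mul_mem' := fun ha hb => by
        rcases Set.mem_iUnion.mp ha with ⟨k, hk⟩
        rcases Set.mem_iUnion.mp hb with ⟨l, hl⟩
        apply Set.mem_iUnion.mpr
        use k + 1 + l
        rw [add_assoc, pow_add]
        exact Set.mul_mem_mul hk hl
      one_mem' := Set.mem_iUnion.mpr ⟨0, by simpa using hV1⟩
      inv_mem' := fun ha => by
        rcases Set.mem_iUnion.mp ha with ⟨k, hk⟩
        apply Set.mem_iUnion.mpr
        use k
        rw [← hVinv]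
        simpa only [inv_pow, Set.mem_inv, inv_inv] using hk }
  have hSopen : IsOpen (S : Set G) := by
    refine isOpen_iUnion fun n => ?_
    rw [pow_succ]
    exact hVopen.mul_left
  have mulVpow : ∀ n : ℕ, W * V ^ (n + 1) ⊆ W := by
    intro n
    induction n with
    | zero => simpa using hWV
    | succ n ih =>
      rw [pow_succ, ← mul_assoc]
      exact (Set.mul_subset_mul_right ih).trans hWV
  have hSW : (S : Set G) ⊆ W := by
    refine Set.iUnion_subset fun i => ?_
    intro a ha
    have : a ∈ W * V ^ (i + 1) := ⟨1, hW1, a, ha, one_mul a⟩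
    exact mulVpow i this
  exact ⟨S, hWc.of_isClosed_subset (S.isClosed_of_isOpen hSopen) hSW, hSopen⟩

lemma cover_mod (Y N : Subgroup G) {V : Set G} (hV : IsOpen V) (h1 : (1 : G) ∈ V)
    (hVY : V ∩ (Y : Set G) ⊆ (N : Set G)) {S : Set G} (hS : IsCompact S)
    (hSY : S ⊆ (Y : Set G)) :
    ∃ T : Set G, T.Finite ∧ T ⊆ (Y : Set G) ∧ S ⊆ T * (N : Set G) := by
  classical
  obtain ⟨W₁, hW₁o, hW₁1, hW₁V⟩ := exists_open_nhds_one_mul_subset (hV.mem_nhds h1)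
  set V₁ := W₁ ∩ W₁⁻¹ with hV₁
  have hV₁o : IsOpen V₁ := hW₁o.inter hW₁o.inv
  have hV₁1 : (1 : G) ∈ V₁ := ⟨hW₁1, by simpa using hW₁1⟩
  have hV₁V : ∀ a ∈ V₁, ∀ b ∈ V₁, a⁻¹ * b ∈ V := by
    intro a ha b hb
    exact hW₁V ⟨a⁻¹, by simpa using ha.2, b, hb.1, rfl⟩
  have hcover : S ⊆ ⋃ s : S, (s : G) • V₁ := by
    intro x hx
    exact Set.mem_iUnion.mpr ⟨⟨x, hx⟩, ⟨1, hV₁1, by simp⟩⟩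
  obtain ⟨t, ht⟩ := hS.elim_finite_subcover (fun s : S => (s : G) • V₁)
    (fun s => hV₁o.smul _) hcover
  let rep : S → G := fun i =>
    if h : (((i : G) • V₁) ∩ S).Nonempty then h.choose else 1
  refine ⟨rep '' (t : Set S), (t.finite_toSet.image rep), ?_, ?_⟩
  · rintro x ⟨i, hi, rfl⟩
    by_cases h : (((i : G) • V₁) ∩ S).Nonempty
    · simp only [rep, dif_pos h]
      exact hSY h.choose_spec.2
    · simp only [rep, dif_neg h]
      exact one_mem Y
  · intro x hx
    obtain ⟨i, hi, hxi⟩ := Set.mem_iUnion₂.mp (ht hx)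
    have hne : (((i : G) • V₁) ∩ S).Nonempty := ⟨x, hxi, hx⟩
    set y := hne.choose with hy
    have hyspec : y ∈ ((i : G) • V₁) ∩ S := hne.choose_spec
    have h1 : y⁻¹ * x ∈ V := by
      obtain ⟨a, ha, hay⟩ := hyspec.1
      obtain ⟨b, hb, hbx⟩ := hxi
      have : y⁻¹ * x = a⁻¹ * b := by
        rw [← hay, ← hbx]; simp only [smul_eq_mul]; group
      rw [this]
      exact hV₁V a ha b hb
    have h2 : y⁻¹ * x ∈ (Y : Set G) := by
      exact mul_mem (inv_mem (hSY hyspec.2)) (hSY hx)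
    refine ⟨y, ⟨i, hi, by rw [hy]; simp [rep, dif_pos hne]⟩, y⁻¹ * x, hVY ⟨h1, h2⟩, by group⟩

lemma core_SS (hnoeth : NoetherianLC G) (U Y N : Subgroup G)
    (hUc : IsCompact (U : Set G)) (hUo : IsOpen (U : Set G))
    (hUY : ∀ u ∈ U, ∀ y ∈ Y, u * y * u⁻¹ ∈ Y)
    (hNY : N ≤ Y)
    (hNnorm : ∀ g ∈ U ⊔ Y, ∀ n ∈ N, g * n * g⁻¹ ∈ N)
    (hdisc : ∃ V : Set G, IsOpen V ∧ (1 : G) ∈ V ∧ V ∩ (Y : Set G) ⊆ (N : Set G)) :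
    ∃ K : Subgroup G, IsOpen (K : Set G) ∧ K ≤ U ⊔ Y ∧ N ≤ K ∧
      (K : Set G) ⊆ (U : Set G) * (N : Set G) ∧
      (∀ w ∈ U ⊔ Y, ∀ x ∈ K, w * x * w⁻¹ ∈ K) := by
  classical
  obtain ⟨V, hVo, hV1, hVY⟩ := hdisc
  -- orbits of elements of Y under conjugation by U
  set orb : G → Set G := fun f => (fun u => u * f * u⁻¹) '' (U : Set G) with horb
  have horbc : ∀ f, IsCompact (orb f) := fun f => hUc.image (by fun_prop)
  have horbY : ∀ f ∈ Y, orb f ⊆ (Y : Set G) := by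
    rintro f hf x ⟨u, hu, rfl⟩
    exact hUY u (SetLike.mem_coe.mp hu) f hf
  have hself : ∀ f : G, f ∈ orb f := fun f => ⟨1, SetLike.mem_coe.mpr (one_mem U), by group⟩
  -- the directed family of subgroups
  set gen : Finset G → Set G := fun F => (N : Set G) ∪ ⋃ f ∈ (F : Set G), orb f with hgen
  set Efun : Finset G → Subgroup G := fun F => Subgroup.closure (gen F) with hEfun
  set Hfun : Finset G → Subgroup G := fun F => U ⊔ Efun F with hHfun
  have hEY : ∀ F : Finset G, (F : Set G) ⊆ (Y : Set G) → Efun F ≤ Y := by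
    intro F hF
    refine (Subgroup.closure_le _).mpr ?_
    refine Set.union_subset (fun n hn => SetLike.mem_coe.mpr (hNY (SetLike.mem_coe.mp hn))) ?_
    exact Set.iUnion₂_subset fun f hf => horbY f (SetLike.mem_coe.mp (hF hf))
  have hHle : ∀ F : Finset G, (F : Set G) ⊆ (Y : Set G) → Hfun F ≤ U ⊔ Y :=
    fun F hF => sup_le le_sup_left ((hEY F hF).trans le_sup_right)
  have hHopen : ∀ F : Finset G, IsOpen ((Hfun F : Subgroup G) : Set G) :=
    fun F => Subgroup.isOpen_mono le_sup_left hUo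
  have hHmono : ∀ F F' : Finset G, F ⊆ F' → Hfun F ≤ Hfun F' := by
    intro F F' hFF
    refine sup_le_sup_left ?_ U
    refine Subgroup.closure_mono ?_
    refine Set.union_subset_union_right _ ?_
    exact Set.iUnion₂_subset fun f hf => Set.subset_iUnion₂ (s := fun f _ => orb f) f (hFF hf)
  -- maximal member of the family
  set Tfam : Set (Subgroup G) := {H' | ∃ F : Finset G, (F : Set G) ⊆ (Y : Set G) ∧ H' = Hfun F}
    with hTfam
  obtain ⟨Hm, ⟨F₀, hF₀Y, rfl⟩, hmax⟩ := noeth_max hnoeth Tfam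
    (by rintro H' ⟨F, _, rfl⟩; exact hHopen F) ⟨Hfun ∅, ∅, by simp, rfl⟩
  set E := Efun F₀ with hE
  have hEltY : E ≤ Y := hEY F₀ hF₀Y
  -- maximality implies U ⊔ E = U ⊔ Y
  have hW''eq : U ⊔ Y = U ⊔ E := by
    have hle2 : U ⊔ Y ≤ Hfun F₀ := by
      refine sup_le le_sup_left ?_
      intro y hy
      have hF₁Y : ((insert y F₀ : Finset G) : Set G) ⊆ (Y : Set G) := by
        rw [Finset.coe_insert]
        exact Set.insert_subset (SetLike.mem_coe.mpr hy) hF₀Y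
      have heq : Hfun (insert y F₀) = Hfun F₀ :=
        hmax _ ⟨insert y F₀, hF₁Y, rfl⟩ (hHmono F₀ _ (Finset.subset_insert y F₀))
      have hyE : y ∈ Efun (insert y F₀) := Subgroup.subset_closure
        (Set.mem_union_right _ (Set.mem_iUnion₂.mpr ⟨y, by simp, hself y⟩))
      have hyH : y ∈ Hfun (insert y F₀) := Subgroup.mem_sup_right hyE
      rw [heq] at hyH
      exact hyH
    exact le_antisymm hle2 (hHle F₀ hF₀Y)
  -- E is invariant under conjugation by U
  have hEinv : ∀ u ∈ U, ∀ e ∈ E, u * e * u⁻¹ ∈ E := by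
    intro u hu e he
    have hle : E ≤ cjSub u⁻¹ E := by
      refine (Subgroup.closure_le _).mpr ?_
      intro x hx
      rw [SetLike.mem_coe, mem_cjSub, inv_inv]
      rcases hx with hx | hx
      · refine Subgroup.subset_closure ?_
        refine Set.mem_union_left _ ?_
        exact SetLike.mem_coe.mpr (hNnorm u (Subgroup.mem_sup_left hu) x (SetLike.mem_coe.mp hx))
      · obtain ⟨f, hf, v, hv, rfl⟩ := Set.mem_iUnion₂.mp hx
        refine Subgroup.subset_closure ?_
        refine Set.mem_union_right _ ?_
        refine Set.mem_iUnion₂.mpr ⟨f, hf, ?_⟩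
        refine ⟨u * v, SetLike.mem_coe.mpr (mul_mem hu (SetLike.mem_coe.mp hv)), by group⟩
    have := hle he
    rwa [mem_cjSub, inv_inv] at this
  -- finite set of orbit representatives modulo N
  set Sorb : Set G := ⋃ f ∈ (F₀ : Set G), orb f with hSorb
  have hSorbc : IsCompact Sorb := F₀.finite_toSet.isCompact_biUnion fun f _ => horbc f
  have hSorbY : Sorb ⊆ (Y : Set G) :=
    Set.iUnion₂_subset fun f hf => horbY f (SetLike.mem_coe.mp (hF₀Y hf))
  obtain ⟨T, hTfin, hTY, hST⟩ := cover_mod Y N hVo hV1 hVY hSorbc hSorbY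
  -- E is contained in the subgroup generated by T and N
  have hETN : E ≤ Subgroup.closure (T ∪ (N : Set G)) := by
    refine (Subgroup.closure_le _).mpr ?_
    intro x hx
    rcases hx with hx | hx
    · exact Subgroup.subset_closure (Set.mem_union_right _ hx)
    · obtain ⟨f, hf, hxf⟩ := Set.mem_iUnion₂.mp hx
      have : x ∈ T * (N : Set G) := hST (Set.mem_iUnion₂.mpr ⟨f, hf, hxf⟩)
      obtain ⟨τ, hτ, n, hn, rfl⟩ := this
      exact SetLike.mem_coe.mpr (mul_mem
        (Subgroup.subset_closure (Set.mem_union_left _ hτ))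
        (Subgroup.subset_closure (Set.mem_union_right _ hn)))
  -- the subgroup of U centralizing T modulo N
  set U₀ : Subgroup G :=
    { carrier := {g | g ∈ U ∧ ∀ e ∈ T, e⁻¹ * (g * e * g⁻¹) ∈ N}
      one_mem' := ⟨one_mem U, fun e _ => by
        have h : e⁻¹ * ((1 : G) * e * 1⁻¹) = 1 := by group
        rw [h]; exact one_mem N⟩
      mul_mem' := by
        rintro g₁ g₂ ⟨hg₁, hc₁⟩ ⟨hg₂, hc₂⟩
        refine ⟨mul_mem hg₁ hg₂, fun e he => ?_⟩
        have hid : e⁻¹ * ((g₁ * g₂) * e * (g₁ * g₂)⁻¹) =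
            (e⁻¹ * (g₁ * e * g₁⁻¹)) * (g₁ * (e⁻¹ * (g₂ * e * g₂⁻¹)) * g₁⁻¹) := by group
        rw [hid]
        exact mul_mem (hc₁ e he)
          (hNnorm g₁ (Subgroup.mem_sup_left hg₁) _ (hc₂ e he))
      inv_mem' := by
        rintro g ⟨hg, hc⟩
        refine ⟨inv_mem hg, fun e he => ?_⟩
        have hid : e⁻¹ * (g⁻¹ * e * g⁻¹⁻¹) =
            g⁻¹ * (e⁻¹ * (g * e * g⁻¹))⁻¹ * g⁻¹⁻¹ := by group
        rw [hid]
        exact hNnorm g⁻¹ (Subgroup.mem_sup_left (inv_mem hg)) _ (inv_mem (hc e he)) }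
    with hU₀def
  have hmemU₀ : ∀ g : G, g ∈ U₀ ↔ g ∈ U ∧ ∀ e ∈ T, e⁻¹ * (g * e * g⁻¹) ∈ N :=
    fun g => Iff.rfl
  have hU₀U : U₀ ≤ U := fun g hg => ((hmemU₀ g).mp hg).1
  -- U₀ is open
  have hU₀o : IsOpen (U₀ : Set G) := by
    have hcoe : (U₀ : Set G) =
        (U : Set G) ∩ ⋂ e ∈ T, (fun g => g * e * g⁻¹) ⁻¹' ({e} * (N : Set G) * V) := by
      ext g
      simp only [Set.mem_inter_iff, Set.mem_iInter, Set.mem_preimage, SetLike.mem_coe]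
      constructor
      · rintro ⟨hgU, hc⟩
        refine ⟨hgU, fun e he => ?_⟩
        exact ⟨e * (e⁻¹ * (g * e * g⁻¹)), Set.mul_mem_mul rfl
          (SetLike.mem_coe.mpr (hc e he)), 1, hV1, by group⟩
      · rintro ⟨hgU, hc⟩
        refine ⟨hgU, fun e he => ?_⟩
        obtain ⟨en, ⟨e', he', n, hn, rfl⟩, v, hv, hrw⟩ := hc e he
        rw [Set.mem_singleton_iff.mp he'] at hrw
        have hvY : v ∈ V ∩ (Y : Set G) := by
          constructor
          · exact hv
          · have hv' : v = (e * n)⁻¹ * (g * e * g⁻¹) := by rw [← hrw]; group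
            rw [hv']
            refine SetLike.mem_coe.mpr ?_
            have he'Y : e ∈ Y := SetLike.mem_coe.mp (hTY he)
            have hnY : n ∈ Y := hNY (SetLike.mem_coe.mp hn)
            have hgeY : g * e * g⁻¹ ∈ Y := hUY g hgU e he'Y
            have h1 : (e * n)⁻¹ ∈ Y := inv_mem (mul_mem he'Y hnY)
            exact mul_mem h1 hgeY
        have hvN : v ∈ (N : Set G) := hVY hvY
        have hfin : e⁻¹ * (g * e * g⁻¹) = n * v := by rw [← hrw]; group
        rw [hfin]
        exact mul_mem (SetLike.mem_coe.mp hn) (SetLike.mem_coe.mp hvN)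
    rw [hcoe]
    refine hUo.inter (hTfin.isOpen_biInter fun e _ => ?_)
    refine IsOpen.preimage (by fun_prop) ?_
    exact IsOpen.mul_left hVo
  -- finite decomposition of U into cosets of U₀
  obtain ⟨t₃, ht₃⟩ := hUc.elim_finite_subcover
    (fun u : (U : Set G) => (u : G) • (U₀ : Set G))
    (fun u => hU₀o.smul _)
    (fun x hx => Set.mem_iUnion.mpr ⟨⟨x, hx⟩, 1, SetLike.mem_coe.mpr (one_mem U₀), by simp⟩)
  set T₂ : Set G := ((fun u : (U : Set G) => (u : G)) '' (t₃ : Set _)) ∪ {1} with hT₂def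
  have hT₂fin : T₂.Finite := (t₃.finite_toSet.image _).union (Set.finite_singleton 1)
  have hT₂U : T₂ ⊆ (U : Set G) := by
    rintro s (⟨i, _, rfl⟩ | hs)
    · exact i.2
    · rw [Set.mem_singleton_iff.mp hs]; exact SetLike.mem_coe.mpr (one_mem U)
  have h1T₂ : (1 : G) ∈ T₂ := Or.inr rfl
  have hUT₂ : (U : Set G) ⊆ T₂ * (U₀ : Set G) := by
    intro x hx
    obtain ⟨i, hi, hxi⟩ := Set.mem_iUnion₂.mp (ht₃ hx)
    obtain ⟨yy, hyy, hyx⟩ := hxi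
    exact ⟨(i : G), Or.inl ⟨i, hi, rfl⟩, yy, hyy, hyx⟩
  -- elements of E commute with U₀ modulo N
  set Pg : Subgroup G :=
    { carrier := {x | x ∈ Y ∧ ∀ g ∈ U₀, x⁻¹ * (g * x * g⁻¹) ∈ N}
      one_mem' := ⟨one_mem Y, fun g _ => by
        have h : (1 : G)⁻¹ * (g * 1 * g⁻¹) = 1 := by group
        rw [h]; exact one_mem N⟩
      mul_mem' := by
        rintro x₁ x₂ ⟨hx₁, hc₁⟩ ⟨hx₂, hc₂⟩
        refine ⟨mul_mem hx₁ hx₂, fun g hg => ?_⟩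
        have hid : (x₁ * x₂)⁻¹ * (g * (x₁ * x₂) * g⁻¹) =
            (x₂⁻¹ * (x₁⁻¹ * (g * x₁ * g⁻¹)) * x₂) * (x₂⁻¹ * (g * x₂ * g⁻¹)) := by group
        rw [hid]
        refine mul_mem ?_ (hc₂ g hg)
        have := hNnorm x₂⁻¹ (Subgroup.mem_sup_right (inv_mem hx₂)) _ (hc₁ g hg)
        simpa using this
      inv_mem' := by
        rintro x ⟨hx, hc⟩
        refine ⟨inv_mem hx, fun g hg => ?_⟩
        have hid : x⁻¹⁻¹ * (g * x⁻¹ * g⁻¹) = x * (x⁻¹ * (g * x * g⁻¹))⁻¹ * x⁻¹ := by group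
        rw [hid]
        have := hNnorm x (Subgroup.mem_sup_right hx) _ (inv_mem (hc g hg))
        simpa using this }
    with hPgdef
  have hEPg : E ≤ Pg := by
    refine hETN.trans ?_
    refine (Subgroup.closure_le _).mpr ?_
    intro x hx
    rcases hx with hx | hx
    · refine SetLike.mem_coe.mpr ⟨SetLike.mem_coe.mp (hTY hx), fun g hg => ?_⟩
      exact ((hmemU₀ g).mp hg).2 x hx
    · refine SetLike.mem_coe.mpr ⟨hNY (SetLike.mem_coe.mp hx), fun g hg => ?_⟩
      exact mul_mem (inv_mem (SetLike.mem_coe.mp hx))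
        (hNnorm g (Subgroup.mem_sup_left (hU₀U hg)) _ (SetLike.mem_coe.mp hx))
  -- the subgroup K₀ = U₀ N and its normality under U₀ ⊔ E
  set K₀ : Subgroup G := U₀ ⊔ N with hK₀def
  have hK₀coe : (K₀ : Set G) = (U₀ : Set G) * (N : Set G) :=
    coe_sup_of_conj U₀ N fun x hx n hn =>
      hNnorm x (Subgroup.mem_sup_left (hU₀U hx)) n hn
  have hkey1 : ∀ g ∈ U₀, ∀ k ∈ K₀, g * k * g⁻¹ ∈ K₀ := by
    intro g hg k hk
    rw [← SetLike.mem_coe, hK₀coe] at hk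
    obtain ⟨u, hu, n, hn, rfl⟩ := hk
    have hrw : g * (u * n) * g⁻¹ = (g * u * g⁻¹) * (g * n * g⁻¹) := by group
    rw [hrw]
    refine mul_mem (Subgroup.mem_sup_left ?_) (Subgroup.mem_sup_right ?_)
    · exact mul_mem (mul_mem hg (SetLike.mem_coe.mp hu)) (inv_mem hg)
    · exact hNnorm g (Subgroup.mem_sup_left (hU₀U hg)) n (SetLike.mem_coe.mp hn)
  have hkey2 : ∀ x ∈ E, ∀ k ∈ K₀, x * k * x⁻¹ ∈ K₀ := by
    intro x hx k hk
    have hxPg := hEPg hx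
    have hxY : x ∈ Y := hxPg.1
    rw [← SetLike.mem_coe, hK₀coe] at hk
    obtain ⟨u, hu, n, hn, rfl⟩ := hk
    have hm : x⁻¹ * (u⁻¹ * x * u⁻¹⁻¹) ∈ N := hxPg.2 u⁻¹ (inv_mem (SetLike.mem_coe.mp hu))
    have hm' : x * (x⁻¹ * (u⁻¹ * x * u⁻¹⁻¹)) * x⁻¹ ∈ N :=
      hNnorm x (Subgroup.mem_sup_right hxY) _ hm
    have hrw : x * (u * n) * x⁻¹ =
        u * ((x * (x⁻¹ * (u⁻¹ * x * u⁻¹⁻¹)) * x⁻¹) * (x * n * x⁻¹)) := by group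
    rw [hrw]
    refine mul_mem (Subgroup.mem_sup_left (SetLike.mem_coe.mp hu)) (Subgroup.mem_sup_right ?_)
    exact mul_mem hm' (hNnorm x (Subgroup.mem_sup_right hxY) n (SetLike.mem_coe.mp hn))
  have hW₀norm : ∀ w ∈ U₀ ⊔ E, ∀ k ∈ K₀, w * k * w⁻¹ ∈ K₀ := by
    have hnormle : U₀ ⊔ E ≤ Subgroup.normalizer (K₀ : Set G) := by
      refine sup_le ?_ ?_
      · intro g hg
        rw [Subgroup.mem_normalizer_iff]
        intro h
        constructor
        · exact fun hh => hkey1 g hg h hh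
        · intro hh
          have := hkey1 g⁻¹ (inv_mem hg) _ hh
          simpa [mul_assoc] using this
      · intro x hx
        rw [Subgroup.mem_normalizer_iff]
        intro h
        constructor
        · exact fun hh => hkey2 x hx h hh
        · intro hh
          have := hkey2 x⁻¹ (inv_mem hx) _ hh
          simpa [mul_assoc] using this
    intro w hw k hk
    exact (Subgroup.mem_normalizer_iff.mp (hnormle hw) k).mp hk
  -- decomposition of U ⊔ Y
  have hUEcoe : ((U ⊔ E : Subgroup G) : Set G) = (U : Set G) * (E : Set G) :=
    coe_sup_of_conj U E hEinv
  have hdecompW'' : ∀ w ∈ U ⊔ Y, ∃ s ∈ T₂, s⁻¹ * w ∈ (U₀ ⊔ E : Subgroup G) := by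
    intro w hw
    rw [hW''eq, ← SetLike.mem_coe, hUEcoe] at hw
    obtain ⟨u, hu, e, he, rfl⟩ := hw
    obtain ⟨ss, hss, x, hx, hxu⟩ := hUT₂ hu
    refine ⟨ss, hss, ?_⟩
    have hrw : ss⁻¹ * (u * e) = x * e := by rw [← hxu]; group
    rw [hrw]
    exact mul_mem (Subgroup.mem_sup_left (SetLike.mem_coe.mp hx))
      (Subgroup.mem_sup_right (SetLike.mem_coe.mp he))
  -- the normal core
  set K' : Subgroup G := ⨅ s ∈ T₂, cjSub s K₀ with hK'def
  have hmemK' : ∀ x : G, x ∈ K' ↔ ∀ s ∈ T₂, s⁻¹ * x * s ∈ K₀ := by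
    intro x
    rw [hK'def]
    simp only [Subgroup.mem_iInf]
    exact Iff.rfl
  have hmemK'' : ∀ x : G, x ∈ K' ↔ ∀ w ∈ U ⊔ Y, w⁻¹ * x * w ∈ K₀ := by
    intro x
    rw [hmemK']
    constructor
    · intro h w hw
      obtain ⟨s, hs, hv⟩ := hdecompW'' w hw
      have h1 : s⁻¹ * x * s ∈ K₀ := h s hs
      have h2 := hW₀norm _ (inv_mem hv) _ h1
      have hrw : w⁻¹ * x * w = (s⁻¹ * w)⁻¹ * (s⁻¹ * x * s) * ((s⁻¹ * w)⁻¹)⁻¹ := by group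
      rw [hrw]; exact h2
    · intro h s hs
      exact h s (Subgroup.mem_sup_left (SetLike.mem_coe.mp (hT₂U hs)))
  have hK'K₀ : K' ≤ K₀ := by
    intro x hx
    have := (hmemK' x).mp hx 1 h1T₂
    simpa using this
  refine ⟨K', ?_, ?_, ?_, ?_, ?_⟩
  · have hcoe : (K' : Set G) = ⋂ s ∈ T₂, ((cjSub s K₀ : Subgroup G) : Set G) := by
      ext x
      simp only [SetLike.mem_coe, hmemK', Set.mem_iInter]
      exact Iff.rfl
    rw [hcoe]
    refine hT₂fin.isOpen_biInter fun s _ => cjSub_isOpen s ?_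
    exact Subgroup.isOpen_mono le_sup_left hU₀o
  · exact hK'K₀.trans (sup_le ((hU₀U).trans le_sup_left) (hNY.trans le_sup_right))
  · intro n hn
    rw [hmemK']
    intro s hs
    have hsU : s ∈ U ⊔ Y := Subgroup.mem_sup_left (SetLike.mem_coe.mp (hT₂U hs))
    have := hNnorm s⁻¹ (inv_mem hsU) n hn
    refine Subgroup.mem_sup_right ?_
    simpa using this
  · intro x hx
    have h1 : x ∈ (K₀ : Set G) := hK'K₀ hx
    rw [hK₀coe] at h1
    obtain ⟨u, hu, n, hn, rfl⟩ := h1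
    exact ⟨u, hU₀U (SetLike.mem_coe.mp hu), n, hn, rfl⟩
  · intro w hw x hx
    rw [hmemK'']
    intro v hv
    have h2 : (w⁻¹ * v) ∈ U ⊔ Y := mul_mem (inv_mem hw) hv
    have h3 := (hmemK'' x).mp hx _ h2
    have hrw : v⁻¹ * (w * x * w⁻¹) * v = (w⁻¹ * v)⁻¹ * x * (w⁻¹ * v) := by group
    rw [hrw]; exact h3

lemma core_R (hnoeth : NoetherianLC G) (U₁ W' Y Z : Subgroup G)
    (hU₁c : IsCompact (U₁ : Set G)) (hU₁o : IsOpen (U₁ : Set G))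
    (hW'o : IsOpen (W' : Set G)) (hW'n : W'.Normal)
    (hYW : Y ≤ W') (hZY : Z ≤ Y)
    (hYn : Y.Normal) (hZn : Z.Normal) (hYc : IsClosed (Y : Set G))
    (hcomm : ∀ a ∈ Y, ∀ b ∈ Y, a * b * a⁻¹ * b⁻¹ ∈ Z)
    (hco : ∃ C : Set G, IsCompact C ∧ (W' : Set G) ⊆ C * (Y : Set G)) :
    ∃ M : Subgroup G, M.Normal ∧ IsOpen (M : Set G) ∧ Z ≤ M ∧
      ∃ D : Set G, IsCompact D ∧ (M : Set G) ⊆ D * (Z : Set G) := by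
  classical
  haveI := hZn; haveI := hYn; haveI := hW'n
  obtain ⟨C0, hC0c, hWC0⟩ := hco
  set U := U₁ ⊓ W' with hUdef
  have hUcoe : (U : Set G) = (U₁ : Set G) ∩ (W' : Set G) := rfl
  have hUo : IsOpen (U : Set G) := by rw [hUcoe]; exact hU₁o.inter hW'o
  have hW'closed : IsClosed (W' : Set G) := W'.isClosed_of_isOpen hW'o
  have hUc : IsCompact (U : Set G) := by rw [hUcoe]; exact hU₁c.inter_right hW'closed
  have hUW : U ≤ W' := inf_le_right
  set C' := (C0 ∩ (W' : Set G)) ∪ {1} with hC'def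
  have hC'c : IsCompact C' := (hC0c.inter_right hW'closed).union isCompact_singleton
  have hC'W : C' ⊆ (W' : Set G) := by
    intro x hx
    rcases hx with hx | hx
    · exact hx.2
    · rw [Set.mem_singleton_iff.mp hx]; exact one_mem W'
  have h1C' : (1 : G) ∈ C' := Or.inr rfl
  have hcov : (W' : Set G) ⊆ C' * (Y : Set G) := by
    intro x hx
    obtain ⟨c, hc, y, hy, rfl⟩ := hWC0 hx
    have hcW : c ∈ (W' : Set G) := by
      have hrw : c = (c * y) * y⁻¹ := by group
      rw [hrw]
      exact mul_mem hx (inv_mem (hYW hy))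
    exact ⟨c, Or.inl ⟨hc, hcW⟩, y, hy, rfl⟩
  -- the subgroup A₀ = (U ⊓ Y) * Z
  set A₀ := (U ⊓ Y) ⊔ Z with hA₀def
  have hZA₀ : Z ≤ A₀ := le_sup_right
  have hA₀Y : A₀ ≤ Y := sup_le inf_le_right hZY
  have hA₀coe : (A₀ : Set G) = ((U ⊓ Y : Subgroup G) : Set G) * (Z : Set G) :=
    Subgroup.mul_normal _ _
  -- conjugation by elements of Y preserves A₀
  have hYA₀ : ∀ y ∈ Y, ∀ a ∈ A₀, y * a * y⁻¹ ∈ A₀ := by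
    intro y hy a ha
    rw [← SetLike.mem_coe, hA₀coe] at ha
    obtain ⟨b, hb, z, hz, rfl⟩ := ha
    have hbY : b ∈ Y := (SetLike.mem_coe.mp hb).2
    have key : y * (b * z) * y⁻¹ = b * ((b⁻¹ * y * b * y⁻¹) * (y * z * y⁻¹)) := by group
    rw [← SetLike.mem_coe, hA₀coe, key]
    refine Set.mul_mem_mul hb ?_
    refine SetLike.mem_coe.mpr (mul_mem ?_ ?_)
    · have hc := hcomm b⁻¹ (inv_mem hbY) y hy
      simpa using hc
    · exact hZn.conj_mem z (SetLike.mem_coe.mp hz) y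
  -- N = intersection of conjugates of A₀
  set N : Subgroup G := ⨅ c ∈ C', cjSub c A₀ with hNdef
  have hmemN : ∀ x : G, x ∈ N ↔ ∀ c ∈ C', c⁻¹ * x * c ∈ A₀ := by
    intro x
    rw [hNdef]
    simp only [Subgroup.mem_iInf]
    exact Iff.rfl
  have hNW' : ∀ w ∈ W', ∀ x ∈ N, w⁻¹ * x * w ∈ A₀ := by
    intro w hw x hx
    obtain ⟨c, hc, y, hy, hcy⟩ := hcov hw
    have h1 : c⁻¹ * x * c ∈ A₀ := (hmemN x).mp hx c hc
    have h2 : y⁻¹ * (c⁻¹ * x * c) * y ∈ A₀ := by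
      have h3 := hYA₀ y⁻¹ (inv_mem (SetLike.mem_coe.mp hy)) _ h1
      simpa using h3
    have hrw : w⁻¹ * x * w = y⁻¹ * (c⁻¹ * x * c) * y := by rw [← hcy]; group
    rw [hrw]; exact h2
  have hNnormW' : ∀ w ∈ W', ∀ n ∈ N, w * n * w⁻¹ ∈ N := by
    intro w hw nn hn
    rw [hmemN]
    intro c hc
    have hcW : c ∈ W' := hC'W hc
    have h2 : (w⁻¹ * c) ∈ W' := mul_mem (inv_mem hw) hcW
    have h3 := hNW' _ h2 nn hn
    have h4 : c⁻¹ * (w * nn * w⁻¹) * c = (w⁻¹ * c)⁻¹ * nn * (w⁻¹ * c) := by group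
    rw [h4]; exact h3
  have hZN : Z ≤ N := by
    intro z hz
    rw [hmemN]
    intro c hc
    refine hZA₀ ?_
    have := hZn.conj_mem z hz c⁻¹
    simpa using this
  have hNA₀ : N ≤ A₀ := by
    intro x hx
    have h := (hmemN x).mp hx 1 h1C'
    simpa using h
  have hNY' : N ≤ Y := hNA₀.trans hA₀Y
  -- discreteness of Y modulo N
  have hVex : ∃ V : Set G, IsOpen V ∧ (1 : G) ∈ V ∧ V ∩ (Y : Set G) ⊆ (N : Set G) := by
    have hcont : ∀ c : G, ∃ Oc Vc : Set G, IsOpen Oc ∧ IsOpen Vc ∧ c ∈ Oc ∧ (1 : G) ∈ Vc ∧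
        ∀ a ∈ Oc, ∀ x ∈ Vc, a⁻¹ * x * a ∈ (U : Set G) := by
      intro c
      have hφ : Continuous fun p : G × G => p.1⁻¹ * p.2 * p.1 := by fun_prop
      have hpre : IsOpen ((fun p : G × G => p.1⁻¹ * p.2 * p.1) ⁻¹' (U : Set G)) :=
        hφ.isOpen_preimage _ hUo
      have hc1 : (c, (1 : G)) ∈ (fun p : G × G => p.1⁻¹ * p.2 * p.1) ⁻¹' (U : Set G) := by
        simp only [Set.mem_preimage, mul_one]
        simpa using one_mem U
      rcases isOpen_prod_iff.mp hpre c 1 hc1 with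
        ⟨Oc, Vc, hOc, hVc, hcOc, h1Vc, hsub⟩
      exact ⟨Oc, Vc, hOc, hVc, hcOc, h1Vc, fun a ha x hx => hsub (Set.mk_mem_prod ha hx)⟩
    choose O Vf hO hVf hcO h1V hOV using hcont
    obtain ⟨t, ht⟩ := hC'c.elim_finite_subcover (fun c : C' => O (c : G)) (fun c => hO _)
      (fun x hx => Set.mem_iUnion.mpr ⟨⟨x, hx⟩, hcO x⟩)
    refine ⟨⋂ i ∈ t, Vf (i : G), isOpen_biInter_finset (fun i _ => hVf _), ?_, ?_⟩
    · exact Set.mem_iInter₂.mpr fun i _ => h1V _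
    · rintro x ⟨hxV, hxY⟩
      rw [SetLike.mem_coe, hmemN]
      intro c hc
      obtain ⟨i, hi, hci⟩ := Set.mem_iUnion₂.mp (ht hc)
      have hxVi : x ∈ Vf (i : G) := Set.mem_iInter₂.mp hxV i hi
      have h1 : c⁻¹ * x * c ∈ (U : Set G) := hOV _ c hci x hxVi
      have h2 : c⁻¹ * x * c ∈ Y := by
        have := hYn.conj_mem x (SetLike.mem_coe.mp hxY) c⁻¹
        simpa using this
      exact (le_sup_left : U ⊓ Y ≤ A₀) (Subgroup.mem_inf.mpr ⟨SetLike.mem_coe.mp h1, h2⟩)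
  -- apply the core lemma to W'' = U ⊔ Y
  have hUY : ∀ u ∈ U, ∀ y ∈ Y, u * y * u⁻¹ ∈ Y := fun u _ y hy => hYn.conj_mem y hy u
  have hsupW : U ⊔ Y ≤ W' := sup_le hUW hYW
  have hNnormSup : ∀ g ∈ U ⊔ Y, ∀ n ∈ N, g * n * g⁻¹ ∈ N := fun g hg => hNnormW' g (hsupW hg)
  obtain ⟨K, hKo, hKle, hNK, hKsub, hKnorm⟩ :=
    core_SS hnoeth U Y N hUc hUo hUY hNY' hNnormSup hVex
  -- finite transversal of U ⊔ Y in W'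
  have hW''o : IsOpen ((U ⊔ Y : Subgroup G) : Set G) := Subgroup.isOpen_mono le_sup_left hUo
  obtain ⟨t₂, ht₂⟩ := hC'c.elim_finite_subcover
    (fun c : C' => (c : G) • ((U ⊔ Y : Subgroup G) : Set G))
    (fun c => hW''o.smul _)
    (fun x hx => Set.mem_iUnion.mpr ⟨⟨x, hx⟩, ⟨1, one_mem _, by simp⟩⟩)
  set Ts : Set G := ((fun c : C' => (c : G)) '' (t₂ : Set C')) ∪ {1} with hTsdef
  have hTsfin : Ts.Finite := (t₂.finite_toSet.image _).union (Set.finite_singleton 1)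
  have hTsW : Ts ⊆ (W' : Set G) := by
    rintro s (⟨i, _, rfl⟩ | hs)
    · exact hC'W i.2
    · rw [Set.mem_singleton_iff.mp hs]; exact one_mem W'
  have h1Ts : (1 : G) ∈ Ts := Or.inr rfl
  have hdecomp : ∀ w ∈ W', ∃ s ∈ Ts, s⁻¹ * w ∈ (U ⊔ Y : Subgroup G) := by
    intro w hw
    obtain ⟨c, hc, y, hy, hcy⟩ := hcov hw
    obtain ⟨i, hi, hci⟩ := Set.mem_iUnion₂.mp (ht₂ hc)
    obtain ⟨x, hx, hxc⟩ := hci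
    refine ⟨(i : G), Or.inl ⟨i, hi, rfl⟩, ?_⟩
    have hxc' : (i : G) * x = c := hxc
    have hrw : (i : G)⁻¹ * w = x * y := by rw [← hcy, ← hxc']; group
    rw [hrw]
    exact mul_mem (SetLike.mem_coe.mp hx) (Subgroup.mem_sup_right hy)
  -- normal core of K in W'
  set M₀ : Subgroup G := ⨅ s ∈ Ts, cjSub s K with hM₀def
  have hmemM₀ : ∀ x : G, x ∈ M₀ ↔ ∀ s ∈ Ts, s⁻¹ * x * s ∈ K := by
    intro x
    rw [hM₀def]
    simp only [Subgroup.mem_iInf]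
    exact Iff.rfl
  have hmemM₀' : ∀ x : G, x ∈ M₀ ↔ ∀ w ∈ W', w⁻¹ * x * w ∈ K := by
    intro x
    rw [hmemM₀]
    constructor
    · intro h w hw
      obtain ⟨s, hs, hv⟩ := hdecomp w hw
      have h1 : s⁻¹ * x * s ∈ K := h s hs
      have h2 : (s⁻¹ * w)⁻¹ * (s⁻¹ * x * s) * ((s⁻¹ * w)⁻¹)⁻¹ ∈ K :=
        hKnorm _ (inv_mem hv) _ h1
      have hrw : w⁻¹ * x * w = (s⁻¹ * w)⁻¹ * (s⁻¹ * x * s) * ((s⁻¹ * w)⁻¹)⁻¹ := by group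
      rw [hrw]; exact h2
    · intro h s hs
      exact h s (hTsW hs)
  have hM₀K : M₀ ≤ K := by
    intro x hx
    have := (hmemM₀ x).mp hx 1 h1Ts
    simpa using this
  have hM₀SS : IsOpen (M₀ : Set G) ∧ M₀ ≤ W' ∧ Z ≤ M₀ ∧
      (∀ w ∈ W', ∀ x ∈ M₀, w * x * w⁻¹ ∈ M₀) ∧
      ∃ D, IsCompact D ∧ (M₀ : Set G) ⊆ D * (Z : Set G) := by
    refine ⟨?_, ?_, ?_, ?_, ?_⟩
    · have hcoe : (M₀ : Set G) = ⋂ s ∈ Ts, ((cjSub s K : Subgroup G) : Set G) := by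
        ext x
        simp only [SetLike.mem_coe, hmemM₀, Set.mem_iInter]
        exact Iff.rfl
      rw [hcoe]
      exact hTsfin.isOpen_biInter fun s _ => cjSub_isOpen s hKo
    · exact hM₀K.trans (hKle.trans hsupW)
    · intro z hz
      rw [hmemM₀]
      intro s hs
      refine hNK (hZN ?_)
      have := hZn.conj_mem z hz s⁻¹
      simpa using this
    · intro w hw x hx
      rw [hmemM₀']
      intro v hv
      have h2 : (w⁻¹ * v) ∈ W' := mul_mem (inv_mem hw) hv
      have h3 := (hmemM₀' x).mp hx _ h2
      have hrw : v⁻¹ * (w * x * w⁻¹) * v = (w⁻¹ * v)⁻¹ * x * (w⁻¹ * v) := by group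
      rw [hrw]; exact h3
    · refine ⟨(U : Set G) * ((U ⊓ Y : Subgroup G) : Set G), hUc.mul (hUc.inter_right hYc), ?_⟩
      intro x hx
      have h1 : x ∈ (U : Set G) * (N : Set G) := hKsub (hM₀K hx)
      obtain ⟨u, hu, nn, hnn, rfl⟩ := h1
      have h2 : nn ∈ (A₀ : Set G) := hNA₀ (SetLike.mem_coe.mp hnn)
      rw [hA₀coe] at h2
      obtain ⟨b, hb, z, hz, rfl⟩ := h2
      exact ⟨u * b, Set.mul_mem_mul hu hb, z, hz, by group⟩
  -- the family of candidates
  set SS : Set (Subgroup G) := {K' | IsOpen (K' : Set G) ∧ K' ≤ W' ∧ Z ≤ K' ∧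
      (∀ w ∈ W', ∀ x ∈ K', w * x * w⁻¹ ∈ K') ∧
      ∃ D, IsCompact D ∧ (K' : Set G) ⊆ D * (Z : Set G)} with hSSdef
  have hM₀mem : M₀ ∈ SS := hM₀SS
  have hsupSS : ∀ K₁ ∈ SS, ∀ K₂ ∈ SS, K₁ ⊔ K₂ ∈ SS := by
    intro K₁ hK₁ K₂ hK₂
    obtain ⟨h₁o, h₁W, h₁Z, h₁n, D₁, hD₁, h₁D⟩ := hK₁
    obtain ⟨h₂o, h₂W, h₂Z, h₂n, D₂, hD₂, h₂D⟩ := hK₂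
    have hcoe : ((K₁ ⊔ K₂ : Subgroup G) : Set G) = (K₁ : Set G) * (K₂ : Set G) :=
      coe_sup_of_conj K₁ K₂ (fun x hx k hk => h₂n x (h₁W hx) k hk)
    refine ⟨Subgroup.isOpen_mono le_sup_left h₁o, sup_le h₁W h₂W, h₁Z.trans le_sup_left,
        ?_, D₁ * D₂, hD₁.mul hD₂, ?_⟩
    · intro w hw x hx
      rw [← SetLike.mem_coe, hcoe] at hx ⊢
      obtain ⟨k₁, hk₁, k₂, hk₂, rfl⟩ := hx
      have hrw : w * (k₁ * k₂) * w⁻¹ = (w * k₁ * w⁻¹) * (w * k₂ * w⁻¹) := by group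
      rw [hrw]
      exact Set.mul_mem_mul (h₁n w hw k₁ hk₁) (h₂n w hw k₂ hk₂)
    · rw [hcoe]
      rintro x ⟨k₁, hk₁, k₂, hk₂, rfl⟩
      obtain ⟨d₁, hd₁, z₁, hz₁, rfl⟩ := h₁D hk₁
      obtain ⟨d₂, hd₂, z₂, hz₂, rfl⟩ := h₂D hk₂
      refine ⟨d₁ * d₂, Set.mul_mem_mul hd₁ hd₂, (d₂⁻¹ * z₁ * d₂) * z₂, ?_, by group⟩
      refine SetLike.mem_coe.mpr (mul_mem ?_ (SetLike.mem_coe.mp hz₂))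
      have := hZn.conj_mem z₁ (SetLike.mem_coe.mp hz₁) d₂⁻¹
      simpa using this
  obtain ⟨M, hMSS, hMmax⟩ := noeth_max hnoeth SS (fun K' hK' => hK'.1) ⟨M₀, hM₀mem⟩
  have hmax' : ∀ K' ∈ SS, K' ≤ M := by
    intro K' hK'
    have heq := hMmax (M ⊔ K') (hsupSS M hMSS K' hK') le_sup_left
    rw [← heq]
    exact le_sup_right
  have hconjSS : ∀ g : G, cjSub g M ∈ SS := by
    intro g
    obtain ⟨hMo, hMW, hMZ, hMn, D, hDc, hMD⟩ := hMSS
    refine ⟨cjSub_isOpen g hMo, ?_, ?_, ?_, ?_⟩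
    · intro x hx
      rw [mem_cjSub] at hx
      have h1 : g⁻¹ * x * g ∈ W' := hMW hx
      have := hW'n.conj_mem _ h1 g
      simpa [mul_assoc] using this
    · intro z hz
      rw [mem_cjSub]
      refine hMZ ?_
      have := hZn.conj_mem z hz g⁻¹
      simpa using this
    · intro w hw x hx
      rw [mem_cjSub] at hx ⊢
      have h1 : g⁻¹ * w * g ∈ W' := by
        have := hW'n.conj_mem w hw g⁻¹
        simpa using this
      have h2 := hMn _ h1 _ hx
      have hrw : g⁻¹ * (w * x * w⁻¹) * g =
          (g⁻¹ * w * g) * (g⁻¹ * x * g) * (g⁻¹ * w * g)⁻¹ := by group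
      rw [hrw]; exact h2
    · refine ⟨(fun x => g * x * g⁻¹) '' D, hDc.image (by fun_prop), ?_⟩
      intro x hx
      rw [SetLike.mem_coe, mem_cjSub] at hx
      obtain ⟨d, hd, z, hz, hdz⟩ := hMD hx
      refine ⟨g * d * g⁻¹, Set.mem_image_of_mem _ hd, g * z * g⁻¹, ?_, ?_⟩
      · exact SetLike.mem_coe.mpr (hZn.conj_mem z (SetLike.mem_coe.mp hz) g)
      · have : g * (g⁻¹ * x * g) * g⁻¹ = x := by group
        rw [← this, ← hdz]; group
  have hMnormal : M.Normal := by
    constructor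
    intro m hm g
    have h1 : cjSub g M ≤ M := hmax' _ (hconjSS g)
    refine h1 ?_
    rw [mem_cjSub]
    have : g⁻¹ * (g * m * g⁻¹) * g = m := by group
    rw [this]; exact hm
  obtain ⟨hMo, hMW, hMZ, hMn, D, hDc, hMD⟩ := hMSS
  exact ⟨M, hMnormal, hMo, hMZ, D, hDc, hMD⟩

variable (G) in
/-- The closed derived series relative to `Z`. -/
def Fser (Z : Subgroup G) : ℕ → Subgroup G
  | 0 => ⊤
  | (n + 1) => (⁅Fser Z n, Fser Z n⁆ ⊔ Z).topologicalClosure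

lemma Fser_normal (Z : Subgroup G) [Z.Normal] : ∀ n, (Fser G Z n).Normal := by
  intro n
  induction n with
  | zero =>
    have h : Fser G Z 0 = ⊤ := rfl
    rw [h]; infer_instance
  | succ n ih =>
    haveI := ih
    exact Subgroup.is_normal_topologicalClosure _

lemma Fser_closed (Z : Subgroup G) : ∀ n, IsClosed ((Fser G Z n : Subgroup G) : Set G) := by
  intro n
  cases n with
  | zero =>
    show IsClosed ((⊤ : Subgroup G) : Set G)
    rw [Subgroup.coe_top]; exact isClosed_univ
  | succ n => exact Subgroup.isClosed_topologicalClosure _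

lemma le_Fser (Z : Subgroup G) : ∀ n, Z ≤ Fser G Z n := by
  intro n
  cases n with
  | zero => exact le_top
  | succ n => exact le_sup_right.trans (Subgroup.le_topologicalClosure _)

lemma Fser_le_sup (Z Y : Subgroup G) [Z.Normal] [Y.Normal] (hZY : Z ≤ Y) :
    ∀ n, Fser G Y n ≤ ((Fser G Z n) ⊔ Y).topologicalClosure := by
  intro n
  induction n with
  | zero => exact le_sup_left.trans (Subgroup.le_topologicalClosure _)
  | succ n ih =>
    haveI : (Fser G Z n).Normal := Fser_normal Z n
    have h2 : ⁅Fser G Y n, Fser G Y n⁆ ≤ (⁅Fser G Z n ⊔ Y, Fser G Z n ⊔ Y⁆ :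
        Subgroup G).topologicalClosure :=
      (Subgroup.commutator_mono ih ih).trans (comm_topClosure _ _)
    have h3 : (⁅Fser G Z n ⊔ Y, Fser G Z n ⊔ Y⁆ : Subgroup G) ≤ ⁅Fser G Z n, Fser G Z n⁆ ⊔ Y :=
      commutator_sup_le_aux _ _
    have h4 : (⁅Fser G Z n, Fser G Z n⁆ ⊔ Y : Subgroup G) ≤ Fser G Z (n + 1) ⊔ Y := by
      refine sup_le_sup_right ?_ Y
      exact le_sup_left.trans (Subgroup.le_topologicalClosure _)
    have h5 : ⁅Fser G Y n, Fser G Y n⁆ ≤ (Fser G Z (n + 1) ⊔ Y).topologicalClosure :=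
      h2.trans ((topClosure_mono (h3.trans h4)))
    have h6 : Y ≤ (Fser G Z (n + 1) ⊔ Y).topologicalClosure :=
      le_sup_right.trans (Subgroup.le_topologicalClosure _)
    show (⁅Fser G Y n, Fser G Y n⁆ ⊔ Y).topologicalClosure ≤ _
    exact Subgroup.topologicalClosure_minimal _ (sup_le h5 h6)
      (Subgroup.isClosed_topologicalClosure _)

lemma core_T (hnoeth : NoetherianLC G) (U₁ : Subgroup G)
    (hU₁c : IsCompact (U₁ : Set G)) (hU₁o : IsOpen (U₁ : Set G)) :
    ∀ n (Z : Subgroup G), Z.Normal → IsClosed (Z : Set G) → Fser G Z n ≤ Z →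
      ∃ W : Subgroup G, W.Normal ∧ IsOpen (W : Set G) ∧ Z ≤ W ∧
        ∃ C : Set G, IsCompact C ∧ (W : Set G) ⊆ C * (Z : Set G) := by
  intro n
  induction n with
  | zero =>
    intro Z hZn hZc hF
    have hZtop : Z = ⊤ := top_le_iff.mp ((le_of_eq rfl).trans hF)
    refine ⟨⊤, inferInstance, ?_, le_top, {1}, isCompact_singleton, ?_⟩
    · rw [Subgroup.coe_top]; exact isOpen_univ
    · intro x _
      exact ⟨1, rfl, x, by rw [hZtop]; simp, one_mul x⟩
  | succ n ih =>
    intro Z hZn hZc hF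
    haveI := hZn
    have hYn : (Fser G Z n).Normal := Fser_normal Z n
    haveI := hYn
    set Y := Fser G Z n with hY
    have hYc : IsClosed (Y : Set G) := Fser_closed Z n
    have hZY : Z ≤ Y := le_Fser Z n
    have hFY : Fser G Y n ≤ Y := by
      have h1 := Fser_le_sup Z Y hZY n
      have h2 : (Fser G Z n ⊔ Y : Subgroup G) = Y := by rw [← hY, sup_idem]
      rw [h2] at h1
      exact h1.trans (Subgroup.topologicalClosure_minimal _ le_rfl hYc)
    obtain ⟨W', hW'n, hW'o, hYW', C, hCc, hW'C⟩ := ih Y hYn hYc hFY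
    have hcomm : ∀ a ∈ Y, ∀ b ∈ Y, a * b * a⁻¹ * b⁻¹ ∈ Z := by
      intro a ha b hb
      have h1 : ⁅a, b⁆ ∈ ⁅Y, Y⁆ := Subgroup.commutator_mem_commutator ha hb
      have h2 : (⁅Y, Y⁆ : Subgroup G) ≤ Z := by
        have h3 : (⁅Y, Y⁆ : Subgroup G) ≤ Fser G Z (n + 1) :=
          le_sup_left.trans (Subgroup.le_topologicalClosure _)
        exact h3.trans hF
      have h4 := h2 h1
      rwa [commutatorElement_def] at h4
    exact core_R hnoeth U₁ W' Y Z hU₁c hU₁o hW'o hW'n hYW' hZY hYn hZn hYc hcomm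
      ⟨C, hCc, hW'C⟩

lemma Fser_bot_le [T2Space G] (n : ℕ) :
    Fser G (⊥ : Subgroup G) n ≤ (derivedSeries G n).topologicalClosure := by
  induction n with
  | zero =>
    show (⊤ : Subgroup G) ≤ _
    rw [derivedSeries_zero]
    exact le_top.trans (Subgroup.le_topologicalClosure _)
  | succ n ih =>
    have h1 : ⁅Fser G ⊥ n, Fser G ⊥ n⁆ ≤
        (⁅derivedSeries G n, derivedSeries G n⁆ : Subgroup G).topologicalClosure :=
      (Subgroup.commutator_mono ih ih).trans (comm_topClosure _ _)
    show (⁅Fser G ⊥ n, Fser G ⊥ n⁆ ⊔ ⊥).topologicalClosure ≤ _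
    rw [sup_bot_eq]
    exact Subgroup.topologicalClosure_minimal _ h1
      (Subgroup.isClosed_topologicalClosure _)

end Aux

/-- A solvable Noetherian totally disconnected locally compact group admits a compact open
normal subgroup. -/
theorem exists_compact_open_normal_of_solvable_noetherian_tdlc
    {G : Type*} [Group G] [TopologicalSpace G] [IsTopologicalGroup G]
    [LocallyCompactSpace G] [T2Space G] [TotallyDisconnectedSpace G]
    [Group.IsSolvable G] (hnoeth : NoetherianLC G) :
    ∃ K : Subgroup G, K.Normal ∧ IsCompact (K : Set G) ∧ IsOpen (K : Set G) := by
  obtain ⟨U₁, hU₁c, hU₁o⟩ := exists_compact_open_vd (G := G)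
  obtain ⟨n, hn⟩ := Group.IsSolvable.solvable (G := G)
  have hFbot : Fser G (⊥ : Subgroup G) n ≤ ⊥ := by
    refine (Fser_bot_le n).trans ?_
    rw [hn]
    refine Subgroup.topologicalClosure_minimal _ le_rfl ?_
    rw [Subgroup.coe_bot]
    exact isClosed_singleton
  obtain ⟨W, hWn, hWo, -, C, hCc, hWC⟩ :=
    core_T hnoeth U₁ hU₁c hU₁o n ⊥ inferInstance
      (by rw [Subgroup.coe_bot]; exact isClosed_singleton) hFbot
  refine ⟨W, hWn, ?_, hWo⟩
  have hWC' : (W : Set G) ⊆ C := by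
    intro x hx
    obtain ⟨c, hc, z, hz, rfl⟩ := hWC hx
    have hz1 : z = 1 := by simpa using hz
    subst hz1
    simpa using hc
  exact hCc.of_isClosed_subset (W.isClosed_of_isOpen hWo) hWC'
end

section
/- Property (M) is inherited by central extensions: if G̃ is a locally compact group and Z is a closed subgroup of G̃ contained in the center of G̃ such that the quotient G̃/Z has property (M), then G̃ has property (M). -/
open MeasureTheory

def HasFiniteCovolume {G : Type*} [Group G] [TopologicalSpace G] (H : Subgroup G) : Prop :=
  letI : MeasurableSpace (G ⧸ H) := borel (G ⧸ H)
  ∃ μ : Measure (G ⧸ H), IsProbabilityMeasure μ ∧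
    ∀ g : G, Measure.map (fun x : G ⧸ H => g • x) μ = μ

def IsCocompactSubgroup {G : Type*} [Group G] [TopologicalSpace G] (H : Subgroup G) : Prop :=
  IsCompact (Set.univ : Set (G ⧸ H))

/-- A locally compact group has property (M) if every closed subgroup of finite covolume is
cocompact. -/
def PropertyM (G : Type*) [Group G] [TopologicalSpace G] : Prop :=
  ∀ H : Subgroup G, IsClosed (H : Set G) → HasFiniteCovolume H → IsCocompactSubgroup H

open Set
open scoped Pointwise

section WordSubgroup

variable {G : Type*} [Group G]

/-- The subgroup of all nonempty words in a symmetric set `T` containing `1`. -/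
def wordSubgroup (T : Set G) (h1 : (1 : G) ∈ T) (hinv : T⁻¹ = T) : Subgroup G where
  carrier := ⋃ n : ℕ, T ^ (n + 1)
  one_mem' := Set.mem_iUnion.2 ⟨0, by simpa [pow_one] using h1⟩
  mul_mem' := by
    rintro a b ha hb
    obtain ⟨m, hm⟩ := Set.mem_iUnion.1 ha
    obtain ⟨n, hn⟩ := Set.mem_iUnion.1 hb
    refine Set.mem_iUnion.2 ⟨m + n + 1, ?_⟩
    have h2 : T ^ (m + 1) * T ^ (n + 1) = T ^ (m + n + 1 + 1) := by
      rw [← pow_add]; ring_nf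
    rw [← h2]
    exact Set.mul_mem_mul hm hn
  inv_mem' := by
    intro a ha
    obtain ⟨n, hn⟩ := Set.mem_iUnion.1 ha
    refine Set.mem_iUnion.2 ⟨n, ?_⟩
    have h2 : (T ^ (n + 1))⁻¹ = (T⁻¹) ^ (n + 1) := (inv_pow T (n + 1)).symm
    have h3 : a⁻¹ ∈ (T ^ (n + 1))⁻¹ := Set.inv_mem_inv.2 hn
    rwa [h2, hinv] at h3

theorem mem_wordSubgroup_iff {T : Set G} {h1 : (1 : G) ∈ T} {hinv : T⁻¹ = T} {a : G} :
    a ∈ wordSubgroup T h1 hinv ↔ ∃ n : ℕ, a ∈ T ^ (n + 1) :=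
  Set.mem_iUnion

end WordSubgroup

section Vitali

/-- Vitali-type lemma: a group carrying a translation-invariant countably additive
probability measure defined on **all** subsets is finite. -/
theorem vitali_aux {Q : Type*} [Group Q]
    (σ : @MeasureTheory.Measure Q ⊤) (hσ : σ Set.univ = 1)
    (hinv : ∀ (q : Q) (s : Set Q), σ ((fun x => q * x) ⁻¹' s) = σ s) :
    Finite Q := by
  by_contra hfin
  rw [not_finite_iff_infinite] at hfin
  let f := Infinite.natEmbedding Q
  set S : Set Q := Set.range f with hS
  set T : Set Q := (S ∪ S⁻¹) ∪ {1} with hT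
  have h1 : (1 : Q) ∈ T := Set.mem_union_right _ rfl
  have hTinv : T⁻¹ = T := by
    ext x
    simp only [hT, Set.mem_inv, Set.mem_union, Set.mem_singleton_iff, inv_inv, inv_eq_one]
    tauto
  set Λ : Subgroup Q := wordSubgroup T h1 hTinv with hΛ
  have hTc : T.Countable := by
    refine (Set.Countable.union (Set.countable_range f) ?_).union (Set.countable_singleton 1)
    have h4 : (S⁻¹ : Set Q) = Inv.inv ⁻¹' S := rfl
    rw [h4]
    exact (Set.countable_range f).preimage inv_injective
  have hpowc : ∀ n : ℕ, (T ^ (n + 1)).Countable := by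
    intro n; induction n with
    | zero => simpa [pow_one] using hTc
    | succ n ih =>
      rw [pow_succ, ← Set.image2_mul]
      exact ih.image2 hTc _
  have hΛc : ((Λ : Set Q)).Countable := Set.countable_iUnion hpowc
  haveI : Countable ↥Λ := hΛc.to_subtype
  have hSΛ : S ⊆ (Λ : Set Q) := by
    intro x hx
    exact Set.mem_iUnion.2 ⟨0, by
      simpa only [zero_add, pow_one] using Set.mem_union_left _ (Set.mem_union_left _ hx)⟩
  haveI : Infinite ↥Λ :=
    ((Set.infinite_range_of_injective f.injective).mono hSΛ).to_subtype
  let Qr := Quotient (QuotientGroup.rightRel Λ)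
  let tr : Qr → Q := Quotient.out
  let s : ↥Λ → Set Q := fun l => (fun x => (l : Q) * x) '' (Set.range tr)
  have hcover : ∀ x : Q, ∃ l : ↥Λ, x ∈ s l := by
    intro x
    set c : Qr := Quotient.mk _ x with hc
    have hout : Quotient.mk _ (tr c) = c := Quotient.out_eq c
    have hrel : (QuotientGroup.rightRel Λ) (tr c) x := Quotient.exact (hout.trans hc)
    have hmem : x * (tr c)⁻¹ ∈ Λ := QuotientGroup.rightRel_apply.1 hrel
    refine ⟨⟨x * (tr c)⁻¹, hmem⟩, ⟨tr c, ⟨c, rfl⟩, ?_⟩⟩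
    simp
  have hdisj : Pairwise (Function.onFun Disjoint s) := by
    intro l₁ l₂ hne
    rw [Function.onFun, Set.disjoint_left]
    rintro x ⟨t₁, ⟨c₁, rfl⟩, rfl⟩ ⟨t₂, ⟨c₂, rfl⟩, hx⟩
    change (l₂ : Q) * tr c₂ = (l₁ : Q) * tr c₁ at hx
    have hmem : tr c₁ * (tr c₂)⁻¹ ∈ Λ := by
      have h5 : tr c₁ * (tr c₂)⁻¹ = (l₁ : Q)⁻¹ * (l₂ : Q) := by
        calc tr c₁ * (tr c₂)⁻¹
            = ((l₁ : Q)⁻¹ * ((l₁ : Q) * tr c₁)) * (tr c₂)⁻¹ := by group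
          _ = ((l₁ : Q)⁻¹ * ((l₂ : Q) * tr c₂)) * (tr c₂)⁻¹ := by rw [hx]
          _ = (l₁ : Q)⁻¹ * (l₂ : Q) := by group
      rw [h5]; exact Λ.mul_mem (Λ.inv_mem l₁.2) l₂.2
    have hc : c₂ = c₁ := by
      have h7 := Quotient.sound (QuotientGroup.rightRel_apply.2 hmem)
      rwa [Quotient.out_eq, Quotient.out_eq] at h7
    have ht : tr c₂ = tr c₁ := by rw [hc]
    have hl : (l₂ : Q) = (l₁ : Q) := by
      rw [ht] at hx; exact mul_right_cancel hx
    exact hne (Subtype.ext hl).symm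
  have hallcov : (⋃ l, s l) = Set.univ :=
    Set.eq_univ_of_forall fun x => Set.mem_iUnion.2 (hcover x)
  have hmeas : ∀ l : ↥Λ, MeasurableSet[⊤] (s l) := fun _ => trivial
  have hsum := measure_iUnion (μ := σ) hdisj hmeas
  rw [hallcov, hσ] at hsum
  have hst : ∀ l : ↥Λ, σ (s l) = σ (Set.range tr) := by
    intro l
    have h6 : s l = (fun x => (l : Q)⁻¹ * x) ⁻¹' (Set.range tr) := by
      ext x
      simp only [s, Set.mem_image, Set.mem_preimage]
      constructor
      · rintro ⟨t, ht, rfl⟩; simpa using ht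
      · intro hx; exact ⟨(l : Q)⁻¹ * x, hx, by group⟩
    rw [h6, hinv]
  rw [tsum_congr hst] at hsum
  by_cases h0 : σ (Set.range tr) = 0
  · rw [h0, tsum_zero] at hsum; exact one_ne_zero hsum
  · rw [ENNReal.tsum_const_eq_top_of_ne_zero h0] at hsum
    exact (by simp : (1 : ENNReal) ≠ ⊤) hsum

end Vitali

section T2

variable {G : Type*} [Group G] [TopologicalSpace G] [IsTopologicalGroup G]

theorem cosetSpace_t2 (H : Subgroup G) (hH : IsClosed (H : Set G)) : T2Space (G ⧸ H) := by
  rw [t2_iff_isClosed_diagonal]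
  have hq : Topology.IsQuotientMap
      (Prod.map (QuotientGroup.mk : G → G ⧸ H) QuotientGroup.mk) :=
    ((QuotientGroup.isOpenQuotientMap_mk (N := H)).prodMap (QuotientGroup.isOpenQuotientMap_mk (N := H))).isQuotientMap
  rw [← hq.isClosed_preimage]
  have h2 : Prod.map (QuotientGroup.mk : G → G ⧸ H) QuotientGroup.mk ⁻¹'
      (Set.diagonal (G ⧸ H)) = (fun p : G × G => p.1⁻¹ * p.2) ⁻¹' (H : Set G) := by
    ext ⟨a, b⟩
    simp only [Set.mem_preimage, Set.mem_diagonal_iff, Prod.map_apply]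
    exact QuotientGroup.eq
  rw [h2]
  exact hH.preimage (continuous_fst.inv.mul continuous_snd)

end T2



/-- Property (M) is inherited by central extensions: if `Z` is a closed central subgroup of
a locally compact group `G̃` such that `G̃/Z` has property (M), then `G̃` has property (M). -/
theorem propertyM_of_central_extension
    {G : Type*} [Group G] [TopologicalSpace G] [IsTopologicalGroup G]
    [LocallyCompactSpace G] [T2Space G]
    (Z : Subgroup G) [Z.Normal] (hZcentral : Z ≤ Subgroup.center G)
    (hZcl : IsClosed (Z : Set G))
    (hquot : PropertyM (G ⧸ Z)) :
    PropertyM G := by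
  intro Hsub hHcl hHfv
  letI : MeasurableSpace (G ⧸ Hsub) := borel _
  haveI : BorelSpace (G ⧸ Hsub) := ⟨rfl⟩
  obtain ⟨μ, hμprob, hμinv⟩ := hHfv
  -- haveI := cosetSpace_t2 Hsub hHcl
  have hcomm : ∀ z ∈ Z, ∀ g : G, g * z = z * g := fun z hz g =>
    (Subgroup.mem_center_iff.1 (hZcentral hz) g)
  -- the subgroup Z·H and its closure L
  let ZH : Subgroup G :=
  { carrier := {g | ∃ z ∈ Z, ∃ h ∈ Hsub, g = z * h}
    one_mem' := ⟨1, Z.one_mem, 1, Hsub.one_mem, (mul_one 1).symm⟩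
    mul_mem' := by
      rintro a b ⟨z, hz, h, hh, rfl⟩ ⟨z', hz', h', hh', rfl⟩
      refine ⟨z * z', Z.mul_mem hz hz', h * h', Hsub.mul_mem hh hh', ?_⟩
      calc z * h * (z' * h') = z * (h * z') * h' := by group
        _ = z * (z' * h) * h' := by rw [hcomm z' hz' h]
        _ = z * z' * (h * h') := by group
    inv_mem' := by
      rintro a ⟨z, hz, h, hh, rfl⟩
      refine ⟨z⁻¹, Z.inv_mem hz, h⁻¹, Hsub.inv_mem hh, ?_⟩
      rw [mul_inv_rev]
      exact hcomm z⁻¹ (Z.inv_mem hz) h⁻¹ }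
  have hZHmem : ∀ {g : G}, g ∈ ZH ↔ ∃ z ∈ Z, ∃ h ∈ Hsub, g = z * h := fun {g} => Iff.rfl
  let L : Subgroup G := ZH.topologicalClosure
  have hLcl : IsClosed (L : Set G) := Subgroup.isClosed_topologicalClosure ZH
  have hHL : Hsub ≤ L := fun h hh =>
    ZH.le_topologicalClosure ⟨1, Z.one_mem, h, hh, (one_mul h).symm⟩
  have hZL : ∀ z ∈ Z, z ∈ L := fun z hz =>
    ZH.le_topologicalClosure ⟨z, hz, 1, Hsub.one_mem, (mul_one z).symm⟩
  -- the image subgroup downstairs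
  let H' : Subgroup (G ⧸ Z) := L.map (QuotientGroup.mk' Z)
  have hpre : ((QuotientGroup.mk : G → G ⧸ Z) ⁻¹' (H' : Set (G ⧸ Z))) = (L : Set G) := by
    ext g
    simp only [Set.mem_preimage, SetLike.mem_coe, Subgroup.mem_map]
    constructor
    · rintro ⟨l, hl, hlg⟩
      have h2 : l⁻¹ * g ∈ Z := QuotientGroup.eq.1 hlg
      have h3 := L.mul_mem hl (hZL _ h2)
      simpa using h3
    · intro hg; exact ⟨g, hg, rfl⟩
  have hH'cl : IsClosed (H' : Set (G ⧸ Z)) :=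
    (QuotientGroup.isQuotientMap_mk Z).isClosed_preimage.1 (hpre ▸ hLcl)
  -- the equivariant map between the quotients and the pushforward measure
  letI : MeasurableSpace ((G ⧸ Z) ⧸ H') := borel _
  haveI : BorelSpace ((G ⧸ Z) ⧸ H') := ⟨rfl⟩
  let φ : G ⧸ Hsub → (G ⧸ Z) ⧸ H' :=
    fun x => Quotient.liftOn' x
      (fun g => (QuotientGroup.mk (QuotientGroup.mk g : G ⧸ Z) : (G ⧸ Z) ⧸ H'))
      (by
        intro a b hab
        have hab' : a⁻¹ * b ∈ Hsub := QuotientGroup.leftRel_apply.1 hab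
        rw [QuotientGroup.eq]
        refine ⟨a⁻¹ * b, hHL hab', ?_⟩
        simp [QuotientGroup.mk'_apply])
  have hφmk : ∀ g : G, φ (QuotientGroup.mk g)
      = QuotientGroup.mk (QuotientGroup.mk g : G ⧸ Z) := fun g => rfl
  have hφcont : Continuous φ := by
    rw [(QuotientGroup.isQuotientMap_mk Hsub).continuous_iff]
    exact QuotientGroup.continuous_mk.comp QuotientGroup.continuous_mk
  have hφmeas : Measurable φ := hφcont.measurable
  have hcompact2 : IsCompact (Set.univ : Set ((G ⧸ Z) ⧸ H')) := by
    refine hquot H' hH'cl ⟨Measure.map φ μ, Measure.isProbabilityMeasure_map hφmeas.aemeasurable, ?_⟩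
    intro q
    obtain ⟨g, rfl⟩ := QuotientGroup.mk_surjective q
    have hc : Continuous (fun y : (G ⧸ Z) ⧸ H' => (QuotientGroup.mk g : G ⧸ Z) • y) :=
      continuous_const_smul _
    rw [Measure.map_map hc.measurable hφmeas]
    have hcomp : ((fun y : (G ⧸ Z) ⧸ H' => (QuotientGroup.mk g : G ⧸ Z) • y) ∘ φ)
        = φ ∘ (fun x : G ⧸ Hsub => g • x) := by
      funext x
      induction x using Quotient.inductionOn' with
      | h a => rfl
    rw [hcomp, ← Measure.map_map hφmeas (continuous_const_smul g).measurable, hμinv g]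
  -- transfer compactness to G ⧸ L
  have hinner : ∀ (a b : G), (QuotientGroup.leftRel Z) a b →
      (QuotientGroup.mk a : G ⧸ L) = QuotientGroup.mk b := by
    intro a b hab
    exact QuotientGroup.eq.2 (hZL _ (QuotientGroup.leftRel_apply.1 hab))
  let θ : (G ⧸ Z) ⧸ H' → G ⧸ L := fun y =>
    Quotient.liftOn' y
      (fun q => Quotient.liftOn' q (fun g => (QuotientGroup.mk g : G ⧸ L)) hinner)
      (by
        intro qa qb hab
        induction qa using Quotient.inductionOn' with | h a =>
        induction qb using Quotient.inductionOn' with | h b =>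
        have h1 : (QuotientGroup.mk a : G ⧸ Z)⁻¹ * QuotientGroup.mk b ∈ H' :=
          QuotientGroup.leftRel_apply.1 hab
        have h2 : (QuotientGroup.mk (a⁻¹ * b) : G ⧸ Z) ∈ H' := by
          have heq : (QuotientGroup.mk a : G ⧸ Z)⁻¹ * QuotientGroup.mk b
              = QuotientGroup.mk (a⁻¹ * b) := by simp
          rwa [heq] at h1
        obtain ⟨l, hl, hleq⟩ := Subgroup.mem_map.1 h2
        have h3 : l⁻¹ * (a⁻¹ * b) ∈ Z := by
          apply QuotientGroup.eq.1
          simpa [QuotientGroup.mk'_apply] using hleq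
        have h4 : a⁻¹ * b ∈ L := by
          have h5 := L.mul_mem hl (hZL _ h3); simpa using h5
        show (QuotientGroup.mk a : G ⧸ L) = QuotientGroup.mk b
        exact QuotientGroup.eq.2 h4)
  have hθcont : Continuous θ := by
    rw [(QuotientGroup.isQuotientMap_mk H').continuous_iff]
    have hcomp : (θ ∘ (QuotientGroup.mk : (G ⧸ Z) → (G ⧸ Z) ⧸ H'))
        = fun q : G ⧸ Z => Quotient.liftOn' q (fun g => (QuotientGroup.mk g : G ⧸ L)) hinner :=
      rfl
    rw [hcomp, (QuotientGroup.isQuotientMap_mk Z).continuous_iff]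
    exact QuotientGroup.continuous_mk
  have hYcomp : IsCompact (Set.univ : Set (G ⧸ L)) := by
    have h1 : θ '' Set.univ = Set.univ := by
      apply Set.eq_univ_of_forall
      intro y
      obtain ⟨g, rfl⟩ := QuotientGroup.mk_surjective y
      exact ⟨QuotientGroup.mk (QuotientGroup.mk g), Set.mem_univ _, rfl⟩
    have h2 := hcompact2.image hθcont
    rwa [h1] at h2
  -- a compact set C with C·L = G
  obtain ⟨V, hVcomp, hVnhds⟩ := exists_compact_mem_nhds (1 : G)
  have h1V : (1 : G) ∈ interior V := mem_interior_iff_mem_nhds.2 hVnhds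
  have hUopen : ∀ g : G, IsOpen ((QuotientGroup.mk '' (interior V * {g})) : Set (G ⧸ L)) :=
    fun g => QuotientGroup.isOpenMap_coe _ (isOpen_interior.mul_right)
  have hUcover : (Set.univ : Set (G ⧸ L))
      ⊆ ⋃ g : G, QuotientGroup.mk '' (interior V * {g}) := by
    intro y _
    obtain ⟨g, rfl⟩ := QuotientGroup.mk_surjective y
    refine Set.mem_iUnion.2 ⟨g, ⟨1 * g, Set.mul_mem_mul h1V rfl, by rw [one_mul]⟩⟩
  obtain ⟨t, ht⟩ := hYcomp.elim_finite_subcover _ hUopen hUcover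
  let C : Set G := ⋃ g ∈ t, V * {g}
  have hCcomp : IsCompact C :=
    t.finite_toSet.isCompact_biUnion fun g _ => hVcomp.mul isCompact_singleton
  have hCL : ∀ g : G, ∃ c ∈ C, c⁻¹ * g ∈ L := by
    intro g
    have h2 := ht (Set.mem_univ (QuotientGroup.mk g : G ⧸ L))
    rw [Set.mem_iUnion₂] at h2
    obtain ⟨g', hg't, hmem⟩ := h2
    obtain ⟨p, hp, hpeq⟩ := hmem
    refine ⟨p, Set.mem_biUnion hg't (Set.mul_subset_mul interior_subset Set.Subset.rfl hp), ?_⟩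
    exact QuotientGroup.eq.1 hpeq
  -- the compactly generated open subgroup G₀ containing C
  let S₀ : Set G := (V ∪ C) ∪ {1}
  have hS₀comp : IsCompact S₀ := (hVcomp.union hCcomp).union isCompact_singleton
  let T : Set G := S₀ ∪ S₀⁻¹
  have hTcomp : IsCompact T := hS₀comp.union hS₀comp.inv
  have hT1 : (1 : G) ∈ T := Set.mem_union_left _ (Set.mem_union_right _ rfl)
  have hTinv : T⁻¹ = T := by
    show (S₀ ∪ S₀⁻¹)⁻¹ = S₀ ∪ S₀⁻¹
    rw [Set.union_inv, inv_inv, Set.union_comm]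
  let G₀ : Subgroup G := wordSubgroup T hT1 hTinv
  have hVT : V ⊆ T := fun v hv =>
    Set.mem_union_left _ (Set.mem_union_left _ (Set.mem_union_left _ hv))
  have hCT : C ⊆ T := fun c hc =>
    Set.mem_union_left _ (Set.mem_union_left _ (Set.mem_union_right _ hc))
  have hVG₀ : V ⊆ (G₀ : Set G) := fun v hv =>
    Set.mem_iUnion.2 ⟨0, by simpa using hVT hv⟩
  have hG₀open : IsOpen (G₀ : Set G) :=
    Subgroup.isOpen_of_mem_nhds _ (Filter.mem_of_superset hVnhds hVG₀)
  have hTpow_comp : ∀ n : ℕ, IsCompact (T ^ (n + 1)) := by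
    intro n; induction n with
    | zero => simpa [pow_one] using hTcomp
    | succ n ih => rw [pow_succ]; exact ih.mul hTcomp
  -- the subgroup Λ₀ = Z ∩ G₀·H and the discrete quotient Qz
  let Λ₀ : Subgroup G :=
  { carrier := {g | g ∈ Z ∧ ∃ a ∈ G₀, ∃ h ∈ Hsub, g = a * h}
    one_mem' := ⟨Z.one_mem, 1, G₀.one_mem, 1, Hsub.one_mem, (mul_one 1).symm⟩
    mul_mem' := by
      rintro x y ⟨hxZ, a, ha, h, hh, rfl⟩ ⟨hyZ, b, hb, k, hk, rfl⟩
      refine ⟨Z.mul_mem hxZ hyZ, a * b, G₀.mul_mem ha hb, k * h, Hsub.mul_mem hk hh, ?_⟩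
      calc a * h * (b * k) = a * (h * (b * k)) := by group
        _ = a * ((b * k) * h) := by rw [hcomm _ hyZ h]
        _ = a * b * (k * h) := by group
    inv_mem' := by
      rintro x ⟨hxZ, a, ha, h, hh, rfl⟩
      refine ⟨Z.inv_mem hxZ, a⁻¹, G₀.inv_mem ha, h⁻¹, Hsub.inv_mem hh, ?_⟩
      have h1 : a⁻¹ = h * (a * h)⁻¹ := by group
      have h2 : h * (a * h)⁻¹ = (a * h)⁻¹ * h := hcomm _ (Z.inv_mem hxZ) h
      have h3 : a⁻¹ * h⁻¹ = (a * h)⁻¹ := by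
        rw [h1, h2]; group
      exact h3.symm }
  let ΛZ : Subgroup ↥Z := Λ₀.subgroupOf Z
  haveI hΛZnormal : ΛZ.Normal := by
    constructor
    intro n hn g
    have h1 : g * n * g⁻¹ = n := by
      ext
      push_cast
      have h2 := hcomm _ n.2 (g : G)
      rw [h2]; group
    rw [h1]; exact hn
  -- the orbit pieces
  let mkset : ↥Z → Set (G ⧸ Hsub) := fun z =>
    QuotientGroup.mk '' ((G₀ : Set G) * {(z : G)})
  have hmkopen : ∀ z : ↥Z, IsOpen (mkset z) :=
    fun z => QuotientGroup.isOpenMap_coe _ (hG₀open.mul_right)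
  have hcov : ∀ x : G ⧸ Hsub, ∃ z : ↥Z, x ∈ mkset z := by
    intro x
    induction x using Quotient.inductionOn' with
    | h g =>
    obtain ⟨c, hcC, hcl⟩ := hCL g
    have hlL : c⁻¹ * g ∈ closure (ZH : Set G) := by
      have h2 : c⁻¹ * g ∈ (L : Set G) := hcl
      rwa [show (L : Set G) = closure (ZH : Set G) from Subgroup.topologicalClosure_coe] at h2
    have hO : ∃ p ∈ (ZH : Set G), p * (c⁻¹ * g)⁻¹ ∈ interior V := by
      have hopen : IsOpen ((fun p : G => p * (c⁻¹ * g)⁻¹) ⁻¹' interior V) :=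
        isOpen_interior.preimage (continuous_mul_right _)
      have hlin : (c⁻¹ * g) ∈ (fun p : G => p * (c⁻¹ * g)⁻¹) ⁻¹' interior V := by
        have hone : (c⁻¹ * g) * (c⁻¹ * g)⁻¹ = 1 := by group
        show (c⁻¹ * g) * (c⁻¹ * g)⁻¹ ∈ interior V
        rw [hone]; exact h1V
      obtain ⟨p, hp1, hp2⟩ := mem_closure_iff.1 hlL _ hopen hlin
      exact ⟨p, hp2, hp1⟩
    obtain ⟨p, hpZH, hv⟩ := hO
    obtain ⟨z, hz, h, hh, rfl⟩ := hpZH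
    set v : G := (z * h) * (c⁻¹ * g)⁻¹ with hvdef
    have hvV : v ∈ V := interior_subset hv
    have hgl : g = ((c * v⁻¹) * z) * h := by
      rw [hvdef]; group
    have hcv : c * v⁻¹ ∈ (G₀ : Set G) := by
      refine Set.mem_iUnion.2 ⟨1, ?_⟩
      have hp2 : T ^ (1 + 1) = T * T := by rw [pow_succ, pow_one]
      rw [hp2]
      refine Set.mul_mem_mul (hCT hcC) ?_
      rw [← hTinv]
      exact Set.inv_mem_inv.2 (hVT hvV)
    refine ⟨⟨z, hz⟩, ⟨(c * v⁻¹) * z, Set.mul_mem_mul hcv rfl, ?_⟩⟩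
    show QuotientGroup.mk ((c * v⁻¹) * z) = Quotient.mk'' g
    have h4 : (Quotient.mk'' g : G ⧸ Hsub) = QuotientGroup.mk (((c * v⁻¹) * z) * h) := by
      rw [← hgl]
    rw [h4]
    exact (QuotientGroup.mk_mul_of_mem _ hh).symm
  -- the pieces are a partition indexed by the group ↥Z ⧸ ΛZ
  have lem1 : ∀ (z z' : ↥Z) (x : G ⧸ Hsub), x ∈ mkset z → x ∈ mkset z' →
      (QuotientGroup.mk z : ↥Z ⧸ ΛZ) = QuotientGroup.mk z' := by
    intro z z' x hx hx'
    obtain ⟨p, hp, hpx⟩ := hx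
    obtain ⟨p', hp', hpx'⟩ := hx'
    obtain ⟨a, ha, y, hy, rfl⟩ := hp
    obtain ⟨a', ha', y', hy', rfl⟩ := hp'
    rw [Set.mem_singleton_iff] at hy hy'
    subst hy; subst hy'
    have heq : (QuotientGroup.mk (a * (z : G)) : G ⧸ Hsub)
        = QuotientGroup.mk (a' * (z' : G)) := hpx.trans hpx'.symm
    have hH : (a * (z : G))⁻¹ * (a' * (z' : G)) ∈ Hsub := QuotientGroup.eq.1 heq
    rw [QuotientGroup.eq, Subgroup.mem_subgroupOf]
    have key : ((z : G))⁻¹ * (z' : G)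
        = (a'⁻¹ * a) * ((a * (z : G))⁻¹ * (a' * (z' : G))) := by
      calc ((z : G))⁻¹ * (z' : G)
          = ((z : G))⁻¹ * (a'⁻¹ * a) * (a⁻¹ * (a' * (z' : G))) := by group
        _ = (a'⁻¹ * a) * ((z : G))⁻¹ * (a⁻¹ * (a' * (z' : G))) := by
              rw [hcomm _ (Z.inv_mem z.2) (a'⁻¹ * a)]
        _ = (a'⁻¹ * a) * ((a * (z : G))⁻¹ * (a' * (z' : G))) := by group
    refine ⟨(z⁻¹ * z').2, a'⁻¹ * a, G₀.mul_mem (G₀.inv_mem ha') ha,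
      (a * (z : G))⁻¹ * (a' * (z' : G)), hH, ?_⟩
    have hcoe : ((z⁻¹ * z' : ↥Z) : G) = ((z : G))⁻¹ * (z' : G) := by push_cast; rfl
    rw [hcoe, key]
  have lem2 : ∀ (z z' : ↥Z), (QuotientGroup.mk z : ↥Z ⧸ ΛZ) = QuotientGroup.mk z' →
      mkset z' ⊆ mkset z := by
    intro z z' hzz x hx
    have hmem : z⁻¹ * z' ∈ ΛZ := QuotientGroup.eq.1 hzz
    rw [Subgroup.mem_subgroupOf] at hmem
    obtain ⟨hZmem, b, hb, h, hh, heq⟩ := hmem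
    obtain ⟨p, hp, hpx⟩ := hx
    obtain ⟨a', ha', y, hy, rfl⟩ := hp
    rw [Set.mem_singleton_iff] at hy; subst hy
    refine ⟨(a' * b) * (z : G), Set.mul_mem_mul (G₀.mul_mem ha' hb) rfl, ?_⟩
    rw [← hpx]
    have hcoe : ((z⁻¹ * z' : ↥Z) : G) = ((z : G))⁻¹ * (z' : G) := by push_cast; rfl
    rw [hcoe] at heq
    have hz' : (z' : G) = (z : G) * (b * h) := by
      calc (z' : G) = (z : G) * (((z : G))⁻¹ * (z' : G)) := by group
        _ = (z : G) * (b * h) := by rw [heq]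
    have hfin : a' * (z' : G) = ((a' * b) * (z : G)) * h := by
      rw [hz']
      calc a' * ((z : G) * (b * h)) = a' * ((z : G) * b) * h := by group
        _ = a' * (b * (z : G)) * h := by rw [← hcomm _ z.2 b]
        _ = ((a' * b) * (z : G)) * h := by group
    show (QuotientGroup.mk ((a' * b) * (z : G)) : G ⧸ Hsub) = QuotientGroup.mk (a' * (z' : G))
    rw [hfin]
    exact (QuotientGroup.mk_mul_of_mem _ hh).symm
  -- the index map and the pushforward measure on the discrete group
  let w : G ⧸ Hsub → ↥Z := fun x => Classical.choose (hcov x)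
  have hw : ∀ x, x ∈ mkset (w x) := fun x => Classical.choose_spec (hcov x)
  let θz : G ⧸ Hsub → ↥Z ⧸ ΛZ := fun x => QuotientGroup.mk (w x)
  have hθeq : ∀ (x : G ⧸ Hsub) (z : ↥Z), x ∈ mkset z → θz x = QuotientGroup.mk z :=
    fun x z hx => lem1 (w x) z x (hw x) hx
  letI : MeasurableSpace (↥Z ⧸ ΛZ) := ⊤
  have hθmeas : Measurable θz := by
    intro s _
    have hset : θz ⁻¹' s = ⋃ (z : ↥Z) (_ : (QuotientGroup.mk z : ↥Z ⧸ ΛZ) ∈ s), mkset z := by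
      ext x
      simp only [Set.mem_preimage, Set.mem_iUnion]
      constructor
      · intro hxs
        exact ⟨w x, hxs, hw x⟩
      · rintro ⟨z, hzs, hxz⟩
        rw [hθeq x z hxz]; exact hzs
    rw [hset]
    exact (isOpen_iUnion fun z => isOpen_iUnion fun _ => hmkopen z).measurableSet
  have hkey : ∀ (z₀ : ↥Z) (x : G ⧸ Hsub),
      θz ((z₀ : G) • x) = QuotientGroup.mk z₀ * θz x := by
    intro z₀ x
    obtain ⟨p, hp, hpx⟩ := hw x
    obtain ⟨a, ha, y, hy, rfl⟩ := hp
    rw [Set.mem_singleton_iff] at hy; subst hy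
    have h2 : (z₀ : G) • x = QuotientGroup.mk (a * ((z₀ * w x : ↥Z) : G)) := by
      conv_lhs => rw [← hpx]
      show (z₀ : G) • (QuotientGroup.mk (a * ((w x : ↥Z) : G)) : G ⧸ Hsub) = _
      rw [MulAction.Quotient.smul_mk]
      congr 1
      push_cast
      rw [smul_eq_mul, ← mul_assoc, ← hcomm _ z₀.2 a, mul_assoc]
    have h3 : (z₀ : G) • x ∈ mkset (z₀ * w x) :=
      ⟨a * ((z₀ * w x : ↥Z) : G), Set.mul_mem_mul ha rfl, h2.symm⟩
    rw [hθeq _ _ h3]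
    show (QuotientGroup.mk (z₀ * w x) : ↥Z ⧸ ΛZ) = QuotientGroup.mk z₀ * QuotientGroup.mk (w x)
    rfl
  have hν1 : Measure.map θz μ Set.univ = 1 := by
    rw [Measure.map_apply hθmeas MeasurableSet.univ, Set.preimage_univ]
    exact hμprob.measure_univ
  have hνinv : ∀ (q : ↥Z ⧸ ΛZ) (s : Set (↥Z ⧸ ΛZ)),
      Measure.map θz μ ((fun x => q * x) ⁻¹' s) = Measure.map θz μ s := by
    intro q s
    obtain ⟨z₀, rfl⟩ := QuotientGroup.mk_surjective q
    rw [Measure.map_apply hθmeas trivial, Measure.map_apply hθmeas trivial]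
    have hpre2 : θz ⁻¹' ((fun x => (QuotientGroup.mk z₀ : ↥Z ⧸ ΛZ) * x) ⁻¹' s)
        = (fun x : G ⧸ Hsub => (z₀ : G) • x) ⁻¹' (θz ⁻¹' s) := by
      ext x
      simp only [Set.mem_preimage]
      rw [hkey z₀ x]
    rw [hpre2]
    have hsm : Measurable (fun x : G ⧸ Hsub => (z₀ : G) • x) :=
      (continuous_const_smul ((z₀ : G))).measurable
    calc μ ((fun x : G ⧸ Hsub => (z₀ : G) • x) ⁻¹' (θz ⁻¹' s))
        = Measure.map (fun x : G ⧸ Hsub => (z₀ : G) • x) μ (θz ⁻¹' s) :=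
          (Measure.map_apply hsm (hθmeas trivial)).symm
      _ = μ (θz ⁻¹' s) := by rw [hμinv]
  haveI hQzfin : Finite (↥Z ⧸ ΛZ) := vitali_aux (Measure.map θz μ) hν1 hνinv
  -- hence G ⧸ Hsub is σ-compact, and some compact set has positive measure
  let rep : ↥Z ⧸ ΛZ → ↥Z := fun q => Classical.choose (QuotientGroup.mk_surjective q)
  have hrep : ∀ q, (QuotientGroup.mk (rep q) : ↥Z ⧸ ΛZ) = q :=
    fun q => Classical.choose_spec (QuotientGroup.mk_surjective q)
  let F : (↥Z ⧸ ΛZ) × ℕ → Set (G ⧸ Hsub) := fun j =>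
    QuotientGroup.mk '' (T ^ (j.2 + 1) * {(rep j.1 : G)})
  have hFcover : (Set.univ : Set (G ⧸ Hsub)) ⊆ ⋃ j, F j := by
    intro x _
    have h1 : x ∈ mkset (rep (θz x)) := by
      refine lem2 (rep (θz x)) (w x) ?_ (hw x)
      rw [hrep]
    obtain ⟨p, hp, hpx⟩ := h1
    obtain ⟨a, ha, y, hy, rfl⟩ := hp
    obtain ⟨n, han⟩ := Set.mem_iUnion.1 ha
    exact Set.mem_iUnion.2 ⟨(θz x, n), ⟨a * y, Set.mul_mem_mul han hy, hpx⟩⟩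
  haveI : Countable ((↥Z ⧸ ΛZ) × ℕ) := by
    haveI : Countable (↥Z ⧸ ΛZ) := Finite.to_countable
    infer_instance
  have hFpos : ∃ j, μ (F j) ≠ 0 := by
    by_contra hal
    push_neg at hal
    have h2 : μ Set.univ ≤ ∑' j, μ (F j) :=
      le_trans (measure_mono hFcover) (measure_iUnion_le _)
    rw [hμprob.measure_univ] at h2
    simp only [hal, tsum_zero] at h2
    exact (by norm_num : ¬ ((1 : ENNReal) ≤ 0)) h2
  obtain ⟨⟨q₀, n₀⟩, hq₀⟩ := hFpos
  let C' : Set G := T ^ (n₀ + 1) * {(rep q₀ : G)}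
  have hC'comp : IsCompact C' := (hTpow_comp n₀).mul isCompact_singleton
  let K' : Set (G ⧸ Hsub) := QuotientGroup.mk '' C'
  have hK'comp : IsCompact K' := hC'comp.image QuotientGroup.continuous_mk
  haveI hT2 : T2Space (G ⧸ Hsub) := cosetSpace_t2 Hsub hHcl
  have hK'meas : MeasurableSet K' := hK'comp.isClosed.measurableSet
  have hK'pos : μ K' ≠ 0 := hq₀
  -- main step: L is covered by compactly many H-cosets
  have hBex : ∃ B : Set G, IsCompact B ∧ (L : Set G) ⊆ B * (Hsub : Set G) := by
    by_contra hno
    push_neg at hno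
    set E : Set G := C'⁻¹ * C' with hE
    have hEcomp : IsCompact E := hC'comp.inv.mul hC'comp
    have hstep : ∀ (k : ℕ) (zs : ℕ → ↥Z), ∃ z : ↥Z,
        ∀ i < k, (z : G) ∉ E * {(zs i : G)} * (Hsub : Set G) := by
      intro k zs
      by_contra hall
      push_neg at hall
      set B : Set G := ⋃ i ∈ Finset.range k, E * {(zs i : G)} with hB
      have hBcomp : IsCompact B :=
        (Finset.range k).finite_toSet.isCompact_biUnion
          fun i _ => hEcomp.mul isCompact_singleton
      refine hno B hBcomp ?_
      have hZHsub : (ZH : Set G) ⊆ B * (Hsub : Set G) := by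
        rintro _ ⟨z, hz, h, hh, rfl⟩
        obtain ⟨i, hik, hzmem⟩ := hall ⟨z, hz⟩
        obtain ⟨u, hu, h', hh', huh⟩ := hzmem
        refine ⟨u, Set.mem_biUnion (Finset.mem_range.2 hik) hu,
          h' * h, Hsub.mul_mem hh' hh, ?_⟩
        have huh' : u * h' = z := huh
        show u * (h' * h) = z * h
        rw [← mul_assoc, huh']
      have hclosed : IsClosed (B * (Hsub : Set G)) := hHcl.mul_left_of_isCompact hBcomp
      intro x hx
      have hx2 : x ∈ closure (ZH : Set G) := by
        rwa [show (L : Set G) = closure (ZH : Set G) from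
          Subgroup.topologicalClosure_coe] at hx
      exact closure_minimal hZHsub hclosed hx2
    choose pick hpick using hstep
    let p : ℕ → (ℕ → ↥Z) := fun k =>
      Nat.rec (fun _ => 1) (fun n pn => fun i => if i = n then pick n pn else pn i) k
    have hpsucc : ∀ n : ℕ,
        p (n + 1) = fun i => if i = n then pick n (p n) else p n i := fun n => rfl
    let zs : ℕ → ↥Z := fun n => p (n + 1) n
    have hzseq : ∀ n, zs n = pick n (p n) := by
      intro n
      show p (n + 1) n = _
      rw [hpsucc]
      simp
    have hstable : ∀ i m, i < m → p m i = zs i := by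
      intro i m
      induction m with
      | zero => intro h2; exact absurd h2 (Nat.not_lt_zero i)
      | succ m ih =>
        intro him
        rw [hpsucc]
        by_cases hi : i = m
        · subst hi
          simp only [if_pos rfl]
          exact (hzseq i).symm
        · have h2 : i < m := by omega
          simp only [if_neg hi]
          exact ih h2
    have hsep : ∀ n i, i < n → ((zs n : G)) ∉ E * {(zs i : G)} * (Hsub : Set G) := by
      intro n i hin
      have h3 := hpick n (p n) i hin
      rwa [hstable i n hin, ← hzseq n] at h3
    let Sn : ℕ → Set (G ⧸ Hsub) := fun n => (fun x => ((zs n : G)) • x) '' K'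
    have hSmeas : ∀ n, MeasurableSet (Sn n) := fun n =>
      ((hK'comp.image (continuous_const_smul _)).isClosed).measurableSet
    have hSμ : ∀ n, μ (Sn n) = μ K' := by
      intro n
      have himg : Sn n = (fun x : G ⧸ Hsub => (((zs n : G))⁻¹) • x) ⁻¹' K' := by
        ext x
        constructor
        · rintro ⟨k, hk, rfl⟩
          show ((zs n : G))⁻¹ • ((zs n : G) • k) ∈ K'
          rwa [inv_smul_smul]
        · intro hk
          exact ⟨((zs n : G))⁻¹ • x, hk, smul_inv_smul _ x⟩
      rw [himg, ← Measure.map_apply ((continuous_const_smul _).measurable) hK'meas, hμinv]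
    have haux : ∀ i j, i < j → ∀ x, x ∈ Sn i → x ∈ Sn j → False := by
      intro i j hij x hxi hxj
      obtain ⟨k1, hk1, hx1⟩ := hxi
      obtain ⟨k2, hk2, hx2⟩ := hxj
      obtain ⟨c₁, hc₁, rfl⟩ := hk1
      obtain ⟨c₂, hc₂, rfl⟩ := hk2
      have heq2 : (QuotientGroup.mk ((zs j : G) * c₂) : G ⧸ Hsub)
          = QuotientGroup.mk ((zs i : G) * c₁) := hx2.trans hx1.symm
      have hmemH : ((zs j : G) * c₂)⁻¹ * ((zs i : G) * c₁) ∈ Hsub := QuotientGroup.eq.1 heq2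
      have key2 : ((c₂⁻¹ * c₁) * (zs i : G))
          * (((zs i : G) * c₁)⁻¹ * ((zs j : G) * c₂)) = (zs j : G) := by
        calc ((c₂⁻¹ * c₁) * (zs i : G)) * (((zs i : G) * c₁)⁻¹ * ((zs j : G) * c₂))
            = (c₂⁻¹ * (c₁ * (zs i : G) * c₁⁻¹)) * (((zs i : G))⁻¹ * ((zs j : G) * c₂)) := by
              group
          _ = (c₂⁻¹ * ((zs i : G) * c₁ * c₁⁻¹)) * (((zs i : G))⁻¹ * ((zs j : G) * c₂)) := by
              rw [hcomm _ (zs i).2 c₁]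
          _ = (c₂⁻¹ * (zs j : G)) * c₂ := by group
          _ = ((zs j : G) * c₂⁻¹) * c₂ := by rw [hcomm _ (zs j).2 c₂⁻¹]
          _ = (zs j : G) := by group
      refine hsep j i hij ⟨(c₂⁻¹ * c₁) * (zs i : G),
        ⟨c₂⁻¹ * c₁, Set.mul_mem_mul (Set.inv_mem_inv.2 hc₂) hc₁, (zs i : G), rfl, rfl⟩,
        ((zs i : G) * c₁)⁻¹ * ((zs j : G) * c₂), ?_, key2⟩
      have h5 : (((zs j : G) * c₂)⁻¹ * ((zs i : G) * c₁))⁻¹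
          = ((zs i : G) * c₁)⁻¹ * ((zs j : G) * c₂) := by group
      rw [← h5]
      exact Hsub.inv_mem hmemH
    have hSdisj : Pairwise (Function.onFun Disjoint Sn) := by
      intro i j hij
      rcases lt_or_gt_of_ne hij with h | h
      · exact Set.disjoint_left.2 fun x hx hx' => haux i j h x hx hx'
      · exact Set.disjoint_left.2 fun x hx hx' => haux j i h x hx' hx
    have h1 : μ (⋃ n, Sn n) = ∑' n, μ (Sn n) := measure_iUnion hSdisj hSmeas
    have h3 : μ (⋃ n, Sn n) ≤ 1 := by
      rw [← hμprob.measure_univ]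
      exact measure_mono (Set.subset_univ _)
    rw [h1, tsum_congr hSμ, ENNReal.tsum_const_eq_top_of_ne_zero hK'pos] at h3
    exact (by norm_num : ¬ ((⊤ : ENNReal) ≤ 1)) h3
  obtain ⟨B, hBcomp, hBL⟩ := hBex
  show IsCompact (Set.univ : Set (G ⧸ Hsub))
  have hsub2 : (Set.univ : Set (G ⧸ Hsub)) ⊆ QuotientGroup.mk '' (C * B) := by
    intro x _
    induction x using Quotient.inductionOn' with
    | h g =>
    obtain ⟨c, hcC, hcl⟩ := hCL g
    have hmem : c⁻¹ * g ∈ B * (Hsub : Set G) := hBL hcl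
    obtain ⟨b, hb, h, hh, hbh⟩ := hmem
    refine ⟨c * b, Set.mul_mem_mul hcC hb, ?_⟩
    have hg : g = (c * b) * h := by
      calc g = c * (c⁻¹ * g) := by group
        _ = c * (b * h) := by rw [← hbh]
        _ = (c * b) * h := by group
    show (QuotientGroup.mk (c * b) : G ⧸ Hsub) = Quotient.mk'' g
    have h4 : (Quotient.mk'' g : G ⧸ Hsub) = QuotientGroup.mk ((c * b) * h) := by rw [← hg]
    rw [h4]
    exact (QuotientGroup.mk_mul_of_mem _ hh).symm
  exact IsCompact.of_isClosed_subset
    ((hCcomp.mul hBcomp).image QuotientGroup.continuous_mk) isClosed_univ hsub2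
end

section
/- Let G = G₁ × G₂ be the direct product of two locally compact groups, each having property (M). If G₁ is totally disconnected, then G has property (M). -/
open MeasureTheory Set Pointwise
section VanDantzig

variable {G : Type*} [Group G] [TopologicalSpace G] [IsTopologicalGroup G]

/-- van Dantzig: a locally compact totally disconnected group has a compact open subgroup. -/
lemma aux_vanDantzig [LocallyCompactSpace G] [T2Space G] [TotallyDisconnectedSpace G] :
    ∃ U : Subgroup G, IsOpen (U : Set G) ∧ IsCompact (U : Set G) := by
  -- get a compact neighborhood of 1
  obtain ⟨K, hKc, hK1⟩ := exists_compact_mem_nhds (1 : G)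
  -- get a clopen neighborhood of 1 inside the interior of K
  have h1 : (1 : G) ∈ interior K := mem_interior_iff_mem_nhds.2 hK1
  obtain ⟨V, hV, h1V, hVK⟩ :=
    (loc_compact_Haus_tot_disc_of_zero_dim (H := G)).mem_nhds_iff.1
      (isOpen_interior.mem_nhds h1)
  have hVcomp : IsCompact V := hKc.of_isClosed_subset hV.1 (hVK.trans interior_subset)
  -- find a symmetric open neighborhood W of 1 with W * V ⊆ V
  obtain ⟨W₀, hW₀, hW₀V⟩ := compact_open_separated_mul_left hVcomp hV.2 (Subset.refl V)
  obtain ⟨W₁, hW₁sub, hW₁o, h1W₁⟩ := mem_nhds_iff.1 hW₀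
  set W : Set G := W₁ ∩ W₁⁻¹ with hWdef
  have hWo : IsOpen W := hW₁o.inter hW₁o.inv
  have h1W : (1 : G) ∈ W := ⟨h1W₁, by simpa using h1W₁⟩
  have hWsymm : ∀ x ∈ W, x⁻¹ ∈ W := by
    rintro x ⟨hx₁, hx₂⟩
    exact ⟨by simpa using hx₂, by simpa using hx₁⟩
  have hWV : ∀ x ∈ W, ∀ v ∈ V, x * v ∈ V := by
    intro x hx v hv
    exact hW₀V (Set.mul_mem_mul (hW₁sub hx.1) hv)
  refine ⟨Subgroup.closure W, ?_, ?_⟩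
  · -- open
    apply Subgroup.isOpen_of_mem_nhds
    exact Filter.mem_of_superset (hWo.mem_nhds h1W) Subgroup.subset_closure
  · -- compact: closed subset of V
    have hsub : (Subgroup.closure W : Set G) ⊆ V := by
      intro x hx
      have key : ∀ v ∈ V, x * v ∈ V ∧ x⁻¹ * v ∈ V := by
        refine Subgroup.closure_induction
          (p := fun g _ => ∀ v ∈ V, g * v ∈ V ∧ g⁻¹ * v ∈ V) ?_ ?_ ?_ ?_ hx
        · intro y hy v hv
          exact ⟨hWV y hy v hv, hWV _ (hWsymm y hy) v hv⟩
        · intro v hv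
          constructor <;> simpa using hv
        · intro a b _ _ ha hb v hv
          constructor
          · have := (ha (b * v) (hb v hv).1).1; rwa [← mul_assoc] at this
          · have := (hb (a⁻¹ * v) (ha v hv).2).2
            rw [mul_inv_rev]
            rwa [← mul_assoc] at this
        · intro a _ ha v hv
          exact ⟨(ha v hv).2, by simpa using (ha v hv).1⟩
      simpa using (key 1 h1V).1
    have hclosed : IsClosed (Subgroup.closure W : Set G) := by
      apply Subgroup.isClosed_of_isOpen
      apply Subgroup.isOpen_of_mem_nhds
      exact Filter.mem_of_superset (hWo.mem_nhds h1W) Subgroup.subset_closure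
    exact hVcomp.of_isClosed_subset hclosed hsub

end VanDantzig

section Lift

variable {G : Type*} [Group G] [TopologicalSpace G] [IsTopologicalGroup G]

/-- Lift a compact quotient to a compact set of representatives. -/
lemma aux_lift_compact [LocallyCompactSpace G] (K : Subgroup G)
    (h : IsCompact (Set.univ : Set (G ⧸ K))) :
    ∃ C : Set G, IsCompact C ∧ ∀ g : G, ∃ c ∈ C, c⁻¹ * g ∈ K := by
  have hcover : (Set.univ : Set (G ⧸ K)) ⊆
      ⋃ g : G, (QuotientGroup.mk '' interior (Classical.choose (exists_compact_mem_nhds g))) := by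
    intro x _
    induction x using QuotientGroup.induction_on with
    | H g =>
      refine Set.mem_iUnion.2 ⟨g, ⟨g, ?_, rfl⟩⟩
      exact mem_interior_iff_mem_nhds.2 (Classical.choose_spec (exists_compact_mem_nhds g)).2
  obtain ⟨s, hs⟩ := h.elim_finite_subcover _
    (fun g => QuotientGroup.isOpenMap_coe _ isOpen_interior) hcover
  refine ⟨⋃ g ∈ s, Classical.choose (exists_compact_mem_nhds g), ?_, ?_⟩
  · exact s.isCompact_biUnion (fun g _ => (Classical.choose_spec (exists_compact_mem_nhds g)).1)
  · intro g
    obtain ⟨t, hts, c, hc, hmk⟩ : ∃ t ∈ s, ∃ c ∈ interior (Classical.choose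
        (exists_compact_mem_nhds t)), (QuotientGroup.mk c : G ⧸ K) = QuotientGroup.mk g := by
      have := hs (Set.mem_univ (QuotientGroup.mk g : G ⧸ K))
      simp only [Set.mem_iUnion, Set.mem_image] at this
      obtain ⟨t, hts, c, hc, hmk⟩ := this
      exact ⟨t, hts, c, hc, hmk⟩
    refine ⟨c, Set.mem_biUnion hts (interior_subset hc), ?_⟩
    exact (QuotientGroup.eq ).1 hmk

end Lift
section Push

variable {G : Type*} [Group G] [TopologicalSpace G] [IsTopologicalGroup G]
variable {Q : Type*} [Group Q] [TopologicalSpace Q] [IsTopologicalGroup Q]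

lemma aux_pushforward (f : G →* Q) (hf : Continuous f) (hsurj : Function.Surjective f)
    (H : Subgroup G) (K : Subgroup Q) (hHK : ∀ g ∈ H, f g ∈ K)
    (hcov : HasFiniteCovolume H) : HasFiniteCovolume K := by
  letI : MeasurableSpace (G ⧸ H) := borel (G ⧸ H)
  haveI : BorelSpace (G ⧸ H) := ⟨rfl⟩
  letI : MeasurableSpace (Q ⧸ K) := borel (Q ⧸ K)
  haveI : BorelSpace (Q ⧸ K) := ⟨rfl⟩
  obtain ⟨μ, hprob, hinv⟩ := hcov
  set φ : G ⧸ H → Q ⧸ K := fun x => Quotient.liftOn' x (fun a => QuotientGroup.mk (f a))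
    (by
      intro a b hab
      have h' : a⁻¹ * b ∈ H := QuotientGroup.leftRel_apply.1 hab
      apply Quotient.sound'
      apply QuotientGroup.leftRel_apply.2
      have := hHK _ h'
      simpa using this) with hφdef
  have hφmk : ∀ a : G, φ (QuotientGroup.mk a) = QuotientGroup.mk (f a) := fun a => rfl
  have hφc : Continuous φ := by
    apply QuotientGroup.isOpenQuotientMap_mk.continuous_comp_iff.1
    show Continuous fun a : G => (QuotientGroup.mk (f a) : Q ⧸ K)
    exact QuotientGroup.continuous_mk.comp hf
  have hφm : Measurable φ := hφc.measurable
  refine ⟨Measure.map φ μ, Measure.isProbabilityMeasure_map hφm.aemeasurable, ?_⟩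
  intro q
  obtain ⟨g, rfl⟩ := hsurj q
  have hs : Measurable (fun x : Q ⧸ K => f g • x) := (continuous_const_smul _).measurable
  have hs' : Measurable fun x : G ⧸ H => g • x := (continuous_const_smul _).measurable
  rw [Measure.map_map hs hφm]
  have hcomm : ((fun x : Q ⧸ K => f g • x) ∘ φ) = φ ∘ (fun x : G ⧸ H => g • x) := by
    funext x
    induction x using QuotientGroup.induction_on with
    | H a =>
      show f g • (QuotientGroup.mk (f a) : Q ⧸ K) = φ (g • (QuotientGroup.mk a : G ⧸ H))
      rw [MulAction.Quotient.smul_mk, MulAction.Quotient.smul_mk, smul_eq_mul, smul_eq_mul,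
        hφmk, map_mul]
  rw [hcomm, ← Measure.map_map hφm hs', hinv g]

end Push

section Slab

variable {G : Type*} [Group G] [TopologicalSpace G] [IsTopologicalGroup G]

/-- The double coset `B * g * Hc`. -/
def slab (B : Set G) (Hc : Set G) (g : G) : Set G :=
  {a | ∃ w ∈ B, ∃ h ∈ Hc, a = w * g * h}

lemma mem_slab {B Hc : Set G} {g a : G} :
    a ∈ slab B Hc g ↔ ∃ w ∈ B, ∃ h ∈ Hc, a = w * g * h := Iff.rfl

lemma slab_mono {B B' Hc : Set G} (h : B ⊆ B') (g : G) : slab B Hc g ⊆ slab B' Hc g := by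
  rintro a ⟨w, hw, hh, hhH, rfl⟩
  exact ⟨w, h hw, hh, hhH, rfl⟩

lemma slab_open {B Hc : Set G} (hB : IsOpen B) (g : G) : IsOpen (slab B Hc g) := by
  have : slab B Hc g = ⋃ h : Hc, (fun w => w * (g * (h : G))) '' B := by
    ext a
    simp only [slab, Set.mem_iUnion, Set.mem_image, Set.mem_setOf_eq]
    constructor
    · rintro ⟨w, hw, h, hh, rfl⟩
      exact ⟨⟨h, hh⟩, w, hw, by group⟩
    · rintro ⟨⟨h, hh⟩, w, hw, rfl⟩
      exact ⟨w, hw, h, hh, by group⟩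
  rw [this]
  exact isOpen_iUnion fun h => (Homeomorph.mulRight (g * (h : G))).isOpenMap B hB

lemma mem_slab_self {B Hc : Set G} (hB : (1 : G) ∈ B) (hH : (1 : G) ∈ Hc) (g : G) :
    g ∈ slab B Hc g :=
  ⟨1, hB, 1, hH, by group⟩

lemma slab_mul_mem {B : Set G} (H : Subgroup G) {g a h : G} (ha : a ∈ slab B (H : Set G) g)
    (hh : h ∈ H) : a * h ∈ slab B (H : Set G) g := by
  obtain ⟨w, hw, h', hh', rfl⟩ := ha
  exact ⟨w, hw, h' * h, mul_mem hh' hh, by group⟩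

lemma slab_eq_of_mem (W H : Subgroup G) {g a : G} (ha : a ∈ slab (W : Set G) (H : Set G) g) :
    slab (W : Set G) (H : Set G) a = slab (W : Set G) (H : Set G) g := by
  obtain ⟨w, hw, h, hh, rfl⟩ := ha
  ext b
  constructor
  · rintro ⟨w', hw', h', hh', rfl⟩
    exact ⟨w' * w, mul_mem hw' hw, h * h', mul_mem hh hh', by group⟩
  · rintro ⟨w', hw', h', hh', rfl⟩
    exact ⟨w' * w⁻¹, mul_mem hw' (inv_mem hw), h⁻¹ * h', mul_mem (inv_mem hh) hh', by group⟩

lemma slab_self (W H : Subgroup G) (g : G) : g ∈ slab (W : Set G) (H : Set G) g :=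
  mem_slab_self (one_mem W) (one_mem H) g

lemma slab_eq_or_disjoint (W H : Subgroup G) {g g' : G}
    (h : (slab (W : Set G) (H : Set G) g ∩ slab (W : Set G) (H : Set G) g').Nonempty) :
    slab (W : Set G) (H : Set G) g = slab (W : Set G) (H : Set G) g' := by
  obtain ⟨a, ha, ha'⟩ := h
  rw [← slab_eq_of_mem W H ha, slab_eq_of_mem W H ha']

lemma slab_isClopen (W H : Subgroup G) (hW : IsOpen (W : Set G)) (g : G) :
    IsClopen (slab (W : Set G) (H : Set G) g) := by
  constructor
  · rw [← isOpen_compl_iff]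
    have : (slab (W : Set G) (H : Set G) g)ᶜ =
        ⋃ a : {a : G // a ∉ slab (W : Set G) (H : Set G) g},
          slab (W : Set G) (H : Set G) (a : G) := by
      ext b
      simp only [Set.mem_compl_iff, Set.mem_iUnion]
      constructor
      · intro hb
        exact ⟨⟨b, hb⟩, slab_self W H b⟩
      · rintro ⟨⟨a, ha⟩, hb⟩ hbg
        refine ha ?_
        have h1 := slab_eq_of_mem W H (g := a) hb
        have h2 := slab_eq_of_mem W H (g := g) hbg
        have h3 := slab_self W H a
        rw [← h1, h2] at h3
        exact h3
    rw [this]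
    exact isOpen_iUnion fun a => slab_open hW _
  · exact slab_open hW g

lemma mem_image_mk_slab {B : Set G} (H : Subgroup G) {g a : G} :
    (QuotientGroup.mk a : G ⧸ H) ∈ QuotientGroup.mk '' slab B (H : Set G) g ↔
      a ∈ slab B (H : Set G) g := by
  constructor
  · rintro ⟨b, hb, hba⟩
    have : b⁻¹ * a ∈ H := QuotientGroup.eq.1 hba
    obtain ⟨w, hw, h, hh, rfl⟩ := hb
    refine ⟨w, hw, h * ((w * g * h)⁻¹ * a), mul_mem hh this, by group⟩
  · intro ha
    exact ⟨a, ha, rfl⟩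

end Slab


set_option maxHeartbeats 1000000 in
/-- If `G₁` and `G₂` are locally compact groups with property (M) and `G₁` is totally
disconnected, then `G₁ × G₂` has property (M). -/
theorem propertyM_prod
    {G₁ G₂ : Type*} [Group G₁] [TopologicalSpace G₁] [IsTopologicalGroup G₁]
    [LocallyCompactSpace G₁] [T2Space G₁]
    [Group G₂] [TopologicalSpace G₂] [IsTopologicalGroup G₂]
    [LocallyCompactSpace G₂] [T2Space G₂]
    [TotallyDisconnectedSpace G₁]
    (h₁ : PropertyM G₁) (h₂ : PropertyM G₂) :
    PropertyM (G₁ × G₂) := by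
  classical
  intro H Hclosed hcov
  letI : MeasurableSpace ((G₁ × G₂) ⧸ H) := borel ((G₁ × G₂) ⧸ H)
  haveI : BorelSpace ((G₁ × G₂) ⧸ H) := ⟨rfl⟩
  obtain ⟨U, hUo, hUc⟩ := aux_vanDantzig (G := G₁)
  set P : Subgroup G₁ := H.map (MonoidHom.fst G₁ G₂) with hPdef
  set K₁ : Subgroup G₁ := P.topologicalClosure with hK₁def
  have hK₁cov : HasFiniteCovolume K₁ :=
    aux_pushforward (MonoidHom.fst G₁ G₂) continuous_fst (fun x => ⟨(x, 1), rfl⟩) H K₁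
      (fun g hg => Subgroup.le_topologicalClosure P ⟨g, hg, rfl⟩) hcov
  have hK₁cpt : IsCompact (Set.univ : Set (G₁ ⧸ K₁)) :=
    h₁ K₁ (Subgroup.isClosed_topologicalClosure P) hK₁cov
  obtain ⟨μ, hprob, hinv⟩ := hcov
  have hsmulm : ∀ c : G₁ × G₂, Measurable (fun x : (G₁ × G₂) ⧸ H => c • x) :=
    fun c => (continuous_const_smul c).measurable
  have hinvset : ∀ (c : G₁ × G₂) (E : Set ((G₁ × G₂) ⧸ H)), MeasurableSet E →
      μ ((fun x => c • x) ⁻¹' E) = μ E := by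
    intro c E hE
    conv_rhs => rw [← hinv c]
    rw [Measure.map_apply (hsmulm c) hE]
  -- Step C : finitely many `U`-`P` double cosets
  have hcov1 : (Set.univ : Set (G₁ ⧸ K₁)) ⊆
      ⋃ c : G₁, QuotientGroup.mk '' ((fun u => u * c) '' (U : Set G₁)) := by
    intro x _
    induction x using QuotientGroup.induction_on with
    | H g => exact Set.mem_iUnion.2 ⟨g, ⟨g, ⟨1, one_mem U, by simp⟩, rfl⟩⟩
  obtain ⟨T, hT⟩ := hK₁cpt.elim_finite_subcover
    (fun c : G₁ => QuotientGroup.mk '' ((fun u => u * c) '' (U : Set G₁)))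
    (fun c => QuotientGroup.isOpenMap_coe _ ((Homeomorph.mulRight c).isOpenMap _ hUo)) hcov1
  have stepC : ∀ a₁ : G₁, ∃ t ∈ T, ∃ u ∈ (U : Set G₁), ∃ p ∈ (P : Set G₁), a₁ = u * t * p := by
    intro a₁
    have hmem := hT (Set.mem_univ (QuotientGroup.mk a₁ : G₁ ⧸ K₁))
    simp only [Set.mem_iUnion, Set.mem_image] at hmem
    obtain ⟨t, ht, u', ⟨u, hu, rfl⟩, hmk⟩ : ∃ t, t ∈ T ∧ ∃ u', (∃ u ∈ (U : Set G₁), u * t = u') ∧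
        (QuotientGroup.mk u' : G₁ ⧸ K₁) = QuotientGroup.mk a₁ := by
      obtain ⟨t, ht, u', hu', hmk⟩ := hmem
      exact ⟨t, ht, u', hu', hmk⟩
    set k := (u * t)⁻¹ * a₁ with hkdef
    have hkK : k ∈ K₁ := QuotientGroup.eq.1 hmk
    have hkcl : k ∈ closure (P : Set G₁) := by
      rw [← Subgroup.topologicalClosure_coe]; exact hkK
    have h1B : (1 : G₁) ∈ (fun x => t⁻¹ * x * t) '' (U : Set G₁) := ⟨1, one_mem U, by group⟩
    have hNo : IsOpen (slab ((fun x => t⁻¹ * x * t) '' (U : Set G₁)) (P : Set G₁) k) :=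
      slab_open (((Homeomorph.mulLeft t⁻¹).trans (Homeomorph.mulRight t)).isOpenMap _ hUo) k
    have hkN : k ∈ slab ((fun x => t⁻¹ * x * t) '' (U : Set G₁)) (P : Set G₁) k :=
      mem_slab_self h1B (one_mem P) k
    obtain ⟨p, hpN, hpP⟩ := mem_closure_iff.1 hkcl _ hNo hkN
    obtain ⟨-, ⟨u', hu', rfl⟩, p', hp', hpeq⟩ := hpN
    refine ⟨t, ht, u * u'⁻¹, mul_mem hu (inv_mem hu'), p * p'⁻¹, mul_mem hpP (inv_mem hp'), ?_⟩
    have ha₁ : a₁ = u * t * k := by rw [hkdef]; group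
    rw [ha₁, hpeq]
    group
  -- the compact open subgroup of the product
  set Wsub : Subgroup (G₁ × G₂) := U.prod ⊤ with hWdef
  have hWcar : (Wsub : Set (G₁ × G₂)) = (U : Set G₁) ×ˢ (Set.univ : Set G₂) :=
    Subgroup.coe_prod U ⊤
  have hWopen : IsOpen (Wsub : Set (G₁ × G₂)) := by
    rw [hWcar]; exact hUo.prod isOpen_univ
  have hWmem : ∀ w : G₁ × G₂, w ∈ (Wsub : Set (G₁ × G₂)) ↔ w.1 ∈ U := by
    intro w; rw [hWcar]; simp [Set.mem_prod]
  -- positivity of every orbit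
  have pos : ∀ g g₀ : G₁ × G₂,
      μ (QuotientGroup.mk '' slab (Wsub : Set (G₁ × G₂)) (H : Set (G₁ × G₂)) g₀) ≠ 0 →
      μ (QuotientGroup.mk '' slab (Wsub : Set (G₁ × G₂)) (H : Set (G₁ × G₂)) g) ≠ 0 := by
    intro g g₀ hg₀
    set d : G₁ := g.1 * g₀.1⁻¹ with hd
    set τ : G₁ × G₂ := g * g₀⁻¹ with hτ
    set V₂ : Set G₁ := (fun x => d * x * d⁻¹) '' (U : Set G₁) with hV₂
    have hV₂o : IsOpen V₂ :=
      ((Homeomorph.mulLeft d).trans (Homeomorph.mulRight d⁻¹)).isOpenMap _ hUo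
    have hV₂c : IsCompact V₂ :=
      hUc.image ((continuous_const.mul continuous_id).mul continuous_const)
    have h1V₂ : (1 : G₁) ∈ V₂ := ⟨1, one_mem U, by group⟩
    have hτ1 : τ.1 = d := by rw [hτ, hd]; rfl
    have htb : ∀ a : G₁ × G₂, τ * a ∈ slab (V₂ ×ˢ (Set.univ : Set G₂)) (H : Set (G₁ × G₂)) g ↔
        a ∈ slab (Wsub : Set (G₁ × G₂)) (H : Set (G₁ × G₂)) g₀ := by
      intro a
      constructor
      · rintro ⟨w, hw, h, hh, heq⟩
        refine ⟨τ⁻¹ * w * τ, ?_, h, hh, ?_⟩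
        · rw [hWmem]
          obtain ⟨u, hu, hwu⟩ := hw.1
          have h2 : (τ⁻¹ * w * τ).1 = τ.1⁻¹ * w.1 * τ.1 := rfl
          rw [h2, hτ1, ← hwu]
          have h3 : d⁻¹ * (d * u * d⁻¹) * d = u := by group
          rw [h3]; exact hu
        · have h4 : a = τ⁻¹ * (w * g * h) := by rw [← heq]; group
          rw [h4, hτ]; group
      · rintro ⟨w, hw, h, hh, heq⟩
        refine ⟨τ * w * τ⁻¹, ?_, h, hh, ?_⟩
        · refine Set.mem_prod.2 ⟨⟨w.1, (hWmem w).1 hw, ?_⟩, trivial⟩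
          show d * w.1 * d⁻¹ = (τ * w * τ⁻¹).1
          have h5 : (τ * w * τ⁻¹).1 = τ.1 * w.1 * τ.1⁻¹ := rfl
          rw [h5, hτ1]
        · rw [heq, hτ]; group
    have hopen1 : IsOpen (QuotientGroup.mk (s := H) ''
        slab (V₂ ×ˢ (Set.univ : Set G₂)) (H : Set (G₁ × G₂)) g) :=
      QuotientGroup.isOpenMap_coe _ (slab_open (hV₂o.prod isOpen_univ) g)
    have htrans : (fun x : (G₁ × G₂) ⧸ H => τ • x) ⁻¹'
        (QuotientGroup.mk '' slab (V₂ ×ˢ (Set.univ : Set G₂)) (H : Set (G₁ × G₂)) g) =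
        QuotientGroup.mk '' slab (Wsub : Set (G₁ × G₂)) (H : Set (G₁ × G₂)) g₀ := by
      ext x
      induction x using QuotientGroup.induction_on with
      | H a =>
        have hsm : τ • (QuotientGroup.mk a : (G₁ × G₂) ⧸ H) = QuotientGroup.mk (τ * a) := rfl
        rw [Set.mem_preimage, hsm, mem_image_mk_slab, mem_image_mk_slab]
        exact htb a
    have hstep1 : μ (QuotientGroup.mk '' slab (V₂ ×ˢ (Set.univ : Set G₂))
        (H : Set (G₁ × G₂)) g) =
        μ (QuotientGroup.mk '' slab (Wsub : Set (G₁ × G₂)) (H : Set (G₁ × G₂)) g₀) := by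
      have := hinvset τ _ hopen1.measurableSet
      rw [htrans] at this
      exact this.symm
    set Vi : Set G₁ := (U : Set G₁) ∩ V₂ with hVi
    have hVio : IsOpen Vi := hUo.inter hV₂o
    have h1Vi : (1 : G₁) ∈ Vi := ⟨one_mem U, h1V₂⟩
    have hVicov : V₂ ⊆ ⋃ x : G₁, (fun v => x * v) '' Vi := fun v hv =>
      Set.mem_iUnion.2 ⟨v, 1, h1Vi, mul_one v⟩
    obtain ⟨F, hF⟩ := hV₂c.elim_finite_subcover (fun x : G₁ => (fun v => x * v) '' Vi)
      (fun x => (Homeomorph.mulLeft x).isOpenMap _ hVio) hVicov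
    have hopenVi : IsOpen (QuotientGroup.mk (s := H) ''
        slab (Vi ×ˢ (Set.univ : Set G₂)) (H : Set (G₁ × G₂)) g) :=
      QuotientGroup.isOpenMap_coe _ (slab_open (hVio.prod isOpen_univ) g)
    have hsub2 : QuotientGroup.mk '' slab (V₂ ×ˢ (Set.univ : Set G₂)) (H : Set (G₁ × G₂)) g ⊆
        ⋃ x ∈ F, (fun y : (G₁ × G₂) ⧸ H => ((x, (1 : G₂)) : G₁ × G₂) • y) ''
          (QuotientGroup.mk '' slab (Vi ×ˢ (Set.univ : Set G₂)) (H : Set (G₁ × G₂)) g) := by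
      rintro _ ⟨a, ⟨w, hw, h, hh, rfl⟩, rfl⟩
      have hcov2 := hF hw.1
      simp only [Set.mem_iUnion, Set.mem_image] at hcov2
      obtain ⟨x, hxF, v, hv, hxv⟩ := hcov2
      refine Set.mem_biUnion hxF ⟨QuotientGroup.mk ((v, w.2) * g * h),
        ⟨(v, w.2) * g * h, ⟨(v, w.2), ⟨hv, trivial⟩, h, hh, rfl⟩, rfl⟩, ?_⟩
      show QuotientGroup.mk (((x, (1 : G₂)) : G₁ × G₂) * ((v, w.2) * g * h)) =
        (QuotientGroup.mk (w * g * h) : (G₁ × G₂) ⧸ H)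
      have : ((x, (1 : G₂)) : G₁ × G₂) * ((v, w.2) * g * h) = w * g * h := by
        rw [← mul_assoc]
        congr 1
        rw [← mul_assoc]
        congr 1
        ext
        · exact hxv
        · exact one_mul w.2
      rw [this]
    have hterm : ∀ x : G₁, μ ((fun y : (G₁ × G₂) ⧸ H => ((x, (1 : G₂)) : G₁ × G₂) • y) ''
        (QuotientGroup.mk '' slab (Vi ×ˢ (Set.univ : Set G₂)) (H : Set (G₁ × G₂)) g)) =
        μ (QuotientGroup.mk '' slab (Vi ×ˢ (Set.univ : Set G₂)) (H : Set (G₁ × G₂)) g) := by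
      intro x
      have himg : (fun y : (G₁ × G₂) ⧸ H => ((x, (1 : G₂)) : G₁ × G₂) • y) ''
          (QuotientGroup.mk '' slab (Vi ×ˢ (Set.univ : Set G₂)) (H : Set (G₁ × G₂)) g) =
          (fun y : (G₁ × G₂) ⧸ H => (((x, (1 : G₂)) : G₁ × G₂))⁻¹ • y) ⁻¹'
          (QuotientGroup.mk '' slab (Vi ×ˢ (Set.univ : Set G₂)) (H : Set (G₁ × G₂)) g) := by
        ext y
        simp only [Set.mem_image, Set.mem_preimage]
        constructor
        · rintro ⟨z, hz, rfl⟩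
          rwa [inv_smul_smul]
        · intro hy
          exact ⟨_, hy, smul_inv_smul _ y⟩
      rw [himg, hinvset _ _ hopenVi.measurableSet]
    intro hzero
    have hVisub : μ (QuotientGroup.mk '' slab (Vi ×ˢ (Set.univ : Set G₂))
        (H : Set (G₁ × G₂)) g) = 0 := by
      refine measure_mono_null (Set.image_mono (slab_mono ?_ g)) hzero
      rw [hWcar]
      exact Set.prod_mono Set.inter_subset_left (Set.Subset.refl _)
    have hzero2 : μ (QuotientGroup.mk '' slab (V₂ ×ˢ (Set.univ : Set G₂))
        (H : Set (G₁ × G₂)) g) = 0 := by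
      have hle := (measure_mono (μ := μ) hsub2).trans (measure_biUnion_finset_le (μ := μ) F _)
      have hrw : ∀ x ∈ F, μ ((fun y : (G₁ × G₂) ⧸ H => ((x, (1 : G₂)) : G₁ × G₂) • y) ''
          (QuotientGroup.mk '' slab (Vi ×ˢ (Set.univ : Set G₂)) (H : Set (G₁ × G₂)) g)) = 0 :=
        fun x _ => by rw [hterm x, hVisub]
      rw [Finset.sum_congr rfl hrw, Finset.sum_const, smul_zero] at hle
      exact le_antisymm hle (zero_le)
    rw [hstep1] at hzero2
    exact hg₀ hzero2
  -- compactness of every positive orbit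
  have key : ∀ g : G₁ × G₂,
      μ (QuotientGroup.mk '' slab (Wsub : Set (G₁ × G₂)) (H : Set (G₁ × G₂)) g) ≠ 0 →
      IsCompact (QuotientGroup.mk (s := H) '' slab (Wsub : Set (G₁ × G₂)) (H : Set (G₁ × G₂)) g) := by
    intro g hgpos
    set Sg : Set (G₁ × G₂) := slab (Wsub : Set (G₁ × G₂)) (H : Set (G₁ × G₂)) g with hSgdef
    set Og : Set ((G₁ × G₂) ⧸ H) := QuotientGroup.mk (s := H) '' Sg with hOgdef
    have hSgclopen : IsClopen Sg := slab_isClopen Wsub H hWopen g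
    -- the stabilizer subgroup and its projection to G₂
    set Stab : Subgroup (G₁ × G₂) := (U.prod ⊤) ⊓ H.map (MulAut.conj g).toMonoidHom with hStabdef
    set R : Subgroup G₂ := Stab.map (MonoidHom.snd G₁ G₂) with hRdef
    have hStabmem : ∀ s : G₁ × G₂, s ∈ Stab ↔ s.1 ∈ U ∧ ∃ h ∈ H, g * h * g⁻¹ = s := by
      intro s
      rw [hStabdef, Subgroup.mem_inf, Subgroup.mem_prod]
      constructor
      · rintro ⟨⟨h1, -⟩, h, hh, hconj⟩
        exact ⟨h1, h, hh, by rw [← hconj]; rfl⟩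
      · rintro ⟨h1, h, hh, hconj⟩
        exact ⟨⟨h1, trivial⟩, h, hh, hconj⟩
    have hRmem : ∀ y : G₂, y ∈ R ↔ ∃ s ∈ Stab, s.2 = y := by
      intro y
      rw [hRdef, Subgroup.mem_map]
      constructor
      · rintro ⟨s, hs, rfl⟩; exact ⟨s, hs, rfl⟩
      · rintro ⟨s, hs, rfl⟩; exact ⟨s, hs, rfl⟩
    have hStabclosed : IsClosed (Stab : Set (G₁ × G₂)) := by
      have hset : (Stab : Set (G₁ × G₂)) = ((U : Set G₁) ×ˢ (Set.univ : Set G₂)) ∩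
          ((fun x : G₁ × G₂ => g⁻¹ * x * g) ⁻¹' (H : Set (G₁ × G₂))) := by
        ext s
        simp only [Set.mem_inter_iff, Set.mem_preimage, Set.mem_prod, SetLike.mem_coe, hStabmem]
        constructor
        · rintro ⟨h1, h, hh, rfl⟩
          refine ⟨⟨h1, trivial⟩, ?_⟩
          have h9 : g⁻¹ * (g * h * g⁻¹) * g = h := by group
          rw [h9]; exact hh
        · rintro ⟨⟨h1, -⟩, h2⟩
          exact ⟨h1, g⁻¹ * s * g, h2, by group⟩
      rw [hset]
      refine (hUc.isClosed.prod isClosed_univ).inter (IsClosed.preimage ?_ Hclosed)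
      exact (continuous_const.mul continuous_id).mul continuous_const
    have hprodR : ((U : Set G₁) ×ˢ (R : Set G₂)) =
        ((U : Set G₁) ×ˢ ({1} : Set G₂)) * (Stab : Set (G₁ × G₂)) := by
      ext p
      constructor
      · rintro ⟨hp1, hp2⟩
        obtain ⟨s, hs, hs2⟩ := (hRmem p.2).1 hp2
        have hs1U : s.1 ∈ U := ((hStabmem s).1 hs).1
        refine ⟨(p.1 * s.1⁻¹, 1), ⟨mul_mem hp1 (inv_mem hs1U), rfl⟩, s, hs, ?_⟩
        ext
        · show p.1 * s.1⁻¹ * s.1 = p.1; group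
        · show 1 * s.2 = p.2; rw [hs2]; group
      · rintro ⟨q, hq, s, hs, rfl⟩
        have hs1U : s.1 ∈ U := ((hStabmem s).1 hs).1
        have hq2 : q.2 = 1 := hq.2
        constructor
        · exact mul_mem hq.1 hs1U
        · show q.2 * s.2 ∈ (R : Set G₂)
          rw [hq2, one_mul]
          exact (hRmem s.2).2 ⟨s, hs, rfl⟩
    have hRclosed : IsClosed (R : Set G₂) := by
      have hTclosed : IsClosed (((U : Set G₁) ×ˢ ({1} : Set G₂)) * (Stab : Set (G₁ × G₂))) :=
        IsClosed.mul_left_of_isCompact hStabclosed (hUc.prod isCompact_singleton)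
      have hpre : (R : Set G₂) = (fun y : G₂ => ((1 : G₁), y)) ⁻¹'
          ((U : Set G₁) ×ˢ (R : Set G₂)) := by
        ext y
        simp [Set.mem_prod, one_mem U]
      rw [hpre, hprodR]
      exact hTclosed.preimage (continuous_const.prodMk continuous_id)
    -- well-definedness of the projection map on the orbit
    have wd : ∀ w w' : G₁ × G₂, w.1 ∈ U → w'.1 ∈ U → ∀ h ∈ H, ∀ h' ∈ H,
        w * g * h = w' * g * h' →
        (QuotientGroup.mk w.2 : G₂ ⧸ R) = QuotientGroup.mk w'.2 := by
      intro w w' hw hw' h hh h' hh' heq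
      have hcalc : w' * (g * (h' * h⁻¹) * g⁻¹) * (g * h) = w * (g * h) := by
        calc w' * (g * (h' * h⁻¹) * g⁻¹) * (g * h) = w' * g * h' := by group
          _ = w * g * h := heq.symm
          _ = w * (g * h) := by group
      have hw'w : w' * (g * (h' * h⁻¹) * g⁻¹) = w := mul_right_cancel hcalc
      have hs : w'⁻¹ * w ∈ Stab := by
        rw [hStabmem]
        constructor
        · show w'.1⁻¹ * w.1 ∈ U
          exact mul_mem (inv_mem hw') hw
        · refine ⟨h' * h⁻¹, mul_mem hh' (inv_mem hh), ?_⟩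
          rw [← hw'w]; group
      have hsinv : w⁻¹ * w' ∈ Stab := by
        have := inv_mem hs
        rwa [mul_inv_rev, inv_inv] at this
      refine QuotientGroup.eq.2 ?_
      exact (hRmem _).2 ⟨w⁻¹ * w', hsinv, rfl⟩
    letI : MeasurableSpace (G₂ ⧸ R) := borel (G₂ ⧸ R)
    haveI : BorelSpace (G₂ ⧸ R) := ⟨rfl⟩
    set ψ : G₁ × G₂ → G₂ ⧸ R := fun a =>
      if ha : a ∈ Sg then QuotientGroup.mk ((mem_slab.1 ha).choose.2)
      else QuotientGroup.mk 1 with hψdef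
    have hψeq : ∀ w : G₁ × G₂, w.1 ∈ U → ∀ h, h ∈ H → ψ (w * g * h) = QuotientGroup.mk w.2 := by
      intro w hw h hh
      have hmem : w * g * h ∈ Sg := ⟨w, (hWmem w).2 hw, h, hh, rfl⟩
      have hspec := (mem_slab.1 hmem).choose_spec
      obtain ⟨hcW, h', hh', heq⟩ := hspec
      rw [hψdef]
      simp only [dif_pos hmem]
      exact wd _ w ((hWmem _).1 hcW) hw h' hh' h hh heq.symm
    have hψcont : Continuous ψ := by
      rw [continuous_iff_continuousAt]
      intro a₀
      by_cases ha₀ : a₀ ∈ Sg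
      · obtain ⟨w₀, hw₀, h₀, hh₀, rfl⟩ := mem_slab.1 ha₀
        have hNo : IsOpen ((fun w : G₁ × G₂ => w * (g * h₀)) '' (Wsub : Set (G₁ × G₂))) :=
          (Homeomorph.mulRight (g * h₀)).isOpenMap _ hWopen
        have haN : w₀ * g * h₀ ∈ (fun w : G₁ × G₂ => w * (g * h₀)) '' (Wsub : Set (G₁ × G₂)) :=
          ⟨w₀, hw₀, by group⟩
        refine ContinuousAt.congr (f := fun a : G₁ × G₂ =>
          (QuotientGroup.mk ((a * (g * h₀)⁻¹).2) : G₂ ⧸ R)) ?_ ?_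
        · exact (QuotientGroup.continuous_mk.comp (continuous_snd.comp
            (continuous_id.mul continuous_const))).continuousAt
        · refine Filter.eventuallyEq_of_mem (hNo.mem_nhds haN) ?_
          rintro _ ⟨w, hw, rfl⟩
          have h6 : w * (g * h₀) = w * g * h₀ := by group
          have h7 : w * (g * h₀) * (g * h₀)⁻¹ = w := by group
          show QuotientGroup.mk ((w * (g * h₀) * (g * h₀)⁻¹).2) = ψ (w * (g * h₀))
          rw [h7, h6, hψeq w ((hWmem w).1 hw) h₀ hh₀]
      · refine ContinuousAt.congr
          (f := fun _ : G₁ × G₂ => (QuotientGroup.mk 1 : G₂ ⧸ R)) continuousAt_const ?_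
        refine Filter.eventuallyEq_of_mem (hSgclopen.1.isOpen_compl.mem_nhds ha₀) ?_
        intro a ha
        show (QuotientGroup.mk 1 : G₂ ⧸ R) = ψ a
        rw [hψdef]
        simp only [dif_neg ha]
    have hψresp : ∀ a b : G₁ × G₂, @Setoid.r _ (QuotientGroup.leftRel H) a b → ψ a = ψ b := by
      intro a b hab
      have hH' : a⁻¹ * b ∈ H := QuotientGroup.leftRel_apply.1 hab
      by_cases ha : a ∈ Sg
      · obtain ⟨w, hw, h, hh, heqa⟩ := mem_slab.1 ha
        have hH'' : (w * g * h)⁻¹ * b ∈ H := by rw [← heqa]; exact hH'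
        have hbeq : b = w * g * (h * ((w * g * h)⁻¹ * b)) := by group
        rw [heqa, hψeq w ((hWmem w).1 hw) h hh, hbeq,
          hψeq w ((hWmem w).1 hw) _ (mul_mem hh hH'')]
      · have hb : b ∉ Sg := by
          intro hbS
          apply ha
          have hH'' : b⁻¹ * a ∈ H := by
            have := inv_mem hH'
            rwa [mul_inv_rev, inv_inv] at this
          have := slab_mul_mem H hbS hH''
          rwa [show b * (b⁻¹ * a) = a by group] at this
        rw [hψdef]
        simp only [dif_neg ha, dif_neg hb]
    set φ : ((G₁ × G₂) ⧸ H) → G₂ ⧸ R := fun x => Quotient.liftOn' x ψ hψresp with hφdef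
    have hφmk : ∀ a : G₁ × G₂, φ (QuotientGroup.mk a) = ψ a := fun a => rfl
    have hφcont : Continuous φ :=
      QuotientGroup.isOpenQuotientMap_mk.continuous_comp_iff.1 hψcont
    have hφm : Measurable φ := hφcont.measurable
    have hOgms : MeasurableSet Og :=
      (QuotientGroup.isOpenMap_coe _ (slab_open hWopen g)).measurableSet
    set ρ : Measure ((G₁ × G₂) ⧸ H) := μ.restrict Og with hρdef
    set ν : Measure (G₂ ⧸ R) := (μ Og)⁻¹ • Measure.map φ ρ with hνdef
    have hmapuniv : Measure.map φ ρ Set.univ = μ Og := by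
      rw [Measure.map_apply hφm MeasurableSet.univ, Set.preimage_univ, hρdef,
        Measure.restrict_apply MeasurableSet.univ, Set.univ_inter]
    have hνprob : IsProbabilityMeasure ν := by
      constructor
      rw [hνdef, Measure.smul_apply, hmapuniv, smul_eq_mul,
        ENNReal.inv_mul_cancel hgpos (measure_ne_top μ _)]
    have hνinv : ∀ b : G₂, Measure.map (fun x : G₂ ⧸ R => b • x) ν = ν := by
      intro b
      have hbm : Measurable (fun x : G₂ ⧸ R => b • x) := (continuous_const_smul b).measurable
      have hβm := hsmulm ((1 : G₁), b)
      have hβOg : (fun x : (G₁ × G₂) ⧸ H => ((1 : G₁), b) • x) ⁻¹' Og = Og := by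
        ext x
        induction x using QuotientGroup.induction_on with
        | H a =>
          have hsm : ((1 : G₁), b) • (QuotientGroup.mk a : (G₁ × G₂) ⧸ H) =
              QuotientGroup.mk (((1 : G₁), b) * a) := rfl
          rw [Set.mem_preimage, hsm, hOgdef, hSgdef, mem_image_mk_slab, mem_image_mk_slab]
          constructor
          · rintro ⟨w, hw, h, hh, heq⟩
            refine ⟨((1 : G₁), b)⁻¹ * w, ?_, h, hh, ?_⟩
            · rw [hWmem] at hw ⊢
              simpa using hw
            · have h8 : a = ((1 : G₁), b)⁻¹ * (w * g * h) := by rw [← heq]; group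
              rw [h8]; group
          · rintro ⟨w, hw, h, hh, rfl⟩
            refine ⟨((1 : G₁), b) * w, ?_, h, hh, by group⟩
            rw [hWmem] at hw ⊢
            simpa using hw
      have hβρ : Measure.map (fun x : (G₁ × G₂) ⧸ H => ((1 : G₁), b) • x) ρ = ρ := by
        have hrm := Measure.restrict_map (μ := μ) hβm hOgms
        rw [hinv ((1 : G₁), b), hβOg] at hrm
        rw [hρdef]
        exact hrm.symm
      have hae : (fun x => b • φ x) =ᵐ[ρ]
          (φ ∘ (fun x : (G₁ × G₂) ⧸ H => ((1 : G₁), b) • x)) := by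
        refine Filter.eventuallyEq_of_mem (self_mem_ae_restrict hOgms) ?_
        rintro x hx
        obtain ⟨a, haS, rfl⟩ := hx
        obtain ⟨w, hw, h, hh, rfl⟩ := mem_slab.1 haS
        have h1 : φ (QuotientGroup.mk (w * g * h)) = QuotientGroup.mk w.2 := by
          rw [hφmk]; exact hψeq w ((hWmem w).1 hw) h hh
        have h2 : ((1 : G₁), b) • (QuotientGroup.mk (w * g * h) : (G₁ × G₂) ⧸ H) =
            QuotientGroup.mk ((((1 : G₁), b) * w) * g * h) := by
          show QuotientGroup.mk (((1 : G₁), b) * (w * g * h)) = _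
          congr 1
          group
        show b • φ (QuotientGroup.mk (w * g * h)) =
          φ (((1 : G₁), b) • (QuotientGroup.mk (w * g * h) : (G₁ × G₂) ⧸ H))
        rw [h1, h2, hφmk, hψeq (((1 : G₁), b) * w) (by simpa using (hWmem w).1 hw) h hh]
        rfl
      calc Measure.map (fun x : G₂ ⧸ R => b • x) ν
          = (μ Og)⁻¹ • Measure.map (fun x : G₂ ⧸ R => b • x) (Measure.map φ ρ) := by
            rw [hνdef, Measure.map_smul]
        _ = (μ Og)⁻¹ • Measure.map (fun x => b • φ x) ρ := by
            rw [Measure.map_map hbm hφm]; rfl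
        _ = (μ Og)⁻¹ • Measure.map (φ ∘ (fun x : (G₁ × G₂) ⧸ H => ((1 : G₁), b) • x)) ρ := by
            rw [Measure.map_congr hae]
        _ = (μ Og)⁻¹ • Measure.map φ
              (Measure.map (fun x : (G₁ × G₂) ⧸ H => ((1 : G₁), b) • x) ρ) := by
            rw [Measure.map_map hφm hβm]
        _ = ν := by rw [hβρ, hνdef]
    have hRcov : HasFiniteCovolume R := ⟨ν, hνprob, hνinv⟩
    have hRcpt : IsCompact (Set.univ : Set (G₂ ⧸ R)) := h₂ R hRclosed hRcov
    obtain ⟨C₂, hC₂c, hC₂⟩ := aux_lift_compact R hRcpt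
    -- the orbit is a closed subset of a compact set
    have hOgclosed : IsClosed Og := by
      rw [← isOpen_compl_iff]
      have hcompl : Ogᶜ = QuotientGroup.mk (s := H) '' Sgᶜ := by
        ext x
        induction x using QuotientGroup.induction_on with
        | H a =>
          constructor
          · intro hna
            exact ⟨a, fun haS => hna ⟨a, haS, rfl⟩, rfl⟩
          · rintro ⟨c, hc, hca⟩ hmem
            rw [hOgdef, hSgdef, mem_image_mk_slab] at hmem
            have hinH : a⁻¹ * c ∈ H := by
              have := QuotientGroup.eq.1 hca
              have h10 := inv_mem this
              rwa [mul_inv_rev, inv_inv] at h10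
            refine hc ?_
            have := slab_mul_mem H hmem hinH
            rwa [show a * (a⁻¹ * c) = c by group] at this
      rw [hcompl]
      exact QuotientGroup.isOpenMap_coe _ hSgclopen.1.isOpen_compl
    have hsubC : Og ⊆ QuotientGroup.mk (s := H) ''
        ((fun w : G₁ × G₂ => w * g) '' ((U : Set G₁) ×ˢ C₂)) := by
      rintro _ ⟨a, hamem, rfl⟩
      obtain ⟨w, hw, h, hh, rfl⟩ := mem_slab.1 hamem
      obtain ⟨c₂, hc₂, hrR⟩ := hC₂ w.2
      obtain ⟨s, hsStab, hs2⟩ := (hRmem _).1 hrR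
      obtain ⟨hs1U, h₁, hh₁, hconj⟩ := (hStabmem s).1 hsStab
      refine ⟨(w.1 * s.1⁻¹, c₂) * g,
        ⟨(w.1 * s.1⁻¹, c₂), ⟨mul_mem ((hWmem w).1 hw) (inv_mem hs1U), hc₂⟩, rfl⟩, ?_⟩
      have hps : ((w.1 * s.1⁻¹, c₂) : G₁ × G₂) * s = w := by
        ext
        · show w.1 * s.1⁻¹ * s.1 = w.1; group
        · show c₂ * s.2 = w.2
          rw [hs2]; group
      have hid : ((w.1 * s.1⁻¹, c₂) : G₁ × G₂) * g * (h₁ * h) = w * g * h := by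
        calc ((w.1 * s.1⁻¹, c₂) : G₁ × G₂) * g * (h₁ * h)
            = ((w.1 * s.1⁻¹, c₂) : G₁ × G₂) * (g * h₁ * g⁻¹) * (g * h) := by group
          _ = ((w.1 * s.1⁻¹, c₂) : G₁ × G₂) * s * (g * h) := by rw [hconj]
          _ = w * (g * h) := by rw [hps]
          _ = w * g * h := by group
      refine (QuotientGroup.eq (s := H)).2 ?_
      have h11 : (((w.1 * s.1⁻¹, c₂) : G₁ × G₂) * g)⁻¹ * (w * g * h) = h₁ * h := by
        rw [← hid]; group
      rw [h11]
      exact mul_mem hh₁ hh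
    have hcptC : IsCompact (QuotientGroup.mk (s := H) ''
        ((fun w : G₁ × G₂ => w * g) '' ((U : Set G₁) ×ˢ C₂))) :=
      (((hUc.prod hC₂c).image (continuous_id.mul continuous_const)).image
        QuotientGroup.continuous_mk)
    exact hcptC.of_isClosed_subset hOgclosed hsubC
  -- the finite cover of the quotient by orbits
  have cover : (Set.univ : Set ((G₁ × G₂) ⧸ H)) ⊆
      ⋃ t ∈ T, QuotientGroup.mk '' slab (Wsub : Set (G₁ × G₂)) (H : Set (G₁ × G₂))
        ((t : G₁), (1 : G₂)) := by
    intro x _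
    induction x using QuotientGroup.induction_on with
    | H a =>
      obtain ⟨t, ht, u, hu, p, hpP, ha₁⟩ := stepC a.1
      obtain ⟨h, hh, hfst⟩ := hpP
      refine Set.mem_biUnion ht ⟨a, ⟨(u, a.2 * h.2⁻¹), ?_, h, hh, ?_⟩, rfl⟩
      · rw [hWmem]; exact hu
      · have : a = (a.1, a.2) := rfl
        rw [this, ha₁, ← hfst]
        ext <;> simp <;> group
  have hpos0 : ∃ t ∈ T, μ (QuotientGroup.mk '' slab (Wsub : Set (G₁ × G₂))
      (H : Set (G₁ × G₂)) ((t : G₁), (1 : G₂))) ≠ 0 := by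
    by_contra hcon
    push_neg at hcon
    have hle : μ (Set.univ : Set ((G₁ × G₂) ⧸ H)) ≤
        ∑ t ∈ T, μ (QuotientGroup.mk '' slab (Wsub : Set (G₁ × G₂)) (H : Set (G₁ × G₂))
          ((t : G₁), (1 : G₂))) :=
      (measure_mono cover).trans (measure_biUnion_finset_le _ _)
    rw [Finset.sum_congr rfl (fun t ht => hcon t ht), Finset.sum_const, smul_zero] at hle
    simp [hprob.measure_univ] at hle
  obtain ⟨t₀, ht₀, hpos0⟩ := hpos0
  show IsCompact (Set.univ : Set ((G₁ × G₂) ⧸ H))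
  have huniv : (Set.univ : Set ((G₁ × G₂) ⧸ H)) =
      ⋃ t ∈ T, QuotientGroup.mk '' slab (Wsub : Set (G₁ × G₂)) (H : Set (G₁ × G₂))
        ((t : G₁), (1 : G₂)) :=
    Set.Subset.antisymm cover (by simp)
  rw [huniv]
  exact T.isCompact_biUnion fun t _ => key _ (pos _ _ hpos0)
end

section
/- Let G be a compactly generated locally compact group admitting a closed cocompact normal subgroup N such that N has a compact subgroup V that is open in N and normal in N (i.e. G is {compact-by-discrete}-by-compact). Then G has property (M): every closed subgroup of finite covolume in G is cocompact. -/
open MeasureTheory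

open Pointwise Set

private lemma aux_mem_pow {G : Type*} [Group G] (S : Set G) (hSinv : S⁻¹ = S)
    (hgen : Subgroup.closure S = ⊤) (g : G) : ∃ n : ℕ, g ∈ S ^ n := by
  have hg : g ∈ Subgroup.closure S := by rw [hgen]; trivial
  induction hg using Subgroup.closure_induction with
  | mem x hx => exact ⟨1, by simpa [pow_one] using hx⟩
  | one => exact ⟨0, by simp [pow_zero]⟩
  | mul x y hx hy ihx ihy =>
      obtain ⟨a, ha⟩ := ihx; obtain ⟨b, hb⟩ := ihy
      exact ⟨a + b, by rw [pow_add]; exact Set.mul_mem_mul ha hb⟩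
  | inv x hx ihx =>
      obtain ⟨a, ha⟩ := ihx
      refine ⟨a, ?_⟩
      rw [← hSinv, inv_pow]
      exact Set.inv_mem_inv.2 ha

private lemma aux_pow_compact {G : Type*} [Group G] [TopologicalSpace G] [IsTopologicalGroup G]
    {S : Set G} (hS : IsCompact S) (n : ℕ) : IsCompact (S ^ n) := by
  induction n with
  | zero => rw [pow_zero, ← Set.singleton_one]; exact isCompact_singleton
  | succ k ih => rw [pow_succ]; exact ih.mul hS

/-- A closed cocompact normal subgroup of a compactly generated group is itself
generated by a compact set (here stated without topology: the telescoping argument). -/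
private lemma aux_N_gen {G : Type*} [Group G]
    (N : Subgroup G) [N.Normal] (C S : Set G)
    (hSinv : S⁻¹ = S) (hSgen : Subgroup.closure S = ⊤)
    (h1C : (1:G) ∈ C)
    (hNC : ∀ x : G, ∃ n ∈ (N : Set G), ∃ c ∈ C, x = n * c) :
    ∀ n ∈ (N : Set G),
      n ∈ Subgroup.closure (((N : Set G) ∩ (C * S * C⁻¹)) ∪ ((N : Set G) ∩ C)) := by
  set E : Set G := ((N : Set G) ∩ (C * S * C⁻¹)) ∪ ((N : Set G) ∩ C) with hEdef
  have hEN : E ⊆ (N : Set G) := by rintro x (hx | hx) <;> exact hx.1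
  have hMN : Subgroup.closure E ≤ N := (Subgroup.closure_le N).2 hEN
  have key : ∀ x : G, ∃ m ∈ Subgroup.closure E, ∃ c ∈ C, x = m * c := by
    intro x
    have hx : x ∈ Subgroup.closure S := by rw [hSgen]; trivial
    induction hx using Subgroup.closure_induction_right with
    | one => exact ⟨1, Subgroup.one_mem _, 1, h1C, by simp⟩
    | mul_right y hy s hs ih =>
        obtain ⟨m, hm, c, hc, rfl⟩ := ih
        obtain ⟨n₁, hn₁, c₁, hc₁, hcs⟩ := hNC (c * s)
        have hn₁E : n₁ ∈ E := by
          refine Or.inl ⟨hn₁, ?_⟩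
          have : n₁ = c * s * c₁⁻¹ := by rw [hcs]; group
          rw [this]
          exact Set.mul_mem_mul (Set.mul_mem_mul hc hs) (Set.inv_mem_inv.2 hc₁)
        exact ⟨m * n₁, (Subgroup.closure E).mul_mem hm (Subgroup.subset_closure hn₁E),
          c₁, hc₁, by rw [mul_assoc, hcs, ← mul_assoc]⟩
    | mul_inv_cancel y hy s hs ih =>
        obtain ⟨m, hm, c, hc, rfl⟩ := ih
        obtain ⟨n₁, hn₁, c₁, hc₁, hcs⟩ := hNC (c * s⁻¹)
        have hn₁E : n₁ ∈ E := by
          refine Or.inl ⟨hn₁, ?_⟩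
          have : n₁ = c * s⁻¹ * c₁⁻¹ := by rw [hcs]; group
          rw [this]
          have hsinv : s⁻¹ ∈ S := by rw [← hSinv]; exact Set.inv_mem_inv.2 hs
          exact Set.mul_mem_mul (Set.mul_mem_mul hc hsinv) (Set.inv_mem_inv.2 hc₁)
        exact ⟨m * n₁, (Subgroup.closure E).mul_mem hm (Subgroup.subset_closure hn₁E),
          c₁, hc₁, by rw [mul_assoc, hcs, ← mul_assoc]⟩
  intro n hn
  obtain ⟨m, hm, c, hc, hnmc⟩ := key n
  have hcN : c ∈ (N : Set G) := by
    have : c = m⁻¹ * n := by rw [hnmc]; group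
    rw [this]
    exact N.mul_mem (N.inv_mem (hMN hm)) hn
  have hcE : c ∈ E := Or.inr ⟨hcN, hc⟩
  rw [hnmc]
  exact (Subgroup.closure E).mul_mem hm (Subgroup.subset_closure hcE)

/-- The measure-theoretic core: if some neighbourhood `U` of `1` satisfies the separation
property `hsep` (disjoint translates can be chosen modulo a fixed compact set), then a
finite-covolume subgroup is cocompact. -/
private lemma aux_measure {G : Type*} [Group G] [TopologicalSpace G] [IsTopologicalGroup G]
    [T2Space G] (H : Subgroup G) (S U K₂ : Set G)
    (hSc : IsCompact S) (hpow : ∀ g : G, ∃ n : ℕ, g ∈ S ^ n)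
    (hUopen : IsOpen U) (h1U : (1:G) ∈ U) (hK₂c : IsCompact K₂)
    (hsep : ∀ g g' : G, ∀ u ∈ U, ∀ u' ∈ U,
      (QuotientGroup.mk (g * u) : G ⧸ H) = QuotientGroup.mk (g' * u') →
      g ∈ ({g'} : Set G) * K₂ * (H : Set G))
    (hfc : HasFiniteCovolume H) : IsCompact (Set.univ : Set (G ⧸ H)) := by
  by_contra hnc
  letI : MeasurableSpace (G ⧸ H) := borel (G ⧸ H)
  haveI : BorelSpace (G ⧸ H) := ⟨rfl⟩
  obtain ⟨μ, hμp, hμinv⟩ := hfc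
  set Bs : G → Set (G ⧸ H) := fun g => QuotientGroup.mk '' ({g} * U) with hBsdef
  have hBopen : ∀ g : G, IsOpen (Bs g) :=
    fun g => QuotientGroup.isOpenMap_coe _ (IsOpen.mul_left hUopen)
  have hBmeas : ∀ g : G, MeasurableSet (Bs g) := fun g => (hBopen g).measurableSet
  have hBmem : ∀ g y : G, (QuotientGroup.mk y : G ⧸ H) ∈ Bs g ↔
      ∃ u ∈ U, (QuotientGroup.mk y : G ⧸ H) = QuotientGroup.mk (g * u) := by
    intro g y
    constructor
    · rintro ⟨z, hz, hmk⟩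
      have hu : g⁻¹ * z ∈ U := by simpa [Set.singleton_mul] using hz
      exact ⟨g⁻¹ * z, hu, by rw [← hmk]; congr 1; group⟩
    · rintro ⟨u, hu, hmk⟩
      exact ⟨g * u, by simpa [Set.singleton_mul] using hu, hmk.symm⟩
  have hsmulmeas : ∀ g : G, Measurable (fun x : G ⧸ H => g • x) :=
    fun g => (continuous_const_smul g).measurable
  have hpre : ∀ g : G, (fun x : G ⧸ H => g • x) ⁻¹' (Bs g) = Bs 1 := by
    intro g
    ext x
    obtain ⟨y, rfl⟩ := QuotientGroup.mk_surjective x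
    have hsm : g • (QuotientGroup.mk y : G ⧸ H) = QuotientGroup.mk (g * y) := by
      rw [← smul_eq_mul, MulAction.Quotient.smul_mk]
    simp only [Set.mem_preimage, hsm]
    rw [hBmem g (g * y), hBmem 1 y]
    constructor
    · rintro ⟨u, hu, hmk⟩
      refine ⟨u, hu, ?_⟩
      rw [one_mul]
      rw [QuotientGroup.eq] at hmk ⊢
      convert hmk using 1
      group
    · rintro ⟨u, hu, hmk⟩
      refine ⟨u, hu, ?_⟩
      rw [one_mul] at hmk
      rw [QuotientGroup.eq] at hmk ⊢
      convert hmk using 1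
      group
  have hBconst : ∀ g : G, μ (Bs g) = μ (Bs 1) := by
    intro g
    calc μ (Bs g) = Measure.map (fun x : G ⧸ H => g • x) μ (Bs g) := by rw [hμinv g]
    _ = μ ((fun x : G ⧸ H => g • x) ⁻¹' (Bs g)) :=
        Measure.map_apply (hsmulmeas g) (hBmeas g)
    _ = μ (Bs 1) := by rw [hpre g]
  -- the basic open piece has positive measure, by σ-compactness
  have hpos : μ (Bs 1) ≠ 0 := by
    intro h0
    have hcov : ∀ n : ℕ, ∃ t : Finset G, (S ^ n) ⊆ ⋃ g ∈ t, ({g} : Set G) * U := by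
      intro n
      refine (aux_pow_compact hSc n).elim_finite_subcover (fun g : G => ({g} : Set G) * U)
        (fun g => IsOpen.mul_left hUopen) ?_
      intro x hx
      exact Set.mem_iUnion.2 ⟨x, by simpa [Set.singleton_mul] using h1U⟩
    choose t ht using hcov
    have hXcov : (Set.univ : Set (G ⧸ H)) ⊆ ⋃ n : ℕ, ⋃ g ∈ t n, Bs g := by
      intro x _
      obtain ⟨y, rfl⟩ := QuotientGroup.mk_surjective x
      obtain ⟨n, hn⟩ := hpow y
      obtain ⟨g, hg, hy⟩ := Set.mem_iUnion₂.1 (ht n hn)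
      exact Set.mem_iUnion.2 ⟨n, Set.mem_iUnion₂.2 ⟨g, hg, ⟨y, hy, rfl⟩⟩⟩
    have hz : μ (Set.univ : Set (G ⧸ H)) = 0 := by
      refine le_antisymm ?_ (by simp)
      refine le_trans (measure_mono hXcov) (le_of_eq ?_)
      refine measure_iUnion_null (fun n => ?_)
      refine (measure_biUnion_null_iff (t n).countable_toSet).2 (fun g _ => ?_)
      rw [hBconst g]; exact h0
    have := hμp.measure_univ
    rw [hz] at this
    exact one_ne_zero this.symm
  -- noncompactness lets us escape any compact set modulo H
  have hout : ∀ A : Set G, IsCompact A → ∃ x : G, x ∉ A * (H : Set G) := by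
    intro A hA
    by_contra hcon
    push_neg at hcon
    have huniv : (Set.univ : Set (G ⧸ H)) = QuotientGroup.mk '' A := by
      refine le_antisymm ?_ (Set.subset_univ _)
      intro x _
      obtain ⟨y, rfl⟩ := QuotientGroup.mk_surjective x
      obtain ⟨a, ha, h₁, hh₁, hmul⟩ := hcon y
      refine ⟨a, ha, ?_⟩
      rw [QuotientGroup.eq]
      have : a⁻¹ * y = h₁ := by rw [← hmul]; group
      rw [this]; exact hh₁
    exact hnc (huniv ▸ (hA.image QuotientGroup.continuous_mk))
  have hpick : ∀ A : Set G, ∃ x : G, IsCompact A → x ∉ A * (H : Set G) := by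
    intro A
    by_cases hA : IsCompact A
    · obtain ⟨x, hx⟩ := hout A hA
      exact ⟨x, fun _ => hx⟩
    · exact ⟨1, fun hc => absurd hc hA⟩
  choose pick hpickspec using hpick
  -- a sequence of points whose U-translates in G/H are pairwise disjoint
  let f : ℕ → G × Set G := fun n => Nat.rec ((1 : G), ({(1:G)} : Set G) * K₂)
    (fun _ p => (pick p.2, p.2 ∪ ({pick p.2} : Set G) * K₂)) n
  have hf0 : f 0 = ((1 : G), ({(1:G)} : Set G) * K₂) := rfl
  have hfs : ∀ n, f (n + 1) = (pick (f n).2, (f n).2 ∪ ({pick (f n).2} : Set G) * K₂) :=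
    fun n => rfl
  have hAc : ∀ n, IsCompact (f n).2 := by
    intro n
    induction n with
    | zero => rw [hf0]; exact isCompact_singleton.mul hK₂c
    | succ k ih => rw [hfs k]; exact ih.union (isCompact_singleton.mul hK₂c)
  have hgA : ∀ n, ({(f n).1} : Set G) * K₂ ⊆ (f n).2 := by
    intro n
    cases n with
    | zero => rw [hf0]
    | succ k => rw [hfs k]; exact Set.subset_union_right
  have hAmono : ∀ m n : ℕ, m ≤ n → (f m).2 ⊆ (f n).2 := by
    intro m n hmn
    induction hmn with
    | refl => exact subset_rfl
    | @step k hk ih => exact ih.trans (by rw [hfs k]; exact Set.subset_union_left)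
  have hgout : ∀ n, (f (n + 1)).1 ∉ (f n).2 * (H : Set G) := by
    intro n
    rw [hfs n]
    exact hpickspec (f n).2 (hAc n)
  have hdisj : ∀ m n : ℕ, m < n → ∀ x : G ⧸ H, x ∈ Bs ((f m).1) → x ∈ Bs ((f n).1) → False := by
    intro m n hmn x hxm hxn
    obtain ⟨y, rfl⟩ : ∃ y : G, QuotientGroup.mk y = x := QuotientGroup.mk_surjective x
    obtain ⟨u, hu, hmku⟩ := (hBmem _ y).1 hxn
    obtain ⟨u', hu', hmku'⟩ := (hBmem _ y).1 hxm
    have heq : (QuotientGroup.mk ((f n).1 * u) : G ⧸ H) = QuotientGroup.mk ((f m).1 * u') := by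
      rw [← hmku, ← hmku']
    have hmem := hsep ((f n).1) ((f m).1) u hu u' hu' heq
    obtain ⟨k, hk⟩ := Nat.exists_eq_add_of_lt hmn
    have hn1 : n = (m + k) + 1 := hk
    have hsub : ({(f m).1} : Set G) * K₂ * (H : Set G) ⊆ (f (m + k)).2 * (H : Set G) :=
      Set.mul_subset_mul_right ((hgA m).trans (hAmono m (m + k) (Nat.le_add_right m k)))
    exact hgout (m + k) (by rw [← hn1]; exact hsub hmem)
  have hPairwise : Pairwise (Function.onFun Disjoint fun n : ℕ => Bs ((f n).1)) := by
    intro m n hmn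
    rcases lt_or_gt_of_ne hmn with h | h
    · exact Set.disjoint_left.2 (fun x hx hx' => hdisj m n h x hx hx')
    · exact Set.disjoint_left.2 (fun x hx hx' => hdisj n m h x hx' hx)
  have hμU : μ (⋃ n : ℕ, Bs ((f n).1)) = ∑' n : ℕ, μ (Bs ((f n).1)) :=
    measure_iUnion hPairwise (fun n => hBmeas _)
  have htop : μ (⋃ n : ℕ, Bs ((f n).1)) = ⊤ := by
    rw [hμU]
    have : ∀ n : ℕ, μ (Bs ((f n).1)) = μ (Bs 1) := fun n => hBconst _
    rw [tsum_congr this]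
    exact ENNReal.tsum_const_eq_top_of_ne_zero hpos
  exact (measure_ne_top μ _) htop

/-- A compactly generated locally compact group with a closed cocompact normal subgroup `N`
admitting a compact subgroup `V ≤ N` that is open in `N` and normal in `N` (i.e. a
compactly generated {compact-by-discrete}-by-compact group) has property (M). -/
theorem propertyM_of_compact_by_discrete_by_compact
    {G : Type*} [Group G] [TopologicalSpace G] [IsTopologicalGroup G]
    [LocallyCompactSpace G] [T2Space G]
    (hcg : ∃ S : Set G, IsCompact S ∧ Subgroup.closure S = ⊤)
    (N : Subgroup G) [N.Normal] (hNcl : IsClosed (N : Set G))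
    (hNcc : IsCompact (Set.univ : Set (G ⧸ N)))
    (V : Subgroup G) (hVN : V ≤ N) (hVcpt : IsCompact (V : Set G))
    (hVopeninN : IsOpen {x : ↥N | (x : G) ∈ V})
    (hVnormalinN : ∀ n ∈ N, ∀ v ∈ V, n * v * n⁻¹ ∈ V) :
    PropertyM G := by
  intro H hHcl hfc
  rw [IsCocompactSubgroup]
  -- a symmetric compact generating set containing 1
  obtain ⟨S0, hS0c, hS0gen⟩ := hcg
  set S : Set G := S0 ∪ S0⁻¹ ∪ {1} with hSdef
  have hSc : IsCompact S := (hS0c.union hS0c.inv).union isCompact_singleton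
  have hSinv : S⁻¹ = S := by
    ext x
    simp only [hSdef, Set.mem_inv, Set.mem_union, Set.mem_singleton_iff, Set.mem_inv,
      inv_eq_one]
    constructor
    · rintro ((h | h) | h)
      · exact Or.inl (Or.inr (by simpa using h))
      · exact Or.inl (Or.inl (by simpa using h))
      · exact Or.inr h
    · rintro ((h | h) | h)
      · exact Or.inl (Or.inr (by simpa using h))
      · exact Or.inl (Or.inl (by simpa using h))
      · exact Or.inr h
  have h1S : (1 : G) ∈ S := by simp [hSdef]
  have hSgen : Subgroup.closure S = ⊤ := by
    rw [eq_top_iff, ← hS0gen]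
    exact Subgroup.closure_mono (by intro x hx; exact Or.inl (Or.inl hx))
  have hpow : ∀ g : G, ∃ n : ℕ, g ∈ S ^ n := aux_mem_pow S hSinv hSgen
  -- a symmetric compact set C containing 1 with G = CN = NC
  obtain ⟨C, hCc, hCinv, h1C, hCN, hNC⟩ :
      ∃ C : Set G, IsCompact C ∧ C⁻¹ = C ∧ (1 : G) ∈ C ∧
        (∀ x : G, ∃ c ∈ C, ∃ n ∈ (N : Set G), x = c * n) ∧
        (∀ x : G, ∃ n ∈ (N : Set G), ∃ c ∈ C, x = n * c) := by
    obtain ⟨Kc, hKcc, hKcm⟩ := exists_compact_mem_nhds (1 : G)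
    have h1int : (1 : G) ∈ interior Kc := mem_interior_iff_mem_nhds.2 hKcm
    have hcov : (Set.univ : Set (G ⧸ N)) ⊆
        ⋃ g : G, (QuotientGroup.mk '' ({g} * interior Kc) : Set (G ⧸ N)) := by
      intro x _
      obtain ⟨y, rfl⟩ := QuotientGroup.mk_surjective x
      exact Set.mem_iUnion.2 ⟨y, ⟨y * 1, Set.mul_mem_mul rfl h1int, by simp⟩⟩
    obtain ⟨t, ht⟩ := hNcc.elim_finite_subcover
      (fun g : G => (QuotientGroup.mk '' ({g} * interior Kc) : Set (G ⧸ N)))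
      (fun g => QuotientGroup.isOpenMap_coe _ (IsOpen.mul_left isOpen_interior)) hcov
    set C0 : Set G := ⋃ g ∈ t, {g} * Kc with hC0def
    have hC0c : IsCompact C0 := t.isCompact_biUnion (fun g _ => isCompact_singleton.mul hKcc)
    have hC0N : ∀ x : G, ∃ c ∈ C0, ∃ n ∈ (N : Set G), x = c * n := by
      intro x
      have := ht (Set.mem_univ (QuotientGroup.mk x : G ⧸ N))
      rw [Set.mem_iUnion₂] at this
      obtain ⟨g, hg, y, hy, hxy⟩ := this
      refine ⟨y, Set.mem_biUnion hg ?_, y⁻¹ * x, ?_, by group⟩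
      · exact Set.mul_subset_mul_left interior_subset hy
      · exact QuotientGroup.eq.1 hxy
    refine ⟨C0 ∪ C0⁻¹ ∪ {1}, (hC0c.union hC0c.inv).union isCompact_singleton, ?_, by simp,
      ?_, ?_⟩
    · ext x
      simp only [Set.mem_inv, Set.mem_union, Set.mem_singleton_iff, inv_eq_one]
      constructor
      · rintro ((h | h) | h)
        · exact Or.inl (Or.inr (by simpa using h))
        · exact Or.inl (Or.inl (by simpa using h))
        · exact Or.inr h
      · rintro ((h | h) | h)
        · exact Or.inl (Or.inr (by simpa using h))
        · exact Or.inl (Or.inl (by simpa using h))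
        · exact Or.inr h
    · intro x
      obtain ⟨c, hc, n, hn, hx⟩ := hC0N x
      exact ⟨c, Or.inl (Or.inl hc), n, hn, hx⟩
    · intro x
      obtain ⟨c, hc, n, hn, hx⟩ := hC0N x⁻¹
      refine ⟨n⁻¹, N.inv_mem hn, c⁻¹, Or.inl (Or.inr (by simpa using hc)), ?_⟩
      rw [← mul_inv_rev, ← hx, inv_inv]
  -- the normal core W of V
  set W : Set G := {x : G | ∀ c ∈ C, c⁻¹ * x * c ∈ V} with hWdef
  have hWV : W ⊆ (V : Set G) := by
    intro x hx
    have := hx 1 h1C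
    simpa using this
  have hWN : W ⊆ (N : Set G) := hWV.trans hVN
  have hW1 : (1 : G) ∈ W := by
    intro c hc; simpa using V.one_mem
  have hWmul : ∀ x ∈ W, ∀ y ∈ W, x * y ∈ W := by
    intro x hx y hy c hc
    have : c⁻¹ * (x * y) * c = (c⁻¹ * x * c) * (c⁻¹ * y * c) := by group
    rw [this]
    exact V.mul_mem (hx c hc) (hy c hc)
  have hWinv : ∀ x ∈ W, x⁻¹ ∈ W := by
    intro x hx c hc
    have : c⁻¹ * x⁻¹ * c = (c⁻¹ * x * c)⁻¹ := by group
    rw [this]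
    exact V.inv_mem (hx c hc)
  have hWcpt : IsCompact W := by
    have heq : W = ⋂ c ∈ C, (fun x : G => c⁻¹ * x * c) ⁻¹' (V : Set G) := by
      ext x; simp [hWdef, Set.mem_iInter]
    have hclosed : IsClosed W := by
      rw [heq]
      refine isClosed_biInter (fun c _ => IsClosed.preimage ?_ hVcpt.isClosed)
      exact (continuous_const.mul continuous_id).mul continuous_const
    refine hVcpt.of_isClosed_subset hclosed hWV
  have hWnormal : ∀ g : G, ∀ w ∈ W, g * w * g⁻¹ ∈ W := by
    intro g w hw c hc
    obtain ⟨n₁, hn₁, c₁, hc₁, hz⟩ := hNC (c⁻¹ * g)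
    have hc₁inv : c₁⁻¹ ∈ C := by rw [← hCinv]; exact Set.inv_mem_inv.2 hc₁
    have hv : c₁ * w * c₁⁻¹ ∈ V := by
      have := hw c₁⁻¹ hc₁inv
      simpa using this
    have hv2 : n₁ * (c₁ * w * c₁⁻¹) * n₁⁻¹ ∈ V := hVnormalinN n₁ hn₁ _ hv
    have : c⁻¹ * (g * w * g⁻¹) * c = n₁ * (c₁ * w * c₁⁻¹) * n₁⁻¹ := by
      have hg : g = c * (n₁ * c₁) := by rw [← hz]; group
      rw [hg]; group
    rw [this]; exact hv2
  -- W is open in N : there is an open O ∋ 1 with O ∩ N = W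
  obtain ⟨O, hOopen, h1O, hON⟩ :
      ∃ O : Set G, IsOpen O ∧ (1 : G) ∈ O ∧ O ∩ (N : Set G) = W := by
    obtain ⟨OV, hOVopen, hOVpre⟩ := isOpen_induced_iff.1 hVopeninN
    have hOV' : ∀ x ∈ (N : Set G), (x ∈ OV ↔ x ∈ (V : Set G)) := by
      intro x hx
      have := Set.ext_iff.1 hOVpre ⟨x, hx⟩
      simpa using this
    have htube : ∀ c ∈ C, ∃ P Q : Set G, IsOpen P ∧ IsOpen Q ∧ c ∈ P ∧ (1:G) ∈ Q ∧
        ∀ d ∈ P, ∀ x ∈ Q, d⁻¹ * x * d ∈ OV := by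
      intro c hc
      have hΩ : IsOpen {p : G × G | p.1⁻¹ * p.2 * p.1 ∈ OV} := by
        refine IsOpen.preimage ?_ hOVopen
        exact ((continuous_fst.inv.mul continuous_snd).mul continuous_fst)
      have hmem : ((c, 1) : G × G) ∈ {p : G × G | p.1⁻¹ * p.2 * p.1 ∈ OV} := by
        have : c⁻¹ * 1 * c = (1:G) := by group
        simp only [Set.mem_setOf_eq, this]
        exact (hOV' 1 N.one_mem).2 V.one_mem
      obtain ⟨P, Q, hP, hQ, hcP, h1Q, hPQ⟩ := isOpen_prod_iff.1 hΩ c 1 hmem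
      exact ⟨P, Q, hP, hQ, hcP, h1Q, fun d hd x hx => hPQ (Set.mk_mem_prod hd hx)⟩
    choose! P Q hPopen hQopen hcP h1Q hPQ using htube
    obtain ⟨b, hbC, hbfin, hbcov⟩ := hCc.elim_finite_subcover_image
      (fun c hc => hPopen c hc) (fun c hc => Set.mem_biUnion hc (hcP c hc))
    set O₁ : Set G := ⋂ c ∈ b, Q c with hO₁def
    have hO₁open : IsOpen O₁ := hbfin.isOpen_biInter (fun c hc => hQopen c (hbC hc))
    have h1O₁ : (1:G) ∈ O₁ := Set.mem_iInter₂.2 (fun c hc => h1Q c (hbC hc))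
    have hO₁W : ∀ x ∈ O₁, x ∈ (N : Set G) → x ∈ W := by
      intro x hx hxN
      rw [hWdef]
      intro c hc
      obtain ⟨c₀, hc₀b, hcP₀⟩ := Set.mem_iUnion₂.1 (hbcov hc)
      have hOVm : c⁻¹ * x * c ∈ OV :=
        hPQ c₀ (hbC hc₀b) c hcP₀ x (Set.mem_iInter₂.1 hx c₀ hc₀b)
      have hNm : c⁻¹ * x * c ∈ (N : Set G) := by
        have := Subgroup.Normal.conj_mem ‹N.Normal› x hxN c⁻¹
        simpa using this
      exact (hOV' _ hNm).1 hOVm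
    refine ⟨W * O₁, IsOpen.mul_left hO₁open, ⟨1, hW1, 1, h1O₁, by simp⟩, ?_⟩
    ext x
    constructor
    · rintro ⟨⟨w, hw, o, ho, rfl⟩, hxN⟩
      have hoN : o ∈ (N : Set G) := by
        have : o = w⁻¹ * (w * o) := by group
        rw [this]
        exact N.mul_mem (N.inv_mem (hWN hw)) hxN
      exact hWmul w hw o (hO₁W o ho hoN)
    · intro hx
      exact ⟨⟨x, hx, 1, h1O₁, by simp⟩, hWN hx⟩
  -- the compact generating set E of N
  set E : Set G := ((N : Set G) ∩ (C * S * C⁻¹)) ∪ ((N : Set G) ∩ C) with hEdef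
  have hEN : E ⊆ (N : Set G) := by
    rintro x (hx | hx) <;> exact hx.1
  have hEc : IsCompact E :=
    (((hCc.mul hSc).mul hCc.inv).inter_left hNcl).union (hCc.inter_left hNcl)
  have hNE : ∀ n ∈ (N : Set G), n ∈ Subgroup.closure E :=
    aux_N_gen N C S hSinv hSgen h1C hNC
  -- finitely many coset representatives of W covering E
  obtain ⟨F, hFN, hFcov⟩ :
      ∃ F : Finset G, (∀ j ∈ F, (j : G) ∈ (N : Set G)) ∧
        ∀ e ∈ E, ∃ j ∈ F, ∃ w ∈ W, e = j * w := by
    obtain ⟨b, hbE, hbfin, hbcov⟩ := hEc.elim_finite_subcover_image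
      (b := E) (c := fun e => {e} * O)
      (fun e _ => IsOpen.mul_left hOopen)
      (fun e he => Set.mem_biUnion he ⟨e, rfl, 1, h1O, by simp⟩)
    refine ⟨hbfin.toFinset, fun j hj => hEN (hbE (hbfin.mem_toFinset.1 hj)), ?_⟩
    intro e he
    obtain ⟨j, hjb, hmem⟩ := Set.mem_iUnion₂.1 (hbcov he)
    have hz : j⁻¹ * e ∈ O := by simpa [Set.singleton_mul] using hmem
    refine ⟨j, hbfin.mem_toFinset.2 hjb, j⁻¹ * e, ?_, by group⟩
    rw [← hON]
    exact ⟨hz, N.mul_mem (N.inv_mem (hEN (hbE hjb))) (hEN he)⟩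
  -- the open set Z with [Z, N] ⊆ W
  set Z : Set G := ⋂ j ∈ F, {g : G | g * j * g⁻¹ * j⁻¹ ∈ O} with hZdef
  have hZopen : IsOpen Z := by
    refine isOpen_biInter_finset (fun j _ => ?_)
    refine IsOpen.preimage ?_ hOopen
    exact (((continuous_id.mul continuous_const).mul continuous_id.inv).mul continuous_const)
  have h1Z : (1 : G) ∈ Z := by
    refine Set.mem_iInter₂.2 (fun j _ => ?_)
    have : (1:G) * j * 1⁻¹ * j⁻¹ = 1 := by group
    simp only [Set.mem_setOf_eq, this]
    exact h1O
  have hZW : ∀ g ∈ Z, ∀ n ∈ (N : Set G), g * n * g⁻¹ * n⁻¹ ∈ W := by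
    intro g hg
    have hgF : ∀ j ∈ F, g * j * g⁻¹ * j⁻¹ ∈ W := by
      intro j hj
      rw [← hON]
      refine ⟨Set.mem_iInter₂.1 hg j hj, ?_⟩
      have h1 : g * j * g⁻¹ ∈ (N : Set G) := Subgroup.Normal.conj_mem ‹N.Normal› j (hFN j hj) g
      exact N.mul_mem h1 (N.inv_mem (hFN j hj))
    set T : Subgroup G :=
      { carrier := {n : G | n ∈ N ∧ g * n * g⁻¹ * n⁻¹ ∈ W}
        one_mem' := by
          refine ⟨N.one_mem, ?_⟩
          have : g * 1 * g⁻¹ * 1⁻¹ = 1 := by group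
          rw [this]; exact hW1
        mul_mem' := by
          rintro a b ⟨haN, ha⟩ ⟨hbN, hb⟩
          refine ⟨N.mul_mem haN hbN, ?_⟩
          have heq : g * (a * b) * g⁻¹ * (a * b)⁻¹ =
              (g * a * g⁻¹ * a⁻¹) * (a * (g * b * g⁻¹ * b⁻¹) * a⁻¹) := by group
          rw [heq]
          exact hWmul _ ha _ (hWnormal a _ hb)
        inv_mem' := by
          rintro a ⟨haN, ha⟩
          refine ⟨N.inv_mem haN, ?_⟩
          have heq : g * a⁻¹ * g⁻¹ * a⁻¹⁻¹ = a⁻¹ * (g * a * g⁻¹ * a⁻¹)⁻¹ * a⁻¹⁻¹ := by group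
          rw [heq]
          exact hWnormal a⁻¹ _ (hWinv _ ha) } with hTdef
    have hET : E ⊆ (T : Set G) := by
      intro e he
      obtain ⟨j, hj, w, hw, rfl⟩ := hFcov e he
      have hjT : j ∈ T := ⟨hFN j hj, hgF j hj⟩
      have hwT : w ∈ T := by
        refine ⟨hWN hw, ?_⟩
        have heq : g * w * g⁻¹ * w⁻¹ = (g * w * g⁻¹) * w⁻¹ := by group
        rw [heq]
        exact hWmul _ (hWnormal g _ hw) _ (hWinv _ hw)
      exact T.mul_mem hjT hwT
    intro n hn
    have : n ∈ T := (Subgroup.closure_le T).2 hET (hNE n hn)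
    exact this.2
  -- a neighborhood U of 1 with compact closure inside Z
  obtain ⟨KU, hKUc, hKU1, hKUZ⟩ := exists_compact_subset hZopen h1Z
  set U : Set G := interior KU with hUdef
  have hUopen : IsOpen U := isOpen_interior
  have h1U : (1 : G) ∈ U := hKU1
  have hUZ : U ⊆ Z := interior_subset.trans hKUZ
  have hUcl : IsCompact (closure U) :=
    hKUc.of_isClosed_subset isClosed_closure (closure_minimal interior_subset hKUc.isClosed)
  -- the compact sets K₁ and K₂
  set K₁ : Set G := closure U * C * (closure U)⁻¹ * W * C⁻¹ with hK₁def
  have hK₁c : IsCompact K₁ := ((((hUcl.mul hCc).mul hUcl.inv).mul hWcpt).mul hCc.inv)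
  have hkey : ∀ u ∈ U, ∀ h : G, ∃ k ∈ K₁, u * h * u⁻¹ = k * h := by
    intro u hu h
    obtain ⟨c, hc, n, hn, rfl⟩ := hCN h
    have hw : u * n * u⁻¹ * n⁻¹ ∈ W := hZW u (hUZ hu) n hn
    have humem : u ∈ closure U := subset_closure hu
    refine ⟨u * c * u⁻¹ * (u * n * u⁻¹ * n⁻¹) * c⁻¹, ?_, by group⟩
    exact Set.mul_mem_mul (Set.mul_mem_mul (Set.mul_mem_mul
      (Set.mul_mem_mul humem hc) (Set.inv_mem_inv.2 humem)) hw) (Set.inv_mem_inv.2 hc)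
  set K₂ : Set G := closure U * (closure U)⁻¹ * K₁ with hK₂def
  have hK₂c : IsCompact K₂ := (hUcl.mul hUcl.inv).mul hK₁c
  have hsep : ∀ g g' : G, ∀ u ∈ U, ∀ u' ∈ U,
      (QuotientGroup.mk (g * u) : G ⧸ H) = QuotientGroup.mk (g' * u') →
      g ∈ ({g'} : Set G) * K₂ * (H : Set G) := by
    intro g g' u hu u' hu' heq
    have hh : (g' * u')⁻¹ * (g * u) ∈ H := QuotientGroup.eq.1 heq.symm
    set h₀ : G := (g' * u')⁻¹ * (g * u) with hh₀def
    obtain ⟨k, hk, hek⟩ := hkey u hu h₀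
    refine ⟨g' * (u' * u⁻¹ * k), Set.mul_mem_mul rfl
      (Set.mul_mem_mul (Set.mul_mem_mul (subset_closure hu')
        (Set.inv_mem_inv.2 (subset_closure hu))) hk), h₀, hh, ?_⟩
    show g' * (u' * u⁻¹ * k) * h₀ = g
    have expand : g' * (u' * u⁻¹ * k) * h₀ = g' * u' * u⁻¹ * (k * h₀) := by group
    rw [expand, ← hek, hh₀def]
    group
  exact aux_measure H S U K₂ hSc hpow hUopen h1U hK₂c hsep hfc
end

section
/- Let O be a locally compact group which is the union of an ascending chain O₁ ≤ O₂ ≤ O₃ ≤ ⋯ of compact open subgroups. If sup_n [O_{n+1} : O_n] < ∞, then O has property (M): every closed subgroup of finite covolume in O is cocompact. -/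
open MeasureTheory Pointwise
open scoped ENNReal

/-- Let `O` be a locally compact group which is the union of an ascending chain
`O₁ ≤ O₂ ≤ ⋯` of compact open subgroups with uniformly bounded indices
`[O_{n+1} : O_n]`.  Then `O` has property (M). -/
theorem propertyM_of_bounded_index_chain
    {G : Type*} [Group G] [TopologicalSpace G] [IsTopologicalGroup G] [T2Space G]
    (O : ℕ → Subgroup G) (hmono : Monotone O)
    (hcpt : ∀ n, IsCompact ((O n : Subgroup G) : Set G))
    (hopen : ∀ n, IsOpen ((O n : Subgroup G) : Set G))
    (hunion : ∀ g : G, ∃ n, g ∈ O n)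
    (hbdd : ∃ C : ℕ, ∀ n, (O n).relIndex (O (n + 1)) ≤ C ∧ (O n).relIndex (O (n + 1)) ≠ 0) :
    PropertyM G := by
  classical
  obtain ⟨C, hC⟩ := hbdd
  intro H _hcl hvol
  letI : MeasurableSpace (G ⧸ H) := borel (G ⧸ H)
  haveI : BorelSpace (G ⧸ H) := ⟨rfl⟩
  obtain ⟨μ, hprob, hinv⟩ := hvol
  -- the projection and the images of the subgroups
  set π : G → G ⧸ H := QuotientGroup.mk with hπdef
  set U : ℕ → Set (G ⧸ H) := fun n => π '' (O n) with hUdef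
  have hUopen : ∀ n, IsOpen (U n) := fun n =>
    QuotientGroup.isOpenMap_coe _ (hopen n)
  have hUmeas : ∀ n, MeasurableSet (U n) := fun n => (hUopen n).measurableSet
  have hUmono : Monotone U := fun a b hab => Set.image_mono (hmono hab)
  -- measurability of translations
  have hmeas_smul : ∀ g : G, Measurable (fun x : G ⧸ H => g • x) :=
    fun g => (continuous_const_smul g).measurable
  -- invariance of the measure on sets
  have hinvS : ∀ (g : G) (S : Set (G ⧸ H)), MeasurableSet S → μ (g • S) = μ S := by
    intro g S hS
    have h1 : (fun x : G ⧸ H => g • x) ⁻¹' (g • S) = S := by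
      ext x; exact Set.smul_mem_smul_set_iff
    have h2 : MeasurableSet (g • S) := by
      have : g • S = (fun x : G ⧸ H => g⁻¹ • x) ⁻¹' S := by
        ext x; simp [Set.mem_smul_set_iff_inv_smul_mem]
      rw [this]; exact (hmeas_smul g⁻¹) hS
    calc μ (g • S) = (Measure.map (fun x : G ⧸ H => g • x) μ) (g • S) := by rw [hinv g]
      _ = μ ((fun x : G ⧸ H => g • x) ⁻¹' (g • S)) := Measure.map_apply (hmeas_smul g) h2
      _ = μ S := by rw [h1]
  -- it suffices to show some `U n` is everything
  suffices hsuf : ∃ n, U n = Set.univ by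
    obtain ⟨n, hn⟩ := hsuf
    have : IsCompact (U n) := (hcpt n).image continuous_quot_mk
    rw [hn] at this
    exact this
  by_contra hcon
  push_neg at hcon
  -- the complements of the `U n` shrink to the empty set
  have hInter : (⋂ n, (U n)ᶜ) = ∅ := by
    rw [← Set.compl_iUnion, Set.compl_empty_iff]
    ext z
    simp only [Set.mem_iUnion, Set.mem_univ, iff_true]
    obtain ⟨g, rfl⟩ := QuotientGroup.mk_surjective z
    obtain ⟨n, hn⟩ := hunion g
    exact ⟨n, g, hn, rfl⟩
  have htend : Filter.Tendsto (fun n => μ (U n)ᶜ) Filter.atTop (nhds 0) := by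
    have h := tendsto_measure_iInter_atTop (μ := μ)
      (fun n => (hUmeas n).compl.nullMeasurableSet)
      (fun a b hab => Set.compl_subset_compl.mpr (hUmono hab))
      ⟨0, measure_ne_top μ _⟩
    rw [hInter] at h
    simpa [Function.comp_def] using h
  -- choose n with small complement
  have hnetop : ((C : ℝ≥0∞) + 1) ≠ ⊤ :=
    ENNReal.add_ne_top.mpr ⟨ENNReal.natCast_ne_top C, ENNReal.one_ne_top⟩
  have hCpos : (0 : ℝ≥0∞) < ((C : ℝ≥0∞) + 1)⁻¹ := ENNReal.inv_pos.mpr hnetop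
  obtain ⟨n, hn⟩ := (htend.eventually_lt_const hCpos).exists
  -- pick a point outside `U n`
  obtain ⟨y, hy⟩ := (Set.ne_univ_iff_exists_notMem (U n)).mp (hcon n)
  have hex : ∃ N, y ∈ U N := by
    obtain ⟨g, rfl⟩ := QuotientGroup.mk_surjective y
    obtain ⟨N, hN⟩ := hunion g
    exact ⟨N, g, hN, rfl⟩
  set N := Nat.find hex with hNdef
  have hyN : y ∈ U N := Nat.find_spec hex
  have hnN : n < N := by
    by_contra hle
    push_neg at hle
    exact hy (hUmono hle hyN)
  obtain ⟨M, hNM⟩ : ∃ M, N = M + 1 := ⟨N - 1, by omega⟩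
  have hyM : y ∉ U M := Nat.find_min hex (by omega)
  have hnM : n ≤ M := by omega
  rw [hNM] at hyN
  -- the orbit of y under O M
  set orb : Set (G ⧸ H) := (fun g : G => g • y) '' (O M) with horbdef
  -- y = π k₀ with k₀ ∈ O (M+1)
  obtain ⟨k₀, hk₀, hk₀y⟩ := hyN
  have horb_open : IsOpen orb := by
    have heq : orb = π '' ((fun h : G => h * k₀) '' (O M : Set G)) := by
      rw [Set.image_image]
      apply Set.image_congr
      intro a _
      rw [← hk₀y]
      rfl
    rw [heq]
    exact QuotientGroup.isOpenMap_coe _ ((isOpenMap_mul_right k₀) _ (hopen M))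
  have horb_meas : MeasurableSet orb := horb_open.measurableSet
  -- the orbit is disjoint from U M
  have horb_disj : orb ⊆ (U M)ᶜ := by
    rintro z ⟨g, hg, rfl⟩ hz
    obtain ⟨k, hk, hkz⟩ := hz
    apply hyM
    refine ⟨g⁻¹ * k, (O M).mul_mem ((O M).inv_mem hg) hk, ?_⟩
    have h3 : π (g⁻¹ * k) = g⁻¹ • π k := rfl
    rw [h3, hkz]
    exact inv_smul_smul g (y : G ⧸ H)
  -- coset decomposition of O (M+1) along O M
  set J : Subgroup (O (M + 1)) := (O M).subgroupOf (O (M + 1)) with hJdef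
  have hcard : Nat.card (O (M + 1) ⧸ J) = (O M).relIndex (O (M + 1)) := rfl
  haveI hfin : Finite (O (M + 1) ⧸ J) := by
    refine (Nat.card_ne_zero.mp ?_).2
    rw [hcard]
    exact (hC M).2
  haveI := Fintype.ofFinite (O (M + 1) ⧸ J)
  set c : (O (M + 1) ⧸ J) → G := fun q => ((Quotient.out q : O (M + 1)) : G) with hcdef
  -- U (M+1) is covered by at most C translates of the orbit
  have hincl : U (M + 1) ⊆ ⋃ q : (O (M + 1) ⧸ J), c q • orb := by
    rintro z ⟨k, hk, rfl⟩
    have hgmem : k * k₀⁻¹ ∈ O (M + 1) := (O (M + 1)).mul_mem hk ((O (M + 1)).inv_mem hk₀)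
    set q : O (M + 1) ⧸ J := QuotientGroup.mk (⟨k * k₀⁻¹, hgmem⟩ : O (M + 1)) with hqdef
    have hout : QuotientGroup.mk (Quotient.out q) = q := Quotient.out_eq q
    have hj : (Quotient.out q)⁻¹ * (⟨k * k₀⁻¹, hgmem⟩ : O (M + 1)) ∈ J := by
      rw [hqdef] at hout
      exact QuotientGroup.eq.mp hout
    have hjG : (c q)⁻¹ * (k * k₀⁻¹) ∈ O M := Subgroup.mem_subgroupOf.mp hj
    refine Set.mem_iUnion.mpr ⟨q, ?_⟩
    refine ⟨((c q)⁻¹ * (k * k₀⁻¹)) • y, ⟨(c q)⁻¹ * (k * k₀⁻¹), hjG, rfl⟩, ?_⟩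
    show c q • (((c q)⁻¹ * (k * k₀⁻¹)) • y) = π k
    rw [smul_smul]
    have : c q * ((c q)⁻¹ * (k * k₀⁻¹)) = k * k₀⁻¹ := by group
    rw [this, ← hk₀y]
    show (k * k₀⁻¹) • (QuotientGroup.mk k₀ : G ⧸ H) = QuotientGroup.mk k
    rw [MulAction.Quotient.smul_mk, smul_eq_mul, inv_mul_cancel_right]
  -- the key measure estimate
  have hkey : μ (U (M + 1)) ≤ (C : ℝ≥0∞) * μ orb := by
    calc μ (U (M + 1)) ≤ μ (⋃ q : (O (M + 1) ⧸ J), c q • orb) := measure_mono hincl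
      _ ≤ ∑' q : (O (M + 1) ⧸ J), μ (c q • orb) := measure_iUnion_le _
      _ = ∑' _q : (O (M + 1) ⧸ J), μ orb := tsum_congr fun q => hinvS (c q) orb horb_meas
      _ = (Nat.card (O (M + 1) ⧸ J) : ℝ≥0∞) * μ orb := by
          rw [tsum_fintype, Finset.sum_const, nsmul_eq_mul, Nat.card_eq_fintype_card]
          simp
      _ ≤ (C : ℝ≥0∞) * μ orb :=
          mul_le_mul_left (Nat.cast_le.mpr (by rw [hcard]; exact (hC M).1)) _
  -- conclude a contradiction
  have hfinal : μ (U n) ≤ (C : ℝ≥0∞) * μ (U n)ᶜ := by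
    calc μ (U n) ≤ μ (U (M + 1)) := measure_mono (hUmono (by omega))
      _ ≤ (C : ℝ≥0∞) * μ orb := hkey
      _ ≤ (C : ℝ≥0∞) * μ (U M)ᶜ := mul_le_mul_right (measure_mono horb_disj) _
      _ ≤ (C : ℝ≥0∞) * μ (U n)ᶜ :=
          mul_le_mul_right (measure_mono (Set.compl_subset_compl.mpr (hUmono hnM))) _
  have h1 : (1 : ℝ≥0∞) = μ (U n) + μ (U n)ᶜ := by
    rw [measure_add_measure_compl (hUmeas n), measure_univ]
  have h2 : (1 : ℝ≥0∞) ≤ ((C : ℝ≥0∞) + 1) * μ (U n)ᶜ := by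
    calc (1 : ℝ≥0∞) = μ (U n) + μ (U n)ᶜ := h1
      _ ≤ (C : ℝ≥0∞) * μ (U n)ᶜ + μ (U n)ᶜ := add_le_add_left hfinal _
      _ = ((C : ℝ≥0∞) + 1) * μ (U n)ᶜ := by ring
  have hne0 : ((C : ℝ≥0∞) + 1) ≠ 0 := by simp
  have h3 : ((C : ℝ≥0∞) + 1) * μ (U n)ᶜ < ((C : ℝ≥0∞) + 1) * ((C : ℝ≥0∞) + 1)⁻¹ :=
    ENNReal.mul_lt_mul_right hne0 hnetop hn
  rw [ENNReal.mul_inv_cancel hne0 hnetop] at h3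
  exact absurd (lt_of_le_of_lt h2 h3) (lt_irrefl 1)
end
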